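/- arXiv:math/0610027 — 3 statements merged into one kernel-verified Lean document; each statement's English description precedes it below -/
import Mathlib

section
/- Let S = {F_t}_{t≥0} be a one-parameter continuous semigroup on Δ generated by a holomorphic function f : Δ → ℂ, let τ ∈ ∂Δ be a boundary null point of f, and suppose ∠lim_{z→τ} f′(z) = 0 (so the semigroup is of parabolic type). If in addition ∠lim_{z→τ} f″(z) = 0 and ∠lim_{z→τ} f‴(z) = 0, then F_t is the identity: F_t(z) = z for all t ≥ 0 and all z ∈ Δ. -/
set_option maxHeartbeats 1000000


open Complex Filter Set

noncomputable section

/-- The open unit disk in the complex plane. -/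
def unitDisk : Set ℂ := {z : ℂ | ‖z‖ < 1}

/-- The Stolz angle at a boundary point `τ` with half-opening `α`. -/
def stolzAngle (τ : ℂ) (α : ℝ) : Set ℂ :=
  {z ∈ unitDisk | |Complex.arg (1 - (starRingEnd ℂ) τ * z)| < α}

/-- `h` has angular limit `L` at `τ`: `h z → L` as `z → τ` in every Stolz angle. -/
def AngularLimit (h : ℂ → ℂ) (τ L : ℂ) : Prop :=
  ∀ α : ℝ, 0 < α → α < Real.pi / 2 →
    Tendsto h (nhdsWithin τ (stolzAngle τ α)) (nhds L)

/-- A one-parameter continuous semigroup of holomorphic self-mappings of the unit disk. -/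
structure ContSemigroupOn (F : ℝ → ℂ → ℂ) : Prop where
  holo : ∀ t : ℝ, 0 ≤ t → DifferentiableOn ℂ (F t) unitDisk
  maps : ∀ t : ℝ, 0 ≤ t → MapsTo (F t) unitDisk unitDisk
  comp : ∀ s : ℝ, 0 ≤ s → ∀ t : ℝ, 0 ≤ t → ∀ z ∈ unitDisk, F (t + s) z = F t (F s z)
  cont : ∀ z ∈ unitDisk, Tendsto (fun t : ℝ => F t z) (nhdsWithin 0 (Set.Ioi 0)) (nhds z)

/-- `f` is the infinitesimal generator of the semigroup `F`:
for each `z ∈ Δ`, `u(t) = F t z` solves `u' + f(u) = 0`, `u 0 = z`. -/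
def Generates (f : ℂ → ℂ) (F : ℝ → ℂ → ℂ) : Prop :=
  ∀ z ∈ unitDisk, F 0 z = z ∧
    ∀ t : ℝ, 0 ≤ t →
      HasDerivWithinAt (fun s : ℝ => F s z) (-(f (F t z))) (Set.Ici 0) t

/-- `τ` is a boundary null point of `f`: `f (r τ) → 0` as `r → 1⁻`. -/
def BoundaryNullPoint (f : ℂ → ℂ) (τ : ℂ) : Prop :=
  Tendsto (fun r : ℝ => f ((r : ℂ) * τ)) (nhdsWithin 1 (Set.Iio 1)) (nhds 0)

/-- An automorphism of the unit disk: a holomorphic bijection of the disk onto itself. -/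
def IsDiskAutomorphism (F : ℂ → ℂ) : Prop :=
  DifferentiableOn ℂ F unitDisk ∧ BijOn F unitDisk unitDisk

/-- The Möbius involution `m_τ(z) = (τ - z)/(1 - τ̄ z)`. -/
def mobius (τ z : ℂ) : ℂ := (τ - z) / (1 - (starRingEnd ℂ) τ * z)


open Metric Topology
namespace PR

def Complex.abs : AbsoluteValue ℂ ℝ where
  toFun z := ‖z‖
  map_mul' := norm_mul
  nonneg' := norm_nonneg
  eq_zero' _ := norm_eq_zero
  add_le' := norm_add_le

lemma Complex.norm_eq_abs (z : ℂ) : ‖z‖ = Complex.abs z := rfl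

lemma Complex.sq_abs (z : ℂ) : Complex.abs z ^ 2 = normSq z := by
  rw [← Complex.norm_eq_abs]; exact Complex.sq_norm z

lemma Complex.normSq_eq_abs (z : ℂ) : normSq z = Complex.abs z ^ 2 := (Complex.sq_abs z).symm

lemma Complex.abs_conj (z : ℂ) : Complex.abs ((starRingEnd ℂ) z) = Complex.abs z := by
  rw [← Complex.norm_eq_abs, ← Complex.norm_eq_abs]; exact Complex.norm_conj z

lemma Complex.abs_ofReal (r : ℝ) : Complex.abs (r : ℂ) = |r| := by
  rw [← Complex.norm_eq_abs]; simp

lemma Complex.abs_apply (z : ℂ) : Complex.abs z = Real.sqrt (normSq z) := by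
  rw [← Complex.sq_abs, Real.sqrt_sq (AbsoluteValue.nonneg _ _)]

lemma Complex.continuous_abs : Continuous Complex.abs := continuous_norm

lemma Complex.dist_eq (z w : ℂ) : dist z w = Complex.abs (z - w) := dist_eq_norm _ _

lemma Complex.abs_re_le_abs (z : ℂ) : |z.re| ≤ Complex.abs z := Complex.abs_re_le_norm z

lemma Complex.abs_im_le_abs (z : ℂ) : |z.im| ≤ Complex.abs z := Complex.abs_im_le_norm z

lemma Complex.abs_le_abs_of_mapsTo_ball_self {f : ℂ → ℂ} {R : ℝ} {z : ℂ}
    (hd : DifferentiableOn ℂ f (ball 0 R)) (h_maps : MapsTo f (ball 0 R) (ball 0 R))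
    (h₀ : f 0 = 0) (hz : Complex.abs z < R) : Complex.abs (f z) ≤ Complex.abs z :=
  norm_le_norm_of_mapsTo_ball hd (h_maps.mono_right ball_subset_closedBall) h₀ hz

lemma unitDisk_eq : unitDisk = Metric.ball (0:ℂ) 1 := by
  ext z; simp [unitDisk]

lemma isOpen_unitDisk : IsOpen unitDisk := unitDisk_eq ▸ Metric.isOpen_ball

lemma mem_unitDisk {z : ℂ} : z ∈ unitDisk ↔ Complex.abs z < 1 := Iff.rfl

lemma abs_lt_one_iff_normSq {z : ℂ} : Complex.abs z < 1 ↔ normSq z < 1 := by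
  rw [← Complex.sq_abs]
  constructor
  · intro h; nlinarith [Complex.abs.nonneg z]
  · intro h; nlinarith [Complex.abs.nonneg z]

lemma normSq_identity (b a : ℂ) :
    normSq (1 - (starRingEnd ℂ) b * a) - normSq (b - a)
      = (1 - normSq b) * (1 - normSq a) := by
  have h : ((normSq (1 - (starRingEnd ℂ) b * a) - normSq (b - a) : ℝ) : ℂ)
      = (((1 - normSq b) * (1 - normSq a) : ℝ) : ℂ) := by
    push_cast [← Complex.mul_conj]
    simp only [map_sub, map_mul, map_one, Complex.conj_conj]
    ring
  exact_mod_cast h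

lemma one_sub_ne_zero' {b a : ℂ} (hb : Complex.abs b ≤ 1) (ha : Complex.abs a < 1) :
    1 - (starRingEnd ℂ) b * a ≠ 0 := by
  intro h
  have h1 : Complex.abs ((starRingEnd ℂ) b * a) < 1 := by
    rw [map_mul, Complex.abs_conj]
    calc Complex.abs b * Complex.abs a ≤ 1 * Complex.abs a :=
      mul_le_mul_of_nonneg_right hb (Complex.abs.nonneg a)
    _ = Complex.abs a := one_mul _
    _ < 1 := ha
  have : (starRingEnd ℂ) b * a = 1 := by linear_combination -h
  rw [this] at h1; simp at h1

lemma one_sub_ne_zero {b a : ℂ} (hb : Complex.abs b < 1) (ha : Complex.abs a < 1) :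
    1 - (starRingEnd ℂ) b * a ≠ 0 := one_sub_ne_zero' hb.le ha

lemma normSq_mobius_identity {b a : ℂ} (hb : Complex.abs b < 1) (ha : Complex.abs a < 1) :
    (1 - normSq (mobius b a)) * normSq (1 - (starRingEnd ℂ) b * a)
      = (1 - normSq b) * (1 - normSq a) := by
  have hne := one_sub_ne_zero hb ha
  have hns : normSq (1 - (starRingEnd ℂ) b * a) ≠ 0 := by
    simpa [Complex.normSq_eq_zero] using hne
  have h1 : normSq (mobius b a) * normSq (1 - (starRingEnd ℂ) b * a) = normSq (b - a) := by
    rw [mobius, map_div₀, div_mul_cancel₀ _ hns]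
  have := normSq_identity b a
  nlinarith [h1]

lemma abs_mobius_lt_one {b a : ℂ} (hb : Complex.abs b < 1) (ha : Complex.abs a < 1) :
    Complex.abs (mobius b a) < 1 := by
  rw [abs_lt_one_iff_normSq]
  have hb' := abs_lt_one_iff_normSq.mp hb
  have ha' := abs_lt_one_iff_normSq.mp ha
  have hns : 0 < normSq (1 - (starRingEnd ℂ) b * a) := by
    rcases (Complex.normSq_pos).mpr (one_sub_ne_zero hb ha) with h; exact h
  nlinarith [normSq_mobius_identity hb ha]

lemma mobius_mapsTo {b : ℂ} (hb : Complex.abs b < 1) :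
    MapsTo (mobius b) unitDisk unitDisk := fun a ha => abs_mobius_lt_one hb ha

lemma mobius_zero (b : ℂ) : mobius b 0 = b := by simp [mobius]

lemma mobius_self (b : ℂ) : mobius b b = 0 := by simp [mobius]

lemma mobius_mobius {b a : ℂ} (hb : Complex.abs b < 1) (ha : Complex.abs a < 1) :
    mobius b (mobius b a) = a := by
  have h1 := one_sub_ne_zero hb ha
  have h2 : 1 - (starRingEnd ℂ) b * b ≠ 0 := one_sub_ne_zero hb hb
  have hm := abs_mobius_lt_one hb ha
  have hd2 := one_sub_ne_zero hb hm
  unfold mobius at hd2 ⊢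
  rw [div_eq_iff hd2]
  simp only [div_eq_mul_inv]
  linear_combination (-(b - a)) * mul_inv_cancel₀ h1

lemma mobius_differentiableOn {b : ℂ} (hb : Complex.abs b < 1) :
    DifferentiableOn ℂ (mobius b) unitDisk := by
  apply DifferentiableOn.div
  · exact (differentiableOn_const _).sub differentiableOn_id
  · exact (differentiableOn_const _).sub ((differentiableOn_const _).mul differentiableOn_id)
  · exact fun z hz => one_sub_ne_zero hb hz


lemma schwarzPick {F : ℂ → ℂ} (hd : DifferentiableOn ℂ F unitDisk)
    (hm : MapsTo F unitDisk unitDisk) {a b : ℂ} (ha : a ∈ unitDisk) (hb : b ∈ unitDisk) :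
    Complex.abs (mobius (F b) (F a)) ≤ Complex.abs (mobius b a) := by
  have hFb : F b ∈ unitDisk := hm hb
  set G := fun w => mobius (F b) (F (mobius b w)) with hG
  have hinner : DifferentiableOn ℂ (fun w => F (mobius b w)) unitDisk :=
    hd.comp (mobius_differentiableOn hb) (mobius_mapsTo hb)
  have hGd : DifferentiableOn ℂ G unitDisk :=
    (mobius_differentiableOn hFb).comp hinner (fun w hw => hm (mobius_mapsTo hb hw))
  have hGm : MapsTo G unitDisk unitDisk :=
    fun w hw => abs_mobius_lt_one hFb (hm (mobius_mapsTo hb hw))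
  have hG0 : G 0 = 0 := by simp [hG, mobius_zero, mobius_self]
  have hz : Complex.abs (mobius b a) < 1 := abs_mobius_lt_one hb ha
  have := Complex.abs_le_abs_of_mapsTo_ball_self (R := 1)
    (by rwa [← unitDisk_eq]) (by rwa [← unitDisk_eq]) hG0 hz
  have hGa : G (mobius b a) = mobius (F b) (F a) := by
    simp only [hG]; rw [mobius_mobius hb ha]
  rwa [hGa] at this

lemma schwarzPick_nsq {F : ℂ → ℂ} (hd : DifferentiableOn ℂ F unitDisk)
    (hm : MapsTo F unitDisk unitDisk) {a b : ℂ} (ha : a ∈ unitDisk) (hb : b ∈ unitDisk) :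
    (1 - normSq b) * (1 - normSq a) * normSq (1 - (starRingEnd ℂ) (F b) * F a)
      ≤ (1 - normSq (F b)) * (1 - normSq (F a)) * normSq (1 - (starRingEnd ℂ) b * a) := by
  have hFa : F a ∈ unitDisk := hm ha
  have hFb : F b ∈ unitDisk := hm hb
  have h1 := normSq_mobius_identity hb ha
  have h2 := normSq_mobius_identity hFb hFa
  have hsp := schwarzPick hd hm ha hb
  have hsp2 : normSq (mobius (F b) (F a)) ≤ normSq (mobius b a) := by
    rw [← Complex.sq_abs, ← Complex.sq_abs]
    exact pow_le_pow_left₀ (Complex.abs.nonneg _) hsp 2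
  have hp1 : 0 < normSq (1 - (starRingEnd ℂ) b * a) :=
    Complex.normSq_pos.mpr (one_sub_ne_zero hb ha)
  have hp2 : 0 < normSq (1 - (starRingEnd ℂ) (F b) * F a) :=
    Complex.normSq_pos.mpr (one_sub_ne_zero hFb hFa)
  nlinarith [mul_le_mul_of_nonneg_left hsp2 (le_of_lt (mul_pos hp1 hp2))]

lemma norm_sub_le_of_deriv_bound {g : ℂ → ℂ} (hg : DifferentiableOn ℂ g unitDisk)
    {x y : ℂ} {C : ℝ} (hseg : segment ℝ x y ⊆ unitDisk)
    (hC : ∀ z ∈ segment ℝ x y, Complex.abs (deriv g z) ≤ C) :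
    Complex.abs (g y - g x) ≤ C * Complex.abs (y - x) := by
  set L : ℝ → ℂ := fun θ => x + θ • (y - x) with hL
  have hLmem : ∀ θ ∈ Icc (0:ℝ) 1, L θ ∈ segment ℝ x y := by
    intro θ hθ
    rw [segment_eq_image']
    exact ⟨θ, hθ, rfl⟩
  have hder : ∀ θ ∈ Icc (0:ℝ) 1,
      HasDerivWithinAt (fun θ => g (L θ)) ((y - x) • deriv g (L θ)) (Icc 0 1) θ := by
    intro θ hθ
    have hmem : L θ ∈ unitDisk := hseg (hLmem θ hθ)
    have hgd : DifferentiableAt ℂ g (L θ) :=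
      hg.differentiableAt (isOpen_unitDisk.mem_nhds hmem)
    have h1 : HasDerivAt L (y - x) θ := by
      rw [hL]; simpa using ((hasDerivAt_id θ).smul_const (y - x)).const_add x
    have h2 : HasFDerivAt g (ContinuousLinearMap.smulRight (1 : ℂ →L[ℂ] ℂ) (deriv g (L θ))) (L θ) :=
      hgd.hasDerivAt.hasFDerivAt
    have h3 := (h2.restrictScalars ℝ).comp_hasDerivAt θ h1
    simpa [Function.comp_def] using h3.hasDerivWithinAt
  have hbound : ∀ θ ∈ Icc (0:ℝ) 1, ‖(y - x) • deriv g (L θ)‖ ≤ Complex.abs (y - x) * C := by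
    intro θ hθ
    rw [norm_smul, Complex.norm_eq_abs, Complex.norm_eq_abs]
    exact mul_le_mul_of_nonneg_left (hC _ (hLmem θ hθ)) (Complex.abs.nonneg _)
  have := (convex_Icc (0:ℝ) 1).norm_image_sub_le_of_norm_hasDerivWithin_le hder hbound
    (left_mem_Icc.mpr zero_le_one) (right_mem_Icc.mpr zero_le_one)
  have e1 : L 1 = y := by simp [hL]
  have e0 : L 0 = x := by simp [hL]
  have h2 : Complex.abs (g y - g x) ≤ Complex.abs (y - x) * C * 1 := by
    simpa [e1, e0, Complex.norm_eq_abs] using this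
  rw [show C * Complex.abs (y - x) = Complex.abs (y - x) * C * 1 by ring]
  exact h2

lemma confine {u g : ℝ → ℂ} {T δ ρ : ℝ} (hT : 0 ≤ T) (hδ : 0 ≤ δ) (hρ : δ * T < ρ)
    (hu : ∀ s ∈ Icc (0:ℝ) T, HasDerivWithinAt u (g s) (Icc 0 T) s)
    (hb : ∀ s ∈ Icc (0:ℝ) T, ‖u s - u 0‖ ≤ ρ → ‖g s‖ ≤ δ) :
    ∀ s ∈ Icc (0:ℝ) T, ‖u s - u 0‖ ≤ δ * s := by
  have ucont : ContinuousOn u (Icc 0 T) := fun s hs => (hu s hs).continuousWithinAt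
  set S : Set ℝ := {s | s ∈ Icc (0:ℝ) T ∧ ∀ s' ∈ Icc (0:ℝ) s, ‖u s' - u 0‖ ≤ δ * s'} with hS
  have h0S : (0:ℝ) ∈ S := by
    refine ⟨⟨le_refl _, hT⟩, ?_⟩
    intro s' hs'
    have : s' = 0 := le_antisymm hs'.2 hs'.1
    simp [this]
  have hSne : S.Nonempty := ⟨0, h0S⟩
  have hSbdd : BddAbove S := ⟨T, fun a ha => ha.1.2⟩
  set m := sSup S with hm
  have hm0 : 0 ≤ m := le_csSup hSbdd h0S
  have hmT : m ≤ T := csSup_le hSne (fun a ha => ha.1.2)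
  have hmem : ∀ s', 0 ≤ s' → s' < m → ‖u s' - u 0‖ ≤ δ * s' := by
    intro s' h0 hlt
    obtain ⟨a, haS, hlt'⟩ := exists_lt_of_lt_csSup hSne hlt
    exact haS.2 s' ⟨h0, hlt'.le⟩
  have hmS : m ∈ S := by
    refine ⟨⟨hm0, hmT⟩, ?_⟩
    intro s' hs'
    rcases lt_or_eq_of_le hs'.2 with h | h
    · exact hmem s' hs'.1 h
    · subst h
      rcases eq_or_lt_of_le hm0 with h0 | h0
    
      · simp [← h0]
      · have hne : (𝓝[Ico (0:ℝ) m] m).NeBot := by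
          apply mem_closure_iff_nhdsWithin_neBot.mp
          rw [closure_Ico (ne_of_lt h0)]
          exact ⟨hm0, le_refl m⟩
        have hcw : ContinuousWithinAt u (Ico (0:ℝ) m) m := by
          apply (ucont m ⟨hm0, hmT⟩).mono
          intro w hw; exact ⟨hw.1, hw.2.le.trans hmT⟩
        have htend : Tendsto (fun s => ‖u s - u 0‖) (𝓝[Ico (0:ℝ) m] m) (𝓝 ‖u m - u 0‖) :=
          ((hcw.tendsto).sub tendsto_const_nhds).norm
        apply le_of_tendsto htend
        filter_upwards [self_mem_nhdsWithin] with s hs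
        calc ‖u s - u 0‖ ≤ δ * s := hmem s hs.1 hs.2
        _ ≤ δ * m := mul_le_mul_of_nonneg_left hs.2.le hδ
  have hmeqT : m = T := by
    by_contra hne
    have hmltT : m < T := lt_of_le_of_ne hmT hne
    have hum : ‖u m - u 0‖ ≤ δ * T := by
      calc ‖u m - u 0‖ ≤ δ * m := hmS.2 m ⟨hm0, le_refl m⟩
      _ ≤ δ * T := mul_le_mul_of_nonneg_left hmT hδ
    have hε₀ : 0 < ρ - δ * T := sub_pos.mpr hρ
    obtain ⟨η, hη, hηspec⟩ := Metric.continuousWithinAt_iff.mp (ucont m ⟨hm0, hmT⟩) _ hε₀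
    set m' := min T (m + η / 2) with hm'
    have hmm' : m < m' := lt_min hmltT (by linarith)
    have hm'T : m' ≤ T := min_le_left _ _
    have hball : ∀ s ∈ Icc m m', ‖u s - u 0‖ ≤ ρ := by
      intro s hs
      have hsT : s ∈ Icc (0:ℝ) T := ⟨hm0.trans hs.1, hs.2.trans hm'T⟩
      have hdist : dist s m < η := by
        rw [Real.dist_eq, _root_.abs_of_nonneg (sub_nonneg.mpr hs.1)]
        have : s ≤ m + η / 2 := hs.2.trans (min_le_right _ _)
        linarith
      have := hηspec hsT hdist
      rw [dist_eq_norm] at this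
      calc ‖u s - u 0‖ ≤ ‖u s - u m‖ + ‖u m - u 0‖ := norm_sub_le_norm_sub_add_norm_sub _ _ _
      _ ≤ (ρ - δ * T) + δ * T := add_le_add this.le hum
      _ = ρ := by ring
    have hgb : ∀ s ∈ Icc m m', ‖g s‖ ≤ δ := by
      intro s hs
      exact hb s ⟨hm0.trans hs.1, hs.2.trans hm'T⟩ (hball s hs)
    have hmvt : ∀ s ∈ Icc m m', ‖u s - u m‖ ≤ δ * (s - m) := by
      intro s hs
      have := (convex_Icc m m').norm_image_sub_le_of_norm_hasDerivWithin_le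
        (fun w hw => (hu w ⟨hm0.trans hw.1, hw.2.trans hm'T⟩).mono
          (fun v hv => ⟨hm0.trans hv.1, hv.2.trans hm'T⟩))
        hgb ⟨le_refl m, hmm'.le⟩ hs
      calc ‖u s - u m‖ ≤ δ * ‖s - m‖ := this
      _ = δ * (s - m) := by rw [Real.norm_eq_abs, _root_.abs_of_nonneg (sub_nonneg.mpr hs.1)]
    have hm'S : m' ∈ S := by
      refine ⟨⟨hm0.trans hmm'.le, hm'T⟩, ?_⟩
      intro s' hs'
      rcases le_or_gt s' m with h | h
      · exact hmS.2 s' ⟨hs'.1, h⟩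
      · calc ‖u s' - u 0‖ ≤ ‖u s' - u m‖ + ‖u m - u 0‖ := norm_sub_le_norm_sub_add_norm_sub _ _ _
        _ ≤ δ * (s' - m) + δ * m := add_le_add (hmvt s' ⟨h.le, hs'.2⟩) (hmS.2 m ⟨hm0, le_refl m⟩)
        _ = δ * s' := by ring
    exact absurd (le_csSup hSbdd hm'S) (not_le.mpr hmm')
  intro s hs
  rw [← hmeqT] at hs
  exact hmS.2 s hs

lemma neBot_Ico {a : ℝ} (h : a < 1) : (𝓝[Ico a 1] (1:ℝ)).NeBot := by
  apply mem_closure_iff_nhdsWithin_neBot.mp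
  rw [closure_Ico (ne_of_lt h)]
  exact ⟨h.le, le_refl 1⟩

variable {τ : ℂ}

lemma conj_mul_self (hτ : Complex.abs τ = 1) : (starRingEnd ℂ) τ * τ = 1 := by
  rw [mul_comm, Complex.mul_conj, Complex.normSq_eq_abs, hτ]
  norm_num

lemma radial_mem_disk (hτ : Complex.abs τ = 1) {r : ℝ} (hr : r ∈ Ico (0:ℝ) 1) :
    (r:ℂ) * τ ∈ unitDisk := by
  rw [mem_unitDisk, map_mul, Complex.abs_ofReal, hτ, mul_one, _root_.abs_of_nonneg hr.1]
  exact hr.2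

lemma radial_mem_stolz (hτ : Complex.abs τ = 1) {α : ℝ} (hα : 0 < α) {r : ℝ}
    (hr : r ∈ Ico (0:ℝ) 1) : (r:ℂ) * τ ∈ stolzAngle τ α := by
  refine ⟨radial_mem_disk hτ hr, ?_⟩
  have h1 : 1 - (starRingEnd ℂ) τ * ((r:ℂ) * τ) = ((1 - r : ℝ) : ℂ) := by
    push_cast
    linear_combination (-(r:ℂ)) * conj_mul_self hτ
  rw [h1, Complex.arg_ofReal_of_nonneg (by linarith [hr.2] : (0:ℝ) ≤ 1 - r)]
  simpa using hα

lemma radial_tendsto (hτ : Complex.abs τ = 1) {α : ℝ} (hα : 0 < α) :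
    Tendsto (fun r : ℝ => (r:ℂ) * τ) (𝓝[Ico (0:ℝ) 1] 1) (𝓝[stolzAngle τ α] τ) := by
  rw [tendsto_nhdsWithin_iff]
  constructor
  · have hc : Continuous (fun r : ℝ => (r:ℂ) * τ) := Complex.continuous_ofReal.mul continuous_const
    have h : Tendsto (fun r : ℝ => (r:ℂ) * τ) (𝓝 (1:ℝ)) (𝓝 (((1:ℝ):ℂ) * τ)) := hc.tendsto (1:ℝ)
    have h2 : Tendsto (fun r : ℝ => (r:ℂ) * τ) (𝓝[Ico (0:ℝ) 1] (1:ℝ)) (𝓝 (((1:ℝ):ℂ) * τ)) :=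
      h.mono_left nhdsWithin_le_nhds
    simpa using h2
  · filter_upwards [self_mem_nhdsWithin] with r hr
    exact radial_mem_stolz hτ hα hr

lemma ball_geom (hτ : Complex.abs τ = 1) {r : ℝ} (hr : r ∈ Ico (0:ℝ) 1)
    {z : ℂ} (hz : Complex.abs (z - (r:ℂ)*τ) ≤ (1-r)/2) :
    z ∈ unitDisk ∧ z ∈ stolzAngle τ (Real.pi/3) ∧ dist z τ ≤ 2*(1-r) := by
  obtain ⟨hr0, hr1⟩ := hr
  have hrpos : (0:ℝ) < 1 - r := by linarith
  have habs_rt : Complex.abs ((r:ℂ)*τ) = r := by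
    rw [map_mul, Complex.abs_ofReal, hτ, mul_one, _root_.abs_of_nonneg hr0]
  have hz1 : z ∈ unitDisk := by
    rw [mem_unitDisk]
    calc Complex.abs z = Complex.abs ((r:ℂ)*τ + (z - (r:ℂ)*τ)) := by ring_nf
    _ ≤ Complex.abs ((r:ℂ)*τ) + Complex.abs (z - (r:ℂ)*τ) := Complex.abs.add_le _ _
    _ ≤ r + (1-r)/2 := by rw [habs_rt]; linarith [hz]
    _ < 1 := by linarith
  have hdist : dist z τ ≤ 2*(1-r) := by
    have h2 : dist ((r:ℂ)*τ) τ = 1 - r := by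
      rw [Complex.dist_eq]
      have : (r:ℂ)*τ - τ = ((r - 1 : ℝ):ℂ) * τ := by push_cast; ring
      rw [this, map_mul, Complex.abs_ofReal, hτ, mul_one, _root_.abs_of_nonpos (by linarith)]
      ring
    calc dist z τ ≤ dist z ((r:ℂ)*τ) + dist ((r:ℂ)*τ) τ := dist_triangle _ _ _
    _ ≤ (1-r)/2 + (1-r) := by rw [Complex.dist_eq, h2]; linarith [hz]
    _ ≤ 2*(1-r) := by linarith
  refine ⟨hz1, ⟨hz1, ?_⟩, hdist⟩
  set w := z - (r:ℂ)*τ with hw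
  set ζ := 1 - (starRingEnd ℂ) τ * z with hζ
  have hzeta : ζ = ((1 - r : ℝ):ℂ) - (starRingEnd ℂ) τ * w := by
    rw [hζ, hw]; push_cast
    linear_combination (-(r:ℂ)) * conj_mul_self hτ
  have habsw : Complex.abs ((starRingEnd ℂ) τ * w) ≤ (1-r)/2 := by
    rw [map_mul, Complex.abs_conj, hτ, one_mul]; exact hz
  have hre : (1-r)/2 ≤ ζ.re := by
    rw [hzeta]
    simp only [Complex.sub_re, Complex.ofReal_re]
    have := Complex.abs_re_le_abs ((starRingEnd ℂ) τ * w)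
    have h3 : |((starRingEnd ℂ) τ * w).re| ≤ (1-r)/2 := this.trans habsw
    have := abs_le.mp h3
    linarith [this.2]
  have him : |ζ.im| ≤ (1-r)/2 := by
    rw [hzeta]
    simp only [Complex.sub_im, Complex.ofReal_im, zero_sub, abs_neg]
    exact (Complex.abs_im_le_abs _).trans habsw
  have hrepos : 0 < ζ.re := lt_of_lt_of_le (by linarith) hre
  have harg : Complex.arg ζ = Real.arcsin (ζ.im / Complex.abs ζ) :=
    Complex.arg_of_re_nonneg hrepos.le
  have habsζ : Real.sqrt 2 * |ζ.im| ≤ Complex.abs ζ := by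
    rw [Complex.abs_apply, Complex.normSq_apply]
    have h4 : Real.sqrt 2 * |ζ.im| = Real.sqrt (2 * ζ.im ^ 2) := by
      rw [Real.sqrt_mul (by norm_num), Real.sqrt_sq_eq_abs]
    rw [h4]
    apply Real.sqrt_le_sqrt
    nlinarith [him, hre, abs_le.mp him]
  have hζpos : 0 < Complex.abs ζ := by
    apply Complex.abs.pos
    intro h
    rw [h] at hrepos
    simp at hrepos
  have hx : |ζ.im / Complex.abs ζ| ≤ Real.sqrt 2 / 2 := by
    rw [abs_div, abs_of_pos hζpos, div_le_iff₀ hζpos]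
    nlinarith [habsζ, Real.sq_sqrt (by norm_num : (2:ℝ) ≥ 0), Real.sqrt_nonneg 2, abs_nonneg ζ.im]
  have hq : Real.arcsin (Real.sqrt 2 / 2) = Real.pi / 4 := by
    rw [← Real.sin_pi_div_four]
    exact Real.arcsin_sin (by linarith [Real.pi_pos]) (by linarith [Real.pi_pos])
  have harcsin : |Real.arcsin (ζ.im / Complex.abs ζ)| ≤ Real.pi / 4 := by
    rw [abs_le]
    obtain ⟨hlo, hhi⟩ := abs_le.mp hx
    constructor
    · rw [← hq, ← Real.arcsin_neg]
      exact Real.monotone_arcsin hlo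
    · rw [← hq]
      exact Real.monotone_arcsin hhi
  rw [harg]
  calc |Real.arcsin (ζ.im / Complex.abs ζ)| ≤ Real.pi / 4 := harcsin
  _ < Real.pi / 3 := by linarith [Real.pi_pos]

lemma radial_segment (hτ : Complex.abs τ = 1) {r' s : ℝ} (h : r' ≤ s) :
    ∀ z ∈ segment ℝ ((r':ℂ)*τ) ((s:ℂ)*τ), ∃ c : ℝ, r' ≤ c ∧ c ≤ s ∧ z = (c:ℂ)*τ := by
  intro z hz
  rw [segment_eq_image'] at hz
  obtain ⟨θ, hθ, rfl⟩ := hz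
  refine ⟨r' + θ * (s - r'), ?_, ?_, ?_⟩
  · nlinarith [hθ.1, hθ.2]
  · nlinarith [hθ.1, hθ.2]
  · show (r':ℂ)*τ + θ • ((s:ℂ)*τ - (r':ℂ)*τ) = ((r' + θ*(s-r') : ℝ):ℂ) * τ
    rw [real_smul]
    push_cast
    ring

lemma key {F : ℝ → ℂ → ℂ} {f : ℂ → ℂ} (hf : DifferentiableOn ℂ f unitDisk)
    (hgen : Generates f F) (hτ : Complex.abs τ = 1)
    (hnull : BoundaryNullPoint f τ) (hβ : AngularLimit (deriv f) τ 0)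
    (hα : AngularLimit (deriv (deriv f)) τ 0) (hγ : AngularLimit (deriv (deriv (deriv f))) τ 0)
    (t : ℝ) (ht : 0 ≤ t) :
    Tendsto (fun r : ℝ => (F t ((r:ℂ)*τ) - (r:ℂ)*τ) / ((1:ℂ) - (r:ℂ))^3)
      (𝓝[Ico (0:ℝ) 1] 1) (𝓝 0) := by
  have hpi3a : (0:ℝ) < Real.pi/3 := by linarith [Real.pi_pos]
  have hpi3b : Real.pi/3 < Real.pi/2 := by linarith [Real.pi_pos]
  set d1 := deriv f with hd1def
  set d2 := deriv d1 with hd2def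
  set d3 := deriv d2 with hd3def
  have han : AnalyticOnNhd ℂ f unitDisk := hf.analyticOnNhd isOpen_unitDisk
  have hdiff1 : DifferentiableOn ℂ d1 unitDisk := han.deriv.differentiableOn
  have hdiff2 : DifferentiableOn ℂ d2 unitDisk := han.deriv.deriv.differentiableOn
  have hrt := radial_tendsto (τ := τ) hτ hpi3a
  have hst2 : Tendsto (fun s : ℝ => d2 ((s:ℂ)*τ)) (𝓝[Ico (0:ℝ) 1] 1) (𝓝 0) :=
    (hα _ hpi3a hpi3b).comp hrt
  have hst1 : Tendsto (fun s : ℝ => d1 ((s:ℂ)*τ)) (𝓝[Ico (0:ℝ) 1] 1) (𝓝 0) :=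
    (hβ _ hpi3a hpi3b).comp hrt
  have hst0 : Tendsto (fun s : ℝ => f ((s:ℂ)*τ)) (𝓝[Ico (0:ℝ) 1] 1) (𝓝 0) :=
    hnull.mono_left (nhdsWithin_mono 1 (fun x hx => hx.2))
  rw [Metric.tendsto_nhdsWithin_nhds]
  intro ε hε
  have htpos : (0:ℝ) < t + 1 := by linarith
  set ε₁ := ε / (3 * (t+1)) with hε₁def
  have hε₁ : 0 < ε₁ := by positivity
  obtain ⟨δ₁, hδ₁, hδ₁spec⟩ := Metric.tendsto_nhdsWithin_nhds.mp (hγ _ hpi3a hpi3b) ε₁ hε₁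
  set δ₂ := min (1:ℝ) ((1/2) / (3*ε₁*t+1)) with hδ₂def
  have hδ₂ : 0 < δ₂ := lt_min one_pos (by positivity)
  refine ⟨min (δ₁/2) δ₂, lt_min (by positivity) hδ₂, ?_⟩
  intro r hr hrdist
  have hr0 := hr.1
  have hr1 := hr.2
  have hrpos : (0:ℝ) < 1 - r := by linarith
  have h1r : 1 - r < min (δ₁/2) δ₂ := by
    rw [Real.dist_eq, _root_.abs_of_nonpos (by linarith : r - 1 ≤ 0)] at hrdist
    linarith [hrdist]
  have h1rδ₁ : ∀ r', r ≤ r' → 2*(1-r') < δ₁ := by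
    intro r' hrr'
    have := lt_of_lt_of_le h1r (min_le_left _ _)
    linarith
  have h1rδ₂ : 1 - r < δ₂ := lt_of_lt_of_le h1r (min_le_right _ _)
  -- smallness of d3 near the radius
  have hd3small : ∀ r' : ℝ, r ≤ r' → r' < 1 → ∀ z : ℂ,
      Complex.abs (z - (r':ℂ)*τ) ≤ (1-r')/2 → Complex.abs (d3 z) ≤ ε₁ := by
    intro r' hrr' hr'1 z hz
    have hr' : r' ∈ Ico (0:ℝ) 1 := ⟨hr0.trans hrr', hr'1⟩
    obtain ⟨hzd, hzs, hzdist⟩ := ball_geom hτ hr' hz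
    have hlt : dist z τ < δ₁ := lt_of_le_of_lt hzdist (h1rδ₁ r' hrr')
    have := hδ₁spec hzs hlt
    rw [dist_eq_norm, sub_zero, Complex.norm_eq_abs] at this
    exact this.le
  -- membership of ball points in the disk
  have hballdisk : ∀ r' : ℝ, 0 ≤ r' → r' < 1 → ∀ z : ℂ,
      Complex.abs (z - (r':ℂ)*τ) ≤ (1-r')/2 → z ∈ unitDisk := by
    intro r' h0 h1 z hz
    exact (ball_geom hτ ⟨h0, h1⟩ hz).1
  -- radial decay of d2
  have hrad2 : ∀ r', r ≤ r' → r' < 1 → Complex.abs (d2 ((r':ℂ)*τ)) ≤ ε₁ * (1 - r') := by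
    intro r' hrr' hr'1
    haveI := neBot_Ico hr'1
    have hst2' : Tendsto (fun s : ℝ => d2 ((s:ℂ)*τ)) (𝓝[Ico r' 1] 1) (𝓝 0) :=
      hst2.mono_left (nhdsWithin_mono 1 (fun x hx => ⟨(hr0.trans hrr').trans hx.1, hx.2⟩))
    have htend : Tendsto (fun s : ℝ => Complex.abs (d2 ((r':ℂ)*τ) - d2 ((s:ℂ)*τ)))
        (𝓝[Ico r' 1] 1) (𝓝 (Complex.abs (d2 ((r':ℂ)*τ)))) := by
      have h := (tendsto_const_nhds (x := d2 ((r':ℂ)*τ)) (f := 𝓝[Ico r' 1] (1:ℝ))).sub hst2'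
      have h2 := (Complex.continuous_abs.tendsto _).comp h
      simpa [Function.comp_def] using h2
    apply le_of_tendsto htend
    filter_upwards [self_mem_nhdsWithin] with s hs
    have hmvt := norm_sub_le_of_deriv_bound (g := d2) hdiff2
      (x := (r':ℂ)*τ) (y := (s:ℂ)*τ) (C := ε₁) ?_ ?_
    · calc Complex.abs (d2 ((r':ℂ)*τ) - d2 ((s:ℂ)*τ))
          = Complex.abs (d2 ((s:ℂ)*τ) - d2 ((r':ℂ)*τ)) := (AbsoluteValue.map_sub _ _ _).symm
      _ ≤ ε₁ * Complex.abs ((s:ℂ)*τ - (r':ℂ)*τ) := hmvt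
      _ = ε₁ * (s - r') := by
            rw [show (s:ℂ)*τ - (r':ℂ)*τ = ((s - r' : ℝ):ℂ)*τ by push_cast; ring,
              map_mul, Complex.abs_ofReal, hτ, mul_one, _root_.abs_of_nonneg (by linarith [hs.1])]
      _ ≤ ε₁ * (1 - r') := mul_le_mul_of_nonneg_left (by linarith [hs.2]) hε₁.le
    · intro z hz
      obtain ⟨c, hc1, hc2, rfl⟩ := radial_segment hτ hs.1 z hz
      exact radial_mem_disk hτ ⟨hr0.trans (hrr'.trans hc1), lt_of_le_of_lt hc2 hs.2⟩
    · intro z hz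
      obtain ⟨c, hc1, hc2, rfl⟩ := radial_segment hτ hs.1 z hz
      exact hd3small c (hrr'.trans hc1) (lt_of_le_of_lt hc2 hs.2) _ (by simp; linarith [lt_of_le_of_lt hc2 hs.2])
  -- radial decay of d1
  have hrad1 : ∀ r', r ≤ r' → r' < 1 → Complex.abs (d1 ((r':ℂ)*τ)) ≤ ε₁ * (1 - r')^2 := by
    intro r' hrr' hr'1
    haveI := neBot_Ico hr'1
    have hst1' : Tendsto (fun s : ℝ => d1 ((s:ℂ)*τ)) (𝓝[Ico r' 1] 1) (𝓝 0) :=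
      hst1.mono_left (nhdsWithin_mono 1 (fun x hx => ⟨(hr0.trans hrr').trans hx.1, hx.2⟩))
    have htend : Tendsto (fun s : ℝ => Complex.abs (d1 ((r':ℂ)*τ) - d1 ((s:ℂ)*τ)))
        (𝓝[Ico r' 1] 1) (𝓝 (Complex.abs (d1 ((r':ℂ)*τ)))) := by
      have h := (tendsto_const_nhds (x := d1 ((r':ℂ)*τ)) (f := 𝓝[Ico r' 1] (1:ℝ))).sub hst1'
      have h2 := (Complex.continuous_abs.tendsto _).comp h
      simpa [Function.comp_def] using h2
    apply le_of_tendsto htend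
    filter_upwards [self_mem_nhdsWithin] with s hs
    have hmvt := norm_sub_le_of_deriv_bound (g := d1) hdiff1
      (x := (r':ℂ)*τ) (y := (s:ℂ)*τ) (C := ε₁ * (1 - r')) ?_ ?_
    · calc Complex.abs (d1 ((r':ℂ)*τ) - d1 ((s:ℂ)*τ))
          = Complex.abs (d1 ((s:ℂ)*τ) - d1 ((r':ℂ)*τ)) := (AbsoluteValue.map_sub _ _ _).symm
      _ ≤ ε₁ * (1 - r') * Complex.abs ((s:ℂ)*τ - (r':ℂ)*τ) := hmvt
      _ = ε₁ * (1 - r') * (s - r') := by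
            rw [show (s:ℂ)*τ - (r':ℂ)*τ = ((s - r' : ℝ):ℂ)*τ by push_cast; ring,
              map_mul, Complex.abs_ofReal, hτ, mul_one, _root_.abs_of_nonneg (by linarith [hs.1])]
      _ ≤ ε₁ * (1 - r') * (1 - r') := mul_le_mul_of_nonneg_left (by linarith [hs.2])
            (mul_nonneg hε₁.le (by linarith [hr'1]))
      _ = ε₁ * (1 - r')^2 := by ring
    · intro z hz
      obtain ⟨c, hc1, hc2, rfl⟩ := radial_segment hτ hs.1 z hz
      exact radial_mem_disk hτ ⟨hr0.trans (hrr'.trans hc1), lt_of_le_of_lt hc2 hs.2⟩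
    · intro z hz
      obtain ⟨c, hc1, hc2, rfl⟩ := radial_segment hτ hs.1 z hz
      have h1 := hrad2 c (hrr'.trans hc1) (lt_of_le_of_lt hc2 hs.2)
      calc Complex.abs (d2 ((c:ℂ)*τ)) ≤ ε₁ * (1 - c) := h1
      _ ≤ ε₁ * (1 - r') := mul_le_mul_of_nonneg_left (by linarith [hc1]) hε₁.le
  -- radial decay of f
  have hrad0 : ∀ r', r ≤ r' → r' < 1 → Complex.abs (f ((r':ℂ)*τ)) ≤ ε₁ * (1 - r')^3 := by
    intro r' hrr' hr'1
    haveI := neBot_Ico hr'1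
    have hst0' : Tendsto (fun s : ℝ => f ((s:ℂ)*τ)) (𝓝[Ico r' 1] 1) (𝓝 0) :=
      hst0.mono_left (nhdsWithin_mono 1 (fun x hx => ⟨(hr0.trans hrr').trans hx.1, hx.2⟩))
    have htend : Tendsto (fun s : ℝ => Complex.abs (f ((r':ℂ)*τ) - f ((s:ℂ)*τ)))
        (𝓝[Ico r' 1] 1) (𝓝 (Complex.abs (f ((r':ℂ)*τ)))) := by
      have h := (tendsto_const_nhds (x := f ((r':ℂ)*τ)) (f := 𝓝[Ico r' 1] (1:ℝ))).sub hst0'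
      have h2 := (Complex.continuous_abs.tendsto _).comp h
      simpa [Function.comp_def] using h2
    apply le_of_tendsto htend
    filter_upwards [self_mem_nhdsWithin] with s hs
    have hmvt := norm_sub_le_of_deriv_bound (g := f) hf
      (x := (r':ℂ)*τ) (y := (s:ℂ)*τ) (C := ε₁ * (1 - r')^2) ?_ ?_
    · calc Complex.abs (f ((r':ℂ)*τ) - f ((s:ℂ)*τ))
          = Complex.abs (f ((s:ℂ)*τ) - f ((r':ℂ)*τ)) := (AbsoluteValue.map_sub _ _ _).symm
      _ ≤ ε₁ * (1 - r')^2 * Complex.abs ((s:ℂ)*τ - (r':ℂ)*τ) := hmvt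
      _ = ε₁ * (1 - r')^2 * (s - r') := by
            rw [show (s:ℂ)*τ - (r':ℂ)*τ = ((s - r' : ℝ):ℂ)*τ by push_cast; ring,
              map_mul, Complex.abs_ofReal, hτ, mul_one, _root_.abs_of_nonneg (by linarith [hs.1])]
      _ ≤ ε₁ * (1 - r')^2 * (1 - r') := mul_le_mul_of_nonneg_left (by linarith [hs.2])
            (mul_nonneg hε₁.le (by positivity))
      _ = ε₁ * (1 - r')^3 := by ring
    · intro z hz
      obtain ⟨c, hc1, hc2, rfl⟩ := radial_segment hτ hs.1 z hz
      exact radial_mem_disk hτ ⟨hr0.trans (hrr'.trans hc1), lt_of_le_of_lt hc2 hs.2⟩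
    · intro z hz
      obtain ⟨c, hc1, hc2, rfl⟩ := radial_segment hτ hs.1 z hz
      have h1 := hrad1 c (hrr'.trans hc1) (lt_of_le_of_lt hc2 hs.2)
      calc Complex.abs (d1 ((c:ℂ)*τ)) ≤ ε₁ * (1 - c)^2 := h1
      _ ≤ ε₁ * (1 - r')^2 := by
            have hc3 : c < 1 := lt_of_le_of_lt hc2 hs.2
            exact mul_le_mul_of_nonneg_left
              (pow_le_pow_left₀ (by linarith) (by linarith [hc1]) 2) hε₁.le
  -- bounds on the ball around r
  have hsegball : ∀ z : ℂ, Complex.abs (z - (r:ℂ)*τ) ≤ (1-r)/2 →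
      ∀ w ∈ segment ℝ ((r:ℂ)*τ) z, Complex.abs (w - (r:ℂ)*τ) ≤ (1-r)/2 := by
    intro z hz w hw
    have hsub : segment ℝ ((r:ℂ)*τ) z ⊆ Metric.closedBall ((r:ℂ)*τ) ((1-r)/2) := by
      apply (convex_closedBall _ _).segment_subset
      · exact Metric.mem_closedBall_self (by linarith)
      · rw [Metric.mem_closedBall, Complex.dist_eq]; exact hz
    have := hsub hw
    rw [Metric.mem_closedBall, Complex.dist_eq] at this
    exact this
  have hball2 : ∀ z : ℂ, Complex.abs (z - (r:ℂ)*τ) ≤ (1-r)/2 →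
      Complex.abs (d2 z) ≤ (3/2) * ε₁ * (1-r) := by
    intro z hz
    have hmvt := norm_sub_le_of_deriv_bound (g := d2) hdiff2
      (x := (r:ℂ)*τ) (y := z) (C := ε₁)
      (fun w hw => hballdisk r hr0 hr1 w (hsegball z hz w hw))
      (fun w hw => hd3small r (le_refl r) hr1 w (hsegball z hz w hw))
    calc Complex.abs (d2 z) = Complex.abs ((d2 z - d2 ((r:ℂ)*τ)) + d2 ((r:ℂ)*τ)) := by ring_nf
    _ ≤ Complex.abs (d2 z - d2 ((r:ℂ)*τ)) + Complex.abs (d2 ((r:ℂ)*τ)) := Complex.abs.add_le _ _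
    _ ≤ ε₁ * Complex.abs (z - (r:ℂ)*τ) + ε₁ * (1 - r) := add_le_add hmvt (hrad2 r (le_refl r) hr1)
    _ ≤ ε₁ * ((1-r)/2) + ε₁ * (1-r) := by nlinarith [hε₁, hz]
    _ = (3/2) * ε₁ * (1-r) := by ring
  have hball1 : ∀ z : ℂ, Complex.abs (z - (r:ℂ)*τ) ≤ (1-r)/2 →
      Complex.abs (d1 z) ≤ 3 * ε₁ * (1-r)^2 := by
    intro z hz
    have hmvt := norm_sub_le_of_deriv_bound (g := d1) hdiff1
      (x := (r:ℂ)*τ) (y := z) (C := (3/2) * ε₁ * (1-r))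
      (fun w hw => hballdisk r hr0 hr1 w (hsegball z hz w hw))
      (fun w hw => hball2 w (hsegball z hz w hw))
    calc Complex.abs (d1 z) = Complex.abs ((d1 z - d1 ((r:ℂ)*τ)) + d1 ((r:ℂ)*τ)) := by ring_nf
    _ ≤ Complex.abs (d1 z - d1 ((r:ℂ)*τ)) + Complex.abs (d1 ((r:ℂ)*τ)) := Complex.abs.add_le _ _
    _ ≤ (3/2) * ε₁ * (1-r) * Complex.abs (z - (r:ℂ)*τ) + ε₁ * (1 - r)^2 :=
          add_le_add hmvt (hrad1 r (le_refl r) hr1)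
    _ ≤ (3/2) * ε₁ * (1-r) * ((1-r)/2) + ε₁ * (1-r)^2 :=
          add_le_add (mul_le_mul_of_nonneg_left hz (mul_nonneg (by linarith : (0:ℝ) ≤ 3/2 * ε₁) hrpos.le)) le_rfl
    _ ≤ 3 * ε₁ * (1-r)^2 := by nlinarith [hε₁, sq_nonneg (1-r)]
  have hball0 : ∀ z : ℂ, Complex.abs (z - (r:ℂ)*τ) ≤ (1-r)/2 →
      Complex.abs (f z) ≤ 3 * ε₁ * (1-r)^3 := by
    intro z hz
    have hmvt := norm_sub_le_of_deriv_bound (g := f) hf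
      (x := (r:ℂ)*τ) (y := z) (C := 3 * ε₁ * (1-r)^2)
      (fun w hw => hballdisk r hr0 hr1 w (hsegball z hz w hw))
      (fun w hw => hball1 w (hsegball z hz w hw))
    calc Complex.abs (f z) = Complex.abs ((f z - f ((r:ℂ)*τ)) + f ((r:ℂ)*τ)) := by ring_nf
    _ ≤ Complex.abs (f z - f ((r:ℂ)*τ)) + Complex.abs (f ((r:ℂ)*τ)) := Complex.abs.add_le _ _
    _ ≤ 3 * ε₁ * (1-r)^2 * Complex.abs (z - (r:ℂ)*τ) + ε₁ * (1 - r)^3 :=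
          add_le_add hmvt (hrad0 r (le_refl r) hr1)
    _ ≤ 3 * ε₁ * (1-r)^2 * ((1-r)/2) + ε₁ * (1-r)^3 :=
          add_le_add (mul_le_mul_of_nonneg_left hz (mul_nonneg (by linarith : (0:ℝ) ≤ 3 * ε₁) (sq_nonneg _))) le_rfl
    _ ≤ 3 * ε₁ * (1-r)^3 := by nlinarith [hε₁, pow_pos hrpos 3]
  -- the flow
  set u : ℝ → ℂ := fun s => F s ((r:ℂ)*τ) with hu_def
  have hrτd : (r:ℂ)*τ ∈ unitDisk := radial_mem_disk hτ hr
  obtain ⟨hu0, hu'⟩ := hgen _ hrτd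
  have hu : ∀ s ∈ Icc (0:ℝ) t, HasDerivWithinAt u (-(f (u s))) (Icc 0 t) s :=
    fun s hs => (hu' s hs.1).mono (fun v hv => hv.1)
  set δ := 3 * ε₁ * (1-r)^3 with hδdef
  have hδnn : 0 ≤ δ := by positivity
  have hρ : δ * t < (1-r)/2 := by
    have hq : δ₂ ≤ (1/2) / (3*ε₁*t+1) := min_le_right _ _
    have hd1' : δ₂ ≤ 1 := min_le_left _ _
    have hq2 : (1-r)^2 < δ₂ := by nlinarith [h1rδ₂, hδ₂, hrpos]
    have h3 : (0:ℝ) < 3*ε₁*t+1 := by nlinarith [hε₁, ht]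
    have hq3 : (1-r)^2 < (1/2) / (3*ε₁*t+1) := lt_of_lt_of_le hq2 hq
    have h5 : (1-r)^2 * (3*ε₁*t+1) < 1/2 := (lt_div_iff₀ h3).mp hq3
    have h6 : (1-r) * ((1-r)^2 * (3*ε₁*t+1)) < (1-r) * (1/2) := by
      exact mul_lt_mul_of_pos_left h5 hrpos
    rw [hδdef]
    nlinarith [h6, pow_pos hrpos 3]
  have hbnd : ∀ s ∈ Icc (0:ℝ) t, ‖u s - u 0‖ ≤ (1-r)/2 → ‖-(f (u s))‖ ≤ δ := by
    intro s hs h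
    rw [norm_neg, Complex.norm_eq_abs]
    apply hball0
    have h0 : u 0 = (r:ℂ)*τ := hu0
    rw [h0, Complex.norm_eq_abs] at h
    exact h
  have hconf := confine ht hδnn hρ hu hbnd t ⟨ht, le_refl t⟩
  have h0 : u 0 = (r:ℂ)*τ := hu0
  have hut : u t = F t ((r:ℂ)*τ) := rfl
  rw [h0, hut] at hconf
  rw [Complex.dist_eq, sub_zero, map_div₀, map_pow]
  have habs1r : Complex.abs ((1:ℂ) - (r:ℂ)) = 1 - r := by
    rw [show (1:ℂ) - (r:ℂ) = ((1 - r : ℝ):ℂ) by push_cast; ring, Complex.abs_ofReal,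
      _root_.abs_of_pos hrpos]
  rw [habs1r]
  rw [Complex.norm_eq_abs] at hconf
  have hpow : 0 < (1-r)^3 := pow_pos hrpos 3
  rw [div_lt_iff₀ hpow]
  calc Complex.abs (F t ((r:ℂ)*τ) - (r:ℂ)*τ) ≤ δ * t := hconf
  _ = 3 * ε₁ * t * (1-r)^3 := by rw [hδdef]; ring
  _ < ε * (1-r)^3 := by
      have h7 : 3 * ε₁ * t * (t+1) = ε * t := by
        rw [hε₁def]; field_simp
      have h8 : 3 * ε₁ * t < ε := by nlinarith [h7, hε, htpos, ht]
      nlinarith [hpow, h8]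

lemma e_ne_zero {r : ℝ} (hr : r < 1) : (1:ℂ) - (r:ℂ) ≠ 0 := by
  intro h
  have h2 : ((1 - r : ℝ):ℂ) = 0 := by push_cast; linear_combination h
  rw [Complex.ofReal_eq_zero] at h2
  linarith

lemma e_tendsto : Tendsto (fun r : ℝ => (1:ℂ) - (r:ℂ)) (𝓝[Ico (0:ℝ) 1] 1) (𝓝 0) := by
  have h : Tendsto (fun r : ℝ => (1:ℂ) - (r:ℂ)) (𝓝 (1:ℝ)) (𝓝 ((1:ℂ) - ((1:ℝ):ℂ))) :=
    (continuous_const.sub Complex.continuous_ofReal).tendsto (1:ℝ)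
  have h2 := h.mono_left (nhdsWithin_le_nhds (s := Ico (0:ℝ) 1))
  simpa using h2

lemma rt_tendsto (hτ : Complex.abs τ = 1) :
    Tendsto (fun r : ℝ => (r:ℂ) * τ) (𝓝[Ico (0:ℝ) 1] 1) (𝓝 τ) := by
  have hc : Continuous (fun r : ℝ => (r:ℂ) * τ) := Complex.continuous_ofReal.mul continuous_const
  have h : Tendsto (fun r : ℝ => (r:ℂ) * τ) (𝓝 (1:ℝ)) (𝓝 (((1:ℝ):ℂ) * τ)) := hc.tendsto (1:ℝ)
  have h2 := h.mono_left (nhdsWithin_le_nhds (s := Ico (0:ℝ) 1))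
  simpa using h2

lemma julia {G : ℂ → ℂ} (hd : DifferentiableOn ℂ G unitDisk) (hm : MapsTo G unitDisk unitDisk)
    (hτ : Complex.abs τ = 1)
    (hlim : Tendsto (fun r : ℝ => (G ((r:ℂ)*τ) - (r:ℂ)*τ) / ((1:ℂ) - (r:ℂ))^3)
      (𝓝[Ico (0:ℝ) 1] 1) (𝓝 0)) :
    ∀ a ∈ unitDisk, (1 - normSq a) * normSq (1 - (starRingEnd ℂ) τ * G a)
      ≤ (1 - normSq (G a)) * normSq (1 - (starRingEnd ℂ) τ * a) := by
  haveI : (𝓝[Ico (0:ℝ) 1] (1:ℝ)).NeBot := neBot_Ico zero_lt_one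
  intro a ha
  have hevIco : ∀ᶠ r in 𝓝[Ico (0:ℝ) 1] (1:ℝ), r ∈ Ico (0:ℝ) 1 := self_mem_nhdsWithin
  have hGdiff : Tendsto (fun r : ℝ => G ((r:ℂ)*τ) - (r:ℂ)*τ) (𝓝[Ico (0:ℝ) 1] 1) (𝓝 0) := by
    have h := hlim.mul (e_tendsto.pow 3)
    rw [zero_mul] at h
    apply h.congr'
    filter_upwards [hevIco] with r hr
    exact div_mul_cancel₀ _ (pow_ne_zero 3 (e_ne_zero hr.2))
  have hGrad : Tendsto (fun r : ℝ => G ((r:ℂ)*τ)) (𝓝[Ico (0:ℝ) 1] 1) (𝓝 τ) := by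
    have h := hGdiff.add (rt_tendsto hτ)
    rw [zero_add] at h
    apply h.congr'
    filter_upwards with r
    ring
  have hq1 : Tendsto (fun r : ℝ => (G ((r:ℂ)*τ) - (r:ℂ)*τ) / ((1:ℂ) - (r:ℂ)))
      (𝓝[Ico (0:ℝ) 1] 1) (𝓝 0) := by
    have h := hlim.mul (e_tendsto.pow 2)
    rw [zero_mul] at h
    apply h.congr'
    filter_upwards [hevIco] with r hr
    have he := e_ne_zero hr.2
    field_simp
  have hratio : Tendsto (fun r : ℝ => (1 - normSq (G ((r:ℂ)*τ)))/(1 - r^2))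
      (𝓝[Ico (0:ℝ) 1] 1) (𝓝 1) := by
    have hz : Tendsto (fun r : ℝ => (1 - normSq (G ((r:ℂ)*τ)))/(1 - r^2) - 1)
        (𝓝[Ico (0:ℝ) 1] 1) (𝓝 0) := by
      apply squeeze_zero_norm'
        (a := fun r : ℝ => 2 * ‖(G ((r:ℂ)*τ) - (r:ℂ)*τ) / ((1:ℂ) - (r:ℂ))‖)
      · filter_upwards [hevIco] with r hr
        have hr0 := hr.1
        have hr1 := hr.2
        have hrr : (0:ℝ) < 1 - r := by linarith
        have hrr2 : (0:ℝ) < 1 - r^2 := by nlinarith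
        have hGd : G ((r:ℂ)*τ) ∈ unitDisk := hm (radial_mem_disk hτ hr)
        have hGabs : Complex.abs (G ((r:ℂ)*τ)) < 1 := hGd
        have habsrτ : Complex.abs ((r:ℂ)*τ) = r := by
          rw [map_mul, Complex.abs_ofReal, hτ, mul_one, _root_.abs_of_nonneg hr0]
        set cg := Complex.abs (G ((r:ℂ)*τ)) with hcg
        set A := Complex.abs (G ((r:ℂ)*τ) - (r:ℂ)*τ) with hA_def
        have hA : |r - cg| ≤ A := by
          have h := Complex.abs.abs_abv_sub_le_abv_sub ((r:ℂ)*τ) (G ((r:ℂ)*τ))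
          rw [habsrτ] at h
          rw [hA_def, AbsoluteValue.map_sub]
          exact h
        have h6 : |r^2 - normSq (G ((r:ℂ)*τ))| ≤ 2*A := by
          rw [Complex.normSq_eq_abs, ← hcg,
            show r^2 - cg^2 = (r - cg)*(r + cg) by ring, abs_mul]
          have h7 : |r + cg| ≤ 2 := by
            rw [_root_.abs_of_nonneg (by positivity)]
            linarith [hGabs]
          calc |r - cg| * |r + cg| ≤ A * 2 :=
            mul_le_mul hA h7 (abs_nonneg _) ((abs_nonneg _).trans hA)
          _ = 2*A := by ring
        have hstep : (1 - normSq (G ((r:ℂ)*τ)))/(1 - r^2) - 1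
            = (r^2 - normSq (G ((r:ℂ)*τ)))/(1 - r^2) := by
          field_simp
          ring
        rw [Real.norm_eq_abs, hstep, abs_div, _root_.abs_of_pos hrr2]
        have h8 : |r^2 - normSq (G ((r:ℂ)*τ))| / (1 - r^2) ≤ 2*A / (1-r) :=
          div_le_div₀ (by positivity) h6 hrr (by nlinarith)
        calc |r^2 - normSq (G ((r:ℂ)*τ))| / (1 - r^2) ≤ 2*A/(1-r) := h8
        _ = 2 * ‖(G ((r:ℂ)*τ) - (r:ℂ)*τ) / ((1:ℂ) - (r:ℂ))‖ := by
            rw [Complex.norm_eq_abs, map_div₀,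
              show (1:ℂ) - (r:ℂ) = ((1-r:ℝ):ℂ) by push_cast; ring,
              Complex.abs_ofReal, _root_.abs_of_pos hrr, hA_def]
            ring
      · have h := hq1.norm.const_mul 2
        simpa only [norm_zero, mul_zero] using h
    have h := hz.add (tendsto_const_nhds (x := (1:ℝ)))
    rw [zero_add] at h
    apply h.congr'
    filter_upwards with r
    ring
  -- eventual inequality and limit passage
  have hfinal := le_of_tendsto_of_tendsto
    (f := fun r : ℝ => (1 - normSq a) * normSq (1 - (starRingEnd ℂ) (G ((r:ℂ)*τ)) * G a))
    (g := fun r : ℝ => (1 - normSq (G ((r:ℂ)*τ)))/(1 - r^2) *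
      ((1 - normSq (G a)) * normSq (1 - (starRingEnd ℂ) ((r:ℂ)*τ) * a)))
    (b := 𝓝[Ico (0:ℝ) 1] (1:ℝ))
    (a₁ := (1 - normSq a) * normSq (1 - (starRingEnd ℂ) τ * G a))
    (a₂ := 1 * ((1 - normSq (G a)) * normSq (1 - (starRingEnd ℂ) τ * a))) ?_ ?_ ?_
  · simpa using hfinal
  · -- limit of LHS
    have hc1 : Tendsto (fun r : ℝ => (starRingEnd ℂ) (G ((r:ℂ)*τ))) (𝓝[Ico (0:ℝ) 1] 1)
        (𝓝 ((starRingEnd ℂ) τ)) := (Complex.continuous_conj.tendsto τ).comp hGrad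
    have hc2 := hc1.mul (tendsto_const_nhds (x := G a))
    have hc3 := (tendsto_const_nhds (x := (1:ℂ))).sub hc2
    have hc4 := (Complex.continuous_normSq.tendsto _).comp hc3
    exact (tendsto_const_nhds (x := 1 - normSq a)).mul hc4
  · -- limit of RHS
    have hc1 : Tendsto (fun r : ℝ => (starRingEnd ℂ) ((r:ℂ)*τ)) (𝓝[Ico (0:ℝ) 1] 1)
        (𝓝 ((starRingEnd ℂ) τ)) := (Complex.continuous_conj.tendsto τ).comp (rt_tendsto hτ)
    have hc2 := hc1.mul (tendsto_const_nhds (x := a))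
    have hc3 := (tendsto_const_nhds (x := (1:ℂ))).sub hc2
    have hc4 := (Complex.continuous_normSq.tendsto _).comp hc3
    have h := hratio.mul ((tendsto_const_nhds (x := 1 - normSq (G a))).mul hc4)
    simpa using h
  · filter_upwards [hevIco] with r hr
    have hr0 := hr.1
    have hr1 := hr.2
    have hrr2 : (0:ℝ) < 1 - r^2 := by nlinarith
    have hrd : (r:ℂ)*τ ∈ unitDisk := radial_mem_disk hτ hr
    have hsp := schwarzPick_nsq hd hm ha hrd
    have hnsqrτ : normSq ((r:ℂ)*τ) = r^2 := by
      rw [Complex.normSq_mul, Complex.normSq_ofReal]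
      have : normSq τ = 1 := by rw [Complex.normSq_eq_abs, hτ]; norm_num
      rw [this]; ring
    rw [hnsqrτ] at hsp
    have h2 : (1 - normSq a) * normSq (1 - (starRingEnd ℂ) (G ((r:ℂ)*τ)) * G a) * (1 - r^2)
        ≤ (1 - normSq (G ((r:ℂ)*τ))) * ((1 - normSq (G a)) * normSq (1 - (starRingEnd ℂ) ((r:ℂ)*τ) * a)) := by
      nlinarith [hsp]
    show (1 - normSq a) * normSq (1 - (starRingEnd ℂ) (G ((r:ℂ)*τ)) * G a)
      ≤ (1 - normSq (G ((r:ℂ)*τ)))/(1 - r^2) *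
        ((1 - normSq (G a)) * normSq (1 - (starRingEnd ℂ) ((r:ℂ)*τ) * a))
    rw [div_mul_eq_mul_div, le_div_iff₀ hrr2]
    linarith [h2]

lemma rigidity {Φ : ℂ → ℂ} (hΦ : DifferentiableOn ℂ Φ unitDisk)
    (hre : ∀ z ∈ unitDisk, 0 ≤ (Φ z).re) (hτ : Complex.abs τ = 1)
    (hrad : Tendsto (fun r : ℝ => Φ ((r:ℂ)*τ) / ((1:ℂ) - (r:ℂ))) (𝓝[Ico (0:ℝ) 1] 1) (𝓝 0)) :
    ∀ z ∈ unitDisk, Φ z = 0 := by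
  haveI : (𝓝[Ico (0:ℝ) 1] (1:ℝ)).NeBot := neBot_Ico zero_lt_one
  have hevIco : ∀ᶠ r in 𝓝[Ico (0:ℝ) 1] (1:ℝ), r ∈ Ico (0:ℝ) 1 := self_mem_nhdsWithin
  have h0d : (0:ℂ) ∈ unitDisk := by simp [mem_unitDisk]
  -- Step A : Schwarz applied to the Cayley-type transform
  have hA : ∀ c : ℝ, 0 < c → ∀ z ∈ unitDisk,
      Complex.abs (Φ z - Φ 0) ≤ Complex.abs z *
        Complex.abs (Φ z + (starRingEnd ℂ) (Φ 0) + ((2*c : ℝ):ℂ)) := by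
    intro c hc z hz
    set D : ℂ → ℂ := fun ζ => Φ ζ + (starRingEnd ℂ) (Φ 0) + ((2*c : ℝ):ℂ) with hD
    have hDre : ∀ ζ ∈ unitDisk, 0 < (D ζ).re := by
      intro ζ hζ
      have h1 := hre ζ hζ
      have h2 := hre 0 h0d
      simp only [hD, Complex.add_re, Complex.conj_re, Complex.ofReal_re]
      linarith
    have hDne : ∀ ζ ∈ unitDisk, D ζ ≠ 0 := by
      intro ζ hζ h
      have := hDre ζ hζ
      rw [h] at this
      simp at this
    have hkey : ∀ ζ : ℂ, normSq (D ζ) - normSq (Φ ζ - Φ 0)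
        = 4*((Φ ζ).re + c)*((Φ 0).re + c) := by
      intro ζ
      simp only [hD, Complex.normSq_apply, Complex.add_re, Complex.add_im, Complex.sub_re,
        Complex.sub_im, Complex.conj_re, Complex.conj_im, Complex.ofReal_re, Complex.ofReal_im]
      ring
    set w : ℂ → ℂ := fun ζ => (Φ ζ - Φ 0) / D ζ with hw
    have hwd : DifferentiableOn ℂ w unitDisk := by
      apply DifferentiableOn.div
      · exact hΦ.sub (differentiableOn_const _)
      · exact (hΦ.add (differentiableOn_const _)).add (differentiableOn_const _)
      · exact hDne
    have hwm : MapsTo w unitDisk unitDisk := by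
      intro ζ hζ
      rw [mem_unitDisk, abs_lt_one_iff_normSq, hw]
      have hd1 : 0 < normSq (D ζ) := Complex.normSq_pos.mpr (hDne ζ hζ)
      rw [map_div₀, div_lt_one hd1]
      have h3 := hkey ζ
      have h4 := hre ζ hζ
      have h5 := hre 0 h0d
      nlinarith
    have hw0 : w 0 = 0 := by simp [hw]
    have hsch := Complex.abs_le_abs_of_mapsTo_ball_self (R := 1)
      (by rwa [← unitDisk_eq]) (by rwa [← unitDisk_eq]) hw0 (hz : Complex.abs z < 1)
    have heq : Φ z - Φ 0 = w z * D z := by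
      rw [hw]
      exact (div_mul_cancel₀ _ (hDne z hz)).symm
    rw [heq, map_mul]
    exact mul_le_mul_of_nonneg_right hsch (Complex.abs.nonneg _)
  -- Step B : re (Φ 0) = 0
  have hretend : Tendsto (fun r : ℝ => (Φ ((r:ℂ)*τ)).re / (1 - r)) (𝓝[Ico (0:ℝ) 1] 1) (𝓝 0) := by
    have h := (Complex.continuous_re.tendsto 0).comp hrad
    apply h.congr'
    filter_upwards [hevIco] with r hr
    show (Φ ((r:ℂ)*τ) / ((1:ℂ) - (r:ℂ))).re = (Φ ((r:ℂ)*τ)).re / (1 - r)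
    rw [show (1:ℂ) - (r:ℂ) = ((1-r:ℝ):ℂ) by push_cast; ring, Complex.div_ofReal_re]
  have hB : (Φ 0).re = 0 := by
    refine le_antisymm ?_ (hre 0 h0d)
    by_contra hpos
    push_neg at hpos
    have hHar : ∀ r ∈ Ico (0:ℝ) 1, (Φ 0).re * (1 - r) ≤ 2 * (Φ ((r:ℂ)*τ)).re := by
      intro r hr
      have hrd : (r:ℂ)*τ ∈ unitDisk := radial_mem_disk hτ hr
      have habsrτ : Complex.abs ((r:ℂ)*τ) = r := by
        rw [map_mul, Complex.abs_ofReal, hτ, mul_one, _root_.abs_of_nonneg hr.1]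
      have hstep : ∀ c : ℝ, 0 < c →
          ((Φ 0).re + c) * (1 - r) ≤ 2 * ((Φ ((r:ℂ)*τ)).re + c) := by
        intro c hc
        have h1 := hA c hc ((r:ℂ)*τ) hrd
        rw [habsrτ] at h1
        have h2 : normSq (Φ ((r:ℂ)*τ) - Φ 0)
            ≤ r^2 * normSq (Φ ((r:ℂ)*τ) + (starRingEnd ℂ) (Φ 0) + ((2*c : ℝ):ℂ)) := by
          have h3 := mul_le_mul h1 h1 (Complex.abs.nonneg _)
            (mul_nonneg hr.1 (Complex.abs.nonneg _))
          rw [← Complex.sq_abs, ← Complex.sq_abs]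
          nlinarith [h3]
        simp only [Complex.normSq_apply, Complex.add_re, Complex.add_im, Complex.sub_re,
          Complex.sub_im, Complex.conj_re, Complex.conj_im, Complex.ofReal_re,
          Complex.ofReal_im] at h2
        have hXpos : 0 < (Φ ((r:ℂ)*τ)).re + c := by have := hre _ hrd; linarith
        have hX0pos : 0 < (Φ 0).re + c := by have := hre 0 h0d; linarith
        have hr0 := hr.1
        have hr1 := hr.2
        set a1 := (Φ ((r:ℂ)*τ)).re with ha1
        set b1 := (Φ ((r:ℂ)*τ)).im with hb1
        set a0 := (Φ 0).re with ha0
        set b0 := (Φ 0).im with hb0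
        have h6 : ((a1+c) - (a0+c))^2 ≤ (r*((a1+c)+(a0+c)))^2 := by
          nlinarith [h2, sq_nonneg (b1 - b0), hr0, hr1,
            mul_nonneg (mul_nonneg hr0 hr0) (sq_nonneg (b1 - b0)),
            mul_nonneg (by nlinarith : (0:ℝ) ≤ 1 - r^2) (sq_nonneg (b1 - b0))]
        have hv : 0 ≤ r*((a1+c)+(a0+c)) := mul_nonneg hr0 (by linarith)
        have h7 := abs_le_of_sq_le_sq h6 hv
        obtain ⟨h8, h9⟩ := abs_le.mp h7
        nlinarith [hXpos, hX0pos, hr1, hr0, h8, h9, mul_nonneg hr0 hXpos.le]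
      apply le_of_forall_pos_le_add
      intro ε hε
      have := hstep (ε/2) (by positivity)
      nlinarith [this, hr.1, hr.2]
    have hge : (Φ 0).re / 2 ≤ 0 := ge_of_tendsto hretend ?_
    · linarith [hge]
    · filter_upwards [hevIco] with r hr
      have hrr : (0:ℝ) < 1 - r := by linarith [hr.2]
      show (Φ 0).re / 2 ≤ (Φ ((r:ℂ)*τ)).re / (1 - r)
      rw [div_le_div_iff₀ (by norm_num) hrr]
      linarith [hHar r hr]
  -- Step C
  have hC : (starRingEnd ℂ) (Φ 0) = -(Φ 0) := by
    apply Complex.ext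
    · simp [hB]
    · simp
  -- Step D : Φ is constant
  have hD : ∀ z ∈ unitDisk, Φ z = Φ 0 := by
    intro z hz
    have h1 : ∀ c : ℝ, 0 < c → Complex.abs (Φ z - Φ 0)
        ≤ Complex.abs z * (Complex.abs (Φ z - Φ 0) + 2*c) := by
      intro c hc
      have h2 := hA c hc z hz
      have h3 : Complex.abs (Φ z + (starRingEnd ℂ) (Φ 0) + ((2*c : ℝ):ℂ))
          ≤ Complex.abs (Φ z - Φ 0) + 2*c := by
        rw [hC]
        calc Complex.abs (Φ z + -(Φ 0) + ((2*c : ℝ):ℂ))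
            ≤ Complex.abs (Φ z + -(Φ 0)) + Complex.abs (((2*c : ℝ):ℂ)) := Complex.abs.add_le _ _
        _ = Complex.abs (Φ z - Φ 0) + 2*c := by
              rw [Complex.abs_ofReal, _root_.abs_of_pos (by positivity : (0:ℝ) < 2*c)]
              ring_nf
      calc Complex.abs (Φ z - Φ 0) ≤ Complex.abs z *
          Complex.abs (Φ z + (starRingEnd ℂ) (Φ 0) + ((2*c : ℝ):ℂ)) := h2
      _ ≤ Complex.abs z * (Complex.abs (Φ z - Φ 0) + 2*c) :=
            mul_le_mul_of_nonneg_left h3 (Complex.abs.nonneg _)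
    have h2 : Complex.abs (Φ z - Φ 0) ≤ Complex.abs z * Complex.abs (Φ z - Φ 0) := by
      apply le_of_forall_pos_le_add
      intro ε hε
      have h3 := h1 (ε/2) (by positivity)
      have hz1 : Complex.abs z < 1 := hz
      nlinarith [h3, Complex.abs.nonneg z, Complex.abs.nonneg (Φ z - Φ 0)]
    have h4 : Complex.abs (Φ z - Φ 0) = 0 := by
      have hz1 : Complex.abs z < 1 := hz
      nlinarith [h2, Complex.abs.nonneg (Φ z - Φ 0)]
    have h5 := Complex.abs.eq_zero.mp h4
    linear_combination h5
  -- Step E : Φ 0 = 0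
  have hE : Φ 0 = 0 := by
    have h1 : Tendsto (fun r : ℝ => Φ ((r:ℂ)*τ)) (𝓝[Ico (0:ℝ) 1] 1) (𝓝 (Φ 0)) := by
      apply tendsto_const_nhds.congr'
      filter_upwards [hevIco] with r hr
      exact (hD _ (radial_mem_disk hτ hr)).symm
    have h2 : Tendsto (fun r : ℝ => Φ ((r:ℂ)*τ)) (𝓝[Ico (0:ℝ) 1] 1) (𝓝 0) := by
      have h := hrad.mul e_tendsto
      rw [mul_zero] at h
      apply h.congr'
      filter_upwards [hevIco] with r hr
      exact div_mul_cancel₀ _ (e_ne_zero hr.2)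
    exact tendsto_nhds_unique h1 h2
  intro z hz
  rw [hD z hz, hE]

theorem main
    (F : ℝ → ℂ → ℂ) (f : ℂ → ℂ)
    (hS : ContSemigroupOn F) (hf : DifferentiableOn ℂ f unitDisk)
    (hgen : Generates f F)
    (τ : ℂ) (hτ : Complex.abs τ = 1) (hnull : BoundaryNullPoint f τ)
    (hβ : AngularLimit (deriv f) τ 0)
    (hα : AngularLimit (deriv (deriv f)) τ 0)
    (hγ : AngularLimit (deriv (deriv (deriv f))) τ 0) :
    ∀ t : ℝ, 0 ≤ t → ∀ z ∈ unitDisk, F t z = z := by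
  intro t ht z hz
  have hd : DifferentiableOn ℂ (F t) unitDisk := hS.holo t ht
  have hm : MapsTo (F t) unitDisk unitDisk := hS.maps t ht
  have hkey := key hf hgen hτ hnull hβ hα hγ t ht
  have hj := julia hd hm hτ hkey
  set G : ℂ → ℂ := F t with hGdef
  have hτ0 : τ ≠ 0 := by
    intro h; rw [h] at hτ; simp at hτ
  have hns : normSq τ = 1 := by rw [Complex.normSq_eq_abs, hτ]; norm_num
  have hmc : τ * (starRingEnd ℂ) τ = 1 := by
    rw [Complex.mul_conj, hns]; norm_num
  have htne : ∀ w : ℂ, w ∈ unitDisk → τ - w ≠ 0 := by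
    intro w hw h
    have h2 : τ = w := by linear_combination h
    rw [mem_unitDisk, ← h2, hτ] at hw
    linarith
  set Φ : ℂ → ℂ := fun w => (τ + G w)/(τ - G w) - (τ + w)/(τ - w) with hΦdef
  have hΦd : DifferentiableOn ℂ Φ unitDisk := by
    apply DifferentiableOn.sub
    · exact DifferentiableOn.div ((differentiableOn_const τ).add hd)
        ((differentiableOn_const τ).sub hd) (fun w hw => htne _ (hm hw))
    · exact DifferentiableOn.div ((differentiableOn_const τ).add differentiableOn_id)
        ((differentiableOn_const τ).sub differentiableOn_id) (fun w hw => htne _ hw)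
  have hnsden : ∀ w : ℂ, normSq (τ - w) = normSq (1 - (starRingEnd ℂ) τ * w) := by
    intro w
    have h1 : τ - w = τ * (1 - (starRingEnd ℂ) τ * w) := by linear_combination w * hmc
    rw [h1, Complex.normSq_mul, hns, one_mul]
  have hcayre : ∀ w : ℂ, ((τ + w)/(τ - w)).re
      = (1 - normSq w)/normSq (1 - (starRingEnd ℂ) τ * w) := by
    intro w
    rw [Complex.div_re, ← hnsden w, ← add_div]
    congr 1
    have h1 : τ.re*τ.re + τ.im*τ.im = 1 := by rw [← Complex.normSq_apply, hns]
    simp only [Complex.add_re, Complex.add_im, Complex.sub_re, Complex.sub_im,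
      Complex.normSq_apply]
    linear_combination h1
  have hre : ∀ w ∈ unitDisk, 0 ≤ (Φ w).re := by
    intro w hw
    have hGw : G w ∈ unitDisk := hm hw
    show 0 ≤ ((τ + G w)/(τ - G w) - (τ + w)/(τ - w)).re
    rw [Complex.sub_re, hcayre (G w), hcayre w]
    have hA : 0 < normSq (1 - (starRingEnd ℂ) τ * G w) :=
      Complex.normSq_pos.mpr (one_sub_ne_zero' hτ.le hGw)
    have hB : 0 < normSq (1 - (starRingEnd ℂ) τ * w) :=
      Complex.normSq_pos.mpr (one_sub_ne_zero' hτ.le hw)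
    rw [sub_nonneg, div_le_div_iff₀ hB hA]
    exact hj w hw
  have hradΦ : Tendsto (fun r : ℝ => Φ ((r:ℂ)*τ) / ((1:ℂ) - (r:ℂ)))
      (𝓝[Ico (0:ℝ) 1] 1) (𝓝 0) := by
    have hden : Tendsto (fun r : ℝ =>
        τ - ((G ((r:ℂ)*τ) - (r:ℂ)*τ)/((1:ℂ)-(r:ℂ))^3) * ((1:ℂ)-(r:ℂ))^2)
        (𝓝[Ico (0:ℝ) 1] 1) (𝓝 τ) := by
      have h := (tendsto_const_nhds (x := τ)).sub (hkey.mul (e_tendsto.pow 2))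
      simpa using h
    have hmain : Tendsto (fun r : ℝ =>
        2*τ*((G ((r:ℂ)*τ) - (r:ℂ)*τ)/((1:ℂ)-(r:ℂ))^3) *
          (τ - ((G ((r:ℂ)*τ) - (r:ℂ)*τ)/((1:ℂ)-(r:ℂ))^3) * ((1:ℂ)-(r:ℂ))^2)⁻¹ * τ⁻¹)
        (𝓝[Ico (0:ℝ) 1] 1) (𝓝 0) := by
      have h := (((tendsto_const_nhds (x := 2*τ)).mul hkey).mul
        (hden.inv₀ hτ0)).mul (tendsto_const_nhds (x := τ⁻¹))
      simpa using h
    apply hmain.congr'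
    filter_upwards [self_mem_nhdsWithin] with r hr
    have he : (1:ℂ) - (r:ℂ) ≠ 0 := e_ne_zero hr.2
    have hb : (r:ℂ)*τ ∈ unitDisk := radial_mem_disk hτ hr
    have ha : G ((r:ℂ)*τ) ∈ unitDisk := hm hb
    have hta : τ - G ((r:ℂ)*τ) ≠ 0 := htne _ ha
    have htb : τ - (r:ℂ)*τ ≠ 0 := htne _ hb
    show 2*τ*((G ((r:ℂ)*τ) - (r:ℂ)*τ)/((1:ℂ)-(r:ℂ))^3) *
          (τ - ((G ((r:ℂ)*τ) - (r:ℂ)*τ)/((1:ℂ)-(r:ℂ))^3) * ((1:ℂ)-(r:ℂ))^2)⁻¹ * τ⁻¹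
        = ((τ + G ((r:ℂ)*τ))/(τ - G ((r:ℂ)*τ)) - (τ + (r:ℂ)*τ)/(τ - (r:ℂ)*τ)) / ((1:ℂ) - (r:ℂ))
    have h5 : τ - ((G ((r:ℂ)*τ) - (r:ℂ)*τ)/((1:ℂ)-(r:ℂ))^3) * ((1:ℂ)-(r:ℂ))^2
        = (τ - G ((r:ℂ)*τ))/((1:ℂ)-(r:ℂ)) := by
      field_simp
      ring
    rw [h5]
    have h6 : (τ - G ((r:ℂ)*τ))/((1:ℂ)-(r:ℂ)) ≠ 0 := div_ne_zero hta he
    generalize G ((r:ℂ)*τ) = g at hta h6 ⊢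
    generalize (r:ℂ) = ρ at he htb h6 ⊢
    field_simp
    ring
  have hΦ0 : Φ z = 0 := rigidity hΦd hre hτ hradΦ z hz
  have h1 : (τ + G z)/(τ - G z) - (τ + z)/(τ - z) = 0 := hΦ0
  have hGz : G z ∈ unitDisk := hm hz
  have h1' : (τ + G z)/(τ - G z) = (τ + z)/(τ - z) := by linear_combination h1
  rw [div_eq_div_iff (htne _ hGz) (htne _ hz)] at h1'
  have h4 : (2*τ) * (G z) = (2*τ) * z := by linear_combination h1'
  exact mul_left_cancel₀ (mul_ne_zero two_ne_zero hτ0) h4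

end PR

/-- Corollary 1: a parabolic semigroup whose generator has vanishing second and third
angular derivatives at the Denjoy--Wolff point is trivial. -/
theorem parabolic_semigroup_trivial_of_vanishing_derivatives
    (F : ℝ → ℂ → ℂ) (f : ℂ → ℂ)
    (hS : ContSemigroupOn F) (hf : DifferentiableOn ℂ f unitDisk)
    (hgen : Generates f F)
    (τ : ℂ) (hτ : ‖τ‖ = 1) (hnull : BoundaryNullPoint f τ)
    (hβ : AngularLimit (deriv f) τ 0)
    (hα : AngularLimit (deriv (deriv f)) τ 0)
    (hγ : AngularLimit (deriv (deriv (deriv f))) τ 0) :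
    ∀ t : ℝ, 0 ≤ t → ∀ z ∈ unitDisk, F t z = z :=
  PR.main F f hS hf hgen τ hτ hnull hβ hα hγ
end
end

section
/- Let S = {F_t}_{t≥0} be a one-parameter continuous semigroup on Δ generated by a holomorphic function f : Δ → ℂ, and let τ ∈ ∂Δ be a boundary null point of f. Assume that for each t > 0 the unrestricted limit lim_{z→τ, z∈Δ} F_t(z) exists, and that the unrestricted limits β := lim_{z→τ, z∈Δ} f′(z) and α := lim_{z→τ, z∈Δ} f″(z) exist finitely. Then for each t ≥ 0 the unrestricted limit lim_{z→τ, z∈Δ} F_t″(z) exists; it equals −αt if β = 0, and equals (α/β)·e^{−βt}·(e^{−βt} − 1) if β ≠ 0. -/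
set_option maxHeartbeats 1000000


open Complex Filter Set

noncomputable section

variable {F : ℝ → ℂ → ℂ} {f : ℂ → ℂ} {τ : ℂ}

/-- continuity of the flow in time -/
lemma flow_contOn (hgen : Generates f F) {z : ℂ} (hz : z ∈ unitDisk) :
    ContinuousOn (fun s : ℝ => F s z) (Set.Ici 0) :=
  fun s hs => ((hgen z hz).2 s hs).continuousWithinAt

/-- The Gronwall/bootstrap lemma: the flow starting close to `τ` stays close. -/
lemma flow_stay (hS : ContSemigroupOn F) (hgen : Generates f F)
    {δ₀ M t : ℝ} (hδ₀ : 0 < δ₀) (hM : 0 ≤ M) (ht : 0 ≤ t)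
    (hbound : ∀ w ∈ unitDisk, dist w τ < δ₀ → ‖f w‖ ≤ M * dist w τ)
    {z : ℂ} (hz : z ∈ unitDisk) (hzτ : dist z τ < δ₀ / 2 * Real.exp (-(M * t))) :
    ∀ s ∈ Set.Icc 0 t, dist (F s z) τ ≤ dist z τ * Real.exp (M * s) := by
  have hF0 : F 0 z = z := (hgen z hz).1
  have hcont : ContinuousOn (fun s : ℝ => F s z) (Set.Ici 0) := flow_contOn hgen hz
  have hmem : ∀ s : ℝ, 0 ≤ s → F s z ∈ unitDisk := fun s hs => hS.maps s hs hz
  -- the key smallness: dist z τ * exp (M * s) < δ₀ / 2 for s ≤ t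
  have hsmall : ∀ s ∈ Set.Icc (0:ℝ) t, dist z τ * Real.exp (M * s) < δ₀ / 2 := by
    intro s hs
    have h1 : Real.exp (M * s) ≤ Real.exp (M * t) :=
      Real.exp_le_exp.2 (mul_le_mul_of_nonneg_left hs.2 hM)
    have h2 : dist z τ * Real.exp (M * s) ≤ dist z τ * Real.exp (M * t) :=
      mul_le_mul_of_nonneg_left h1 dist_nonneg
    have h3 : dist z τ * Real.exp (M * t) < δ₀ / 2 * Real.exp (-(M * t)) * Real.exp (M * t) :=
      mul_lt_mul_of_pos_right hzτ (Real.exp_pos _)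
    have h4 : δ₀ / 2 * Real.exp (-(M * t)) * Real.exp (M * t) = δ₀ / 2 := by
      rw [mul_assoc, ← Real.exp_add]; simp
    linarith
  -- continuous induction
  set S : Set ℝ := {x | ∀ r ∈ Set.Icc 0 x, dist (F r z) τ ≤ dist z τ * Real.exp (M * r)} with hSdef
  have key : Set.Icc 0 t ⊆ S := by
    apply IsClosed.Icc_subset_of_forall_exists_gt
    · -- IsClosed (S ∩ Icc 0 t)
      rw [← isSeqClosed_iff_isClosed]
      intro xs x hxs hlim
      refine ⟨?_, isClosed_Icc.isSeqClosed (fun n => (hxs n).2) hlim⟩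
      have hxIcc : x ∈ Set.Icc 0 t := isClosed_Icc.isSeqClosed (fun n => (hxs n).2) hlim
      intro r hr
      rcases lt_or_eq_of_le hr.2 with hlt | heq
      · -- r < x : eventually xs n > r
        have : ∀ᶠ n in atTop, r < xs n := hlim.eventually (eventually_gt_nhds hlt)
        rcases this.exists with ⟨n, hn⟩
        exact (hxs n).1 r ⟨hr.1, hn.le⟩
      · -- r = x : limit argument
        subst heq
        have h1 : Tendsto (fun n => dist (F (xs n) z) τ) atTop (nhds (dist (F r z) τ)) := by
          have hc : ContinuousWithinAt (fun s : ℝ => F s z) (Set.Ici 0) r := hcont r hr.1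
          have : Tendsto (fun n => F (xs n) z) atTop (nhds (F r z)) := by
            apply (hc.tendsto).comp
            apply tendsto_nhdsWithin_iff.2 ⟨hlim, Eventually.of_forall (fun n => (hxs n).2.1)⟩
          exact ((continuous_id.dist continuous_const).tendsto _).comp this
        have h2 : Tendsto (fun n => dist z τ * Real.exp (M * xs n)) atTop
            (nhds (dist z τ * Real.exp (M * r))) := by
          apply Tendsto.const_mul
          exact (Real.continuous_exp.tendsto _).comp (hlim.const_mul M)
        exact le_of_tendsto_of_tendsto' h1 h2
          (fun n => (hxs n).1 (xs n) ⟨(hxs n).2.1, le_refl _⟩)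
    · -- 0 ∈ S
      intro r hr
      have : r = 0 := le_antisymm hr.2 hr.1
      subst this
      rw [hF0, mul_zero, Real.exp_zero, mul_one]
    · -- extension step
      rintro x ⟨hxS, hx0, hxt⟩ y hy
      -- continuity at x gives η > 0 with small growth
      have hFx : dist (F x z) τ < δ₀ / 2 := lt_of_le_of_lt (hxS x ⟨hx0, le_refl _⟩)
        (hsmall x ⟨hx0, hxt.le⟩)
      have hcx : ContinuousWithinAt (fun s : ℝ => F s z) (Set.Ici 0) x := hcont x hx0
      have hev : ∀ᶠ s in nhdsWithin x (Set.Ici 0), dist (F s z) τ < δ₀ := by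
        have : ∀ᶠ w in nhds (F x z), dist w τ < δ₀ := by
          apply eventually_nhds_iff.2
          exact ⟨Metric.ball τ δ₀, fun w hw => hw, Metric.isOpen_ball,
            by rw [Metric.mem_ball]; linarith⟩
        exact hcx this
      have hev' : ∀ᶠ s in nhdsWithin x (Set.Ici x), dist (F s z) τ < δ₀ :=
        hev.filter_mono (nhdsWithin_mono x (Set.Ici_subset_Ici.2 hx0))
      rcases (nhdsGE_basis_of_exists_gt (α := ℝ) (a := x) ⟨x+1, by linarith⟩).eventually_iff.1 hev'
        with ⟨x', hx', hx'2⟩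
      set x'' := min (min ((x+x')/2) y) t with hx''def
      have hxx'' : x < x'' := lt_min (lt_min (by linarith) hy) hxt
      have hx''0 : (0:ℝ) ≤ x'' := le_of_lt (lt_of_le_of_lt hx0 hxx'')
      -- the flow stays within δ₀ of τ on [0, x'']
      have hin : ∀ r ∈ Set.Ico (0:ℝ) x'', dist (F r z) τ < δ₀ := by
        intro r hr
        rcases le_or_gt r x with h | h
        · exact lt_of_le_of_lt (hxS r ⟨hr.1, h⟩)
            (lt_of_lt_of_le (hsmall r ⟨hr.1, le_trans h hxt.le⟩) (by linarith))
        · refine hx'2 ⟨h.le, ?_⟩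
          have : r < (x+x')/2 := lt_of_lt_of_le hr.2 (le_trans (min_le_left _ _) (min_le_left _ _))
          linarith
      -- Gronwall on [0, x'']
      have hgron := norm_le_gronwallBound_of_norm_deriv_right_le
        (f := fun r : ℝ => F r z - τ) (f' := fun r : ℝ => -(f (F r z)))
        (δ := dist z τ) (K := M) (ε := 0) (a := 0) (b := x'')
        (((flow_contOn hgen hz).mono Set.Icc_subset_Ici_self).sub continuousOn_const)
        (fun r hr => (((hgen z hz).2 r hr.1).mono (Set.Ici_subset_Ici.2 hr.1)).sub_const τ)
        (by show ‖F 0 z - τ‖ ≤ dist z τ; rw [hF0, ← dist_eq_norm])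
        (by
          intro r hr
          rw [norm_neg, add_zero, ← dist_eq_norm]
          exact hbound _ (hmem r hr.1) (hin r hr))
      refine ⟨x'', ?_, Set.mem_Ioc.2 ⟨hxx'', le_trans (min_le_left _ _) (min_le_right _ _)⟩⟩
      intro r hr
      have := hgron r hr
      rwa [sub_zero, gronwallBound_ε0, ← dist_eq_norm] at this
  intro s hs
  exact key hs s ⟨hs.1, le_refl _⟩

lemma isOpen_unitDisk : IsOpen unitDisk :=
  isOpen_lt continuous_norm continuous_const

lemma unitDisk_eq_ball : unitDisk = Metric.ball (0:ℂ) 1 := by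
  ext z; simp [unitDisk, Metric.mem_ball, Complex.dist_eq]

lemma convex_unitDisk : Convex ℝ unitDisk := unitDisk_eq_ball ▸ convex_ball 0 1

lemma tendsto_radial {τ : ℂ} :
    Tendsto (fun r : ℝ => (r:ℂ) * τ) (nhdsWithin 1 (Set.Iio 1)) (nhds τ) := by
  have : Continuous (fun r : ℝ => (r:ℂ) * τ) := Complex.continuous_ofReal.mul continuous_const
  have h := this.tendsto (1:ℝ)
  simp only [Complex.ofReal_one, one_mul] at h
  exact h.mono_left nhdsWithin_le_nhds

lemma eventually_radial_mem {τ : ℂ} (hτ : ‖τ‖ = 1) {δ₀ : ℝ} (hδ₀ : 0 < δ₀) :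
    ∀ᶠ r : ℝ in nhdsWithin 1 (Set.Iio 1),
      (r:ℂ) * τ ∈ unitDisk ∩ Metric.ball τ δ₀ := by
  filter_upwards [Ioo_mem_nhdsLT_of_mem
    (⟨max_lt (by linarith) one_pos, le_refl _⟩ :
      (1:ℝ) ∈ Set.Ioc (max (1 - δ₀) 0) 1)] with r hr
  have hr0 : 0 < r := lt_of_le_of_lt (le_max_right _ _) hr.1
  have hr1 : 1 - δ₀ < r := lt_of_le_of_lt (le_max_left _ _) hr.1
  have hr2 : r < 1 := hr.2
  constructor
  · show ‖(r:ℂ) * τ‖ < 1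
    rw [norm_mul, hτ, mul_one, Complex.norm_real, Real.norm_eq_abs, abs_of_pos hr0]
    exact hr2
  · rw [Metric.mem_ball, Complex.dist_eq]
    have : (r:ℂ) * τ - τ = ((r:ℝ) - 1 : ℝ) * τ := by push_cast; ring
    rw [this, norm_mul, hτ, mul_one, Complex.norm_real, Real.norm_eq_abs, abs_of_nonpos (by linarith)]
    linarith

lemma f_linear_bound (hf : DifferentiableOn ℂ f unitDisk)
    (hnull : BoundaryNullPoint f τ) (hτ : ‖τ‖ = 1)
    {δ₀ M : ℝ} (hδ₀ : 0 < δ₀)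
    (hM : ∀ w ∈ unitDisk ∩ Metric.ball τ δ₀, ‖deriv f w‖ ≤ M) :
    ∀ w ∈ unitDisk, dist w τ < δ₀ → ‖f w‖ ≤ M * dist w τ := by
  intro w hw hwd
  set D := unitDisk ∩ Metric.ball τ δ₀ with hD
  have hDopen : IsOpen D := isOpen_unitDisk.inter Metric.isOpen_ball
  have hDconv : Convex ℝ D := convex_unitDisk.inter (convex_ball τ δ₀)
  have hwD : w ∈ D := ⟨hw, Metric.mem_ball.2 hwd⟩
  have hlip : ∀ x ∈ D, ∀ y ∈ D, ‖f y - f x‖ ≤ M * ‖y - x‖ := by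
    intro x hx y hy
    exact hDconv.norm_image_sub_le_of_norm_hasDerivWithin_le
      (fun u hu => ((hf.differentiableAt (isOpen_unitDisk.mem_nhds hu.1)).hasDerivAt).hasDerivWithinAt)
      hM hx hy
  have h1 : Tendsto (fun r : ℝ => ‖f w - f ((r:ℂ) * τ)‖) (nhdsWithin 1 (Set.Iio 1))
      (nhds ‖f w - 0‖) := (tendsto_const_nhds.sub hnull).norm
  have h2 : Tendsto (fun r : ℝ => M * ‖w - (r:ℂ) * τ‖) (nhdsWithin 1 (Set.Iio 1))
      (nhds (M * ‖w - τ‖)) := (tendsto_const_nhds.sub tendsto_radial).norm.const_mul M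
  have hev : ∀ᶠ r : ℝ in nhdsWithin 1 (Set.Iio 1),
      ‖f w - f ((r:ℂ) * τ)‖ ≤ M * ‖w - (r:ℂ) * τ‖ := by
    filter_upwards [eventually_radial_mem hτ hδ₀] with r hr
    exact hlip _ hr _ hwD
  have hle := le_of_tendsto_of_tendsto h1 h2 hev
  rw [sub_zero] at hle
  rwa [dist_eq_norm]


section identities
variable (hS : ContSemigroupOn F) (hf : DifferentiableOn ℂ f unitDisk) (hgen : Generates f F)

lemma deriv_f_contOn (hf : DifferentiableOn ℂ f unitDisk) :
    ContinuousOn (deriv f) unitDisk :=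
  ((hf.analyticOnNhd isOpen_unitDisk).deriv).continuousOn

/-- the integrand `g u = f'(F_u z)` is continuous on `[0, ∞)` -/
lemma g_contOn (hS : ContSemigroupOn F) (hf : DifferentiableOn ℂ f unitDisk)
    (hgen : Generates f F) {z : ℂ} (hz : z ∈ unitDisk) :
    ContinuousOn (fun u : ℝ => deriv f (F u z)) (Set.Ici 0) :=
  (deriv_f_contOn hf).comp (flow_contOn hgen hz) (fun u hu => hS.maps u hu hz)

lemma exp_I_eq (hS : ContSemigroupOn F) (hf : DifferentiableOn ℂ f unitDisk)
    (hgen : Generates f F) {t : ℝ} (ht : 0 ≤ t) {z : ℂ} (hz : z ∈ unitDisk) :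
    ∀ s ∈ Set.Icc 0 t,
      f (F s z) = f z * Complex.exp (-(∫ u in (0:ℝ)..s, deriv f (F u z))) := by
  set g : ℝ → ℂ := fun u => deriv f (F u z) with hgdef
  set I : ℝ → ℂ := fun s => ∫ u in (0:ℝ)..s, g u with hIdef
  set φ : ℝ → ℂ := fun s => f (F s z) with hφdef
  have hgc : ContinuousOn g (Set.Ici 0) := g_contOn hS hf hgen hz
  -- right derivative of I
  have hI_deriv : ∀ x : ℝ, 0 ≤ x → HasDerivWithinAt I (g x) (Set.Ici x) x := by
    intro x hx
    apply intervalIntegral.integral_hasDerivWithinAt_right (t := Set.Ioi x)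
    · apply ContinuousOn.intervalIntegrable
      apply hgc.mono
      rw [Set.uIcc_of_le hx]
      exact fun u hu => hu.1
    · exact ⟨Set.Ioi x, self_mem_nhdsWithin,
        (hgc.mono (fun u hu => le_trans hx (le_of_lt hu))).aestronglyMeasurable
          measurableSet_Ioi⟩
    · exact ((hgc x hx).mono (Set.Ici_subset_Ici.2 hx)).mono Set.Ioi_subset_Ici_self
  -- right derivative of φ
  have hφ_deriv : ∀ x : ℝ, 0 ≤ x →
      HasDerivWithinAt φ (-(g x * φ x)) (Set.Ici x) x := by
    intro x hx
    have hu : HasDerivWithinAt (fun s : ℝ => F s z) (-(f (F x z))) (Set.Ici x) x :=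
      ((hgen z hz).2 x hx).mono (Set.Ici_subset_Ici.2 hx)
    have hfd : HasDerivAt f (deriv f (F x z)) (F x z) :=
      (hf.differentiableAt (isOpen_unitDisk.mem_nhds (hS.maps x hx hz))).hasDerivAt
    have := HasDerivAt.comp_hasDerivWithinAt x hfd hu
    refine this.congr_deriv ?_
    simp only [hφdef, hgdef, Function.comp]
    ring
  -- ψ := φ * exp (I ·) has zero right derivative
  set ψ : ℝ → ℂ := fun s => φ s * Complex.exp (I s) with hψdef
  have hIc : ContinuousOn I (Set.Icc 0 t) := by
    have := intervalIntegral.continuousOn_primitive_interval'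
      (μ := MeasureTheory.volume) (b₁ := (0:ℝ)) (b₂ := t) (a := (0:ℝ)) (f := g)
      (by
        apply ContinuousOn.intervalIntegrable
        apply hgc.mono
        rw [Set.uIcc_of_le ht]
        exact fun u hu => hu.1)
      (by rw [Set.uIcc_of_le ht]; exact ⟨le_refl _, ht⟩)
    rwa [Set.uIcc_of_le ht] at this
  have hφc : ContinuousOn φ (Set.Icc 0 t) :=
    (hf.continuousOn.comp ((flow_contOn hgen hz).mono Set.Icc_subset_Ici_self)
      (fun u hu => hS.maps u hu.1 hz))
  have hψc : ContinuousOn ψ (Set.Icc 0 t) :=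
    hφc.mul (Complex.continuous_exp.comp_continuousOn hIc)
  have hψ_deriv : ∀ x ∈ Set.Ico (0:ℝ) t, HasDerivWithinAt ψ 0 (Set.Ici x) x := by
    intro x hx
    have h1 := hφ_deriv x hx.1
    have h2 : HasDerivWithinAt (fun s => Complex.exp (I s))
        (Complex.exp (I x) * g x) (Set.Ici x) x :=
      HasDerivAt.comp_hasDerivWithinAt x (Complex.hasDerivAt_exp (I x)) (hI_deriv x hx.1)
    have := h1.mul h2
    refine this.congr_deriv ?_
    ring
  have hconst := constant_of_has_deriv_right_zero hψc hψ_deriv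
  intro s hs
  have h0 : ψ 0 = f z := by
    simp [hψdef, hIdef, hφdef, (hgen z hz).1]
  have hs' := hconst s hs
  rw [h0] at hs'
  -- ψ s = f z  ⇒  φ s = f z * exp (-(I s))
  have : φ s = f z * Complex.exp (-(I s)) := by
    have hne : Complex.exp (I s) ≠ 0 := Complex.exp_ne_zero _
    simp only [hψdef] at hs'
    rw [← hs', Complex.exp_neg]
    field_simp
  exact this

end identities

lemma displacement (hS : ContSemigroupOn F) (hf : DifferentiableOn ℂ f unitDisk)
    (hgen : Generates f F) {t : ℝ} (ht : 0 ≤ t) {z : ℂ} (hz : z ∈ unitDisk) :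
    F t z - z = -(f z) *
      ∫ u in (0:ℝ)..t, Complex.exp (-(∫ v in (0:ℝ)..u, deriv f (F v z))) := by
  have hφc : ContinuousOn (fun s : ℝ => f (F s z)) (Set.Icc 0 t) :=
    hf.continuousOn.comp ((flow_contOn hgen hz).mono Set.Icc_subset_Ici_self)
      (fun u hu => hS.maps u hu.1 hz)
  have h1 : ∫ u in (0:ℝ)..t, -(f (F u z)) = F t z - F 0 z := by
    apply intervalIntegral.integral_eq_sub_of_hasDeriv_right_of_le ht
      ((flow_contOn hgen hz).mono Set.Icc_subset_Ici_self)
    · intro x hx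
      exact ((hgen z hz).2 x hx.1.le).mono (fun u hu => le_trans hx.1.le (le_of_lt hu))
    · apply ContinuousOn.intervalIntegrable
      rw [Set.uIcc_of_le ht]
      exact hφc.neg
  rw [(hgen z hz).1] at h1
  rw [← h1]
  have h2 : Set.EqOn (fun u : ℝ => -(f (F u z)))
      (fun u : ℝ => -(f z) * Complex.exp (-(∫ v in (0:ℝ)..u, deriv f (F v z))))
      (Set.uIcc 0 t) := by
    intro u hu
    rw [Set.uIcc_of_le ht] at hu
    have := exp_I_eq hS hf hgen ht hz u hu
    simp only []
    rw [this]
    ring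
  rw [intervalIntegral.integral_congr h2, intervalIntegral.integral_const_mul]

/-- The key identity `(F t)'(z) * f z = f (F t z)`. -/
lemma deriv_flow_mul (hS : ContSemigroupOn F) (hf : DifferentiableOn ℂ f unitDisk)
    (hgen : Generates f F) {t : ℝ} (ht : 0 ≤ t) {z : ℂ} (hz : z ∈ unitDisk) :
    deriv (F t) z * f z = f (F t z) := by
  have hF0 : F 0 z = z := (hgen z hz).1
  -- derivative of s ↦ F (t+s) z at 0 within Ici 0
  have h1 : HasDerivWithinAt (fun s : ℝ => F (t + s) z) (-(f (F t z))) (Set.Ici 0) 0 := by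
    have hu : HasDerivWithinAt (fun s : ℝ => F s z) (-(f (F t z))) (Set.Ici 0) (t + 0) := by
      rw [add_zero]; exact (hgen z hz).2 t ht
    have haff : HasDerivWithinAt (fun s : ℝ => t + s) 1 (Set.Ici 0) 0 :=
      ((hasDerivAt_id (0:ℝ)).const_add t).hasDerivWithinAt
    have := HasDerivWithinAt.scomp (0:ℝ) hu haff
      (fun s (hs : s ∈ Set.Ici (0:ℝ)) => by
        simp only [Set.mem_Ici] at hs ⊢; linarith)
    simpa [Function.comp_def] using this
  -- derivative of s ↦ F t (F s z) at 0 within Ici 0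
  have h2 : HasDerivWithinAt (fun s : ℝ => F t (F s z))
      (deriv (F t) z * (-(f z))) (Set.Ici 0) 0 := by
    have hu : HasDerivWithinAt (fun s : ℝ => F s z) (-(f z)) (Set.Ici 0) 0 := by
      have := (hgen z hz).2 0 (le_refl _)
      rwa [hF0] at this
    have hFt : HasDerivAt (F t) (deriv (F t) z) z :=
      ((hS.holo t ht).differentiableAt (isOpen_unitDisk.mem_nhds hz)).hasDerivAt
    have := HasDerivAt.comp_hasDerivWithinAt_of_eq 0 hFt hu (by rw [hF0])
    exact this
  -- the two functions agree on Ici 0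
  have heq : Set.EqOn (fun s : ℝ => F (t + s) z) (fun s : ℝ => F t (F s z)) (Set.Ici 0) :=
    fun s hs => hS.comp s hs t ht z hz
  have h1' : HasDerivWithinAt (fun s : ℝ => F t (F s z)) (-(f (F t z))) (Set.Ici 0) 0 := by
    apply h1.congr heq.symm
    exact (heq Set.self_mem_Ici).symm
  have huniq : UniqueDiffWithinAt ℝ (Set.Ici (0:ℝ)) 0 :=
    uniqueDiffOn_Ici 0 0 Set.self_mem_Ici
  have := h1'.derivWithin huniq ▸ h2.derivWithin huniq
  -- so -(f (F t z)) = deriv (F t) z * (-(f z))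
  have key : -(f (F t z)) = deriv (F t) z * (-(f z)) := by
    rw [← h1'.derivWithin huniq, ← h2.derivWithin huniq]
  linear_combination key

lemma I_contOn (hS : ContSemigroupOn F) (hf : DifferentiableOn ℂ f unitDisk)
    (hgen : Generates f F) {t : ℝ} (ht : 0 ≤ t) {z : ℂ} (hz : z ∈ unitDisk) :
    ContinuousOn (fun s : ℝ => ∫ u in (0:ℝ)..s, deriv f (F u z)) (Set.Icc 0 t) := by
  have hgc := g_contOn hS hf hgen hz
  have := intervalIntegral.continuousOn_primitive_interval'
    (μ := MeasureTheory.volume) (b₁ := (0:ℝ)) (b₂ := t) (a := (0:ℝ))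
    (f := fun u => deriv f (F u z))
    (by
      apply ContinuousOn.intervalIntegrable
      apply hgc.mono
      rw [Set.uIcc_of_le ht]
      exact fun u hu => hu.1)
    (by rw [Set.uIcc_of_le ht]; exact ⟨le_refl _, ht⟩)
  rwa [Set.uIcc_of_le ht] at this

lemma second_deriv_identity (hS : ContSemigroupOn F) (hf : DifferentiableOn ℂ f unitDisk)
    (hgen : Generates f F) {t : ℝ} (ht : 0 ≤ t) {z : ℂ} (hz : z ∈ unitDisk) :
    deriv (deriv (F t)) z * f z
      = deriv (F t) z * (deriv f (F t z) - deriv f z) := by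
  have hA : AnalyticOnNhd ℂ (F t) unitDisk := (hS.holo t ht).analyticOnNhd isOpen_unitDisk
  have hfA : AnalyticOnNhd ℂ f unitDisk := hf.analyticOnNhd isOpen_unitDisk
  have hdF_diff : DifferentiableAt ℂ (deriv (F t)) z := (hA.deriv z hz).differentiableAt
  have hf_diff : DifferentiableAt ℂ f z :=
    hf.differentiableAt (isOpen_unitDisk.mem_nhds hz)
  have hFt_diff : DifferentiableAt ℂ (F t) z := (hA z hz).differentiableAt
  have hfw_diff : DifferentiableAt ℂ f (F t z) :=
    hf.differentiableAt (isOpen_unitDisk.mem_nhds (hS.maps t ht hz))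
  have heq : (fun w => deriv (F t) w * f w) =ᶠ[nhds z] (fun w => f (F t w)) := by
    filter_upwards [isOpen_unitDisk.mem_nhds hz] with w hw
    exact deriv_flow_mul hS hf hgen ht hw
  have hL : deriv (fun w => deriv (F t) w * f w) z
      = deriv (deriv (F t)) z * f z + deriv (F t) z * deriv f z :=
    deriv_mul hdF_diff hf_diff
  have hR : deriv (fun w => f (F t w)) z = deriv f (F t z) * deriv (F t) z := by
    have := deriv_comp z hfw_diff hFt_diff
    simpa [Function.comp_def] using this
  have := heq.deriv_eq
  rw [hL, hR] at this
  linear_combination this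

lemma main_estimate (hS : ContSemigroupOn F) (hf : DifferentiableOn ℂ f unitDisk)
    (hgen : Generates f F) (hτ : ‖τ‖ = 1) (hnull : BoundaryNullPoint f τ)
    {β α : ℂ}
    (hβ : Tendsto (deriv f) (nhdsWithin τ unitDisk) (nhds β))
    (hα : Tendsto (deriv (deriv f)) (nhdsWithin τ unitDisk) (nhds α))
    {t : ℝ} (ht : 0 < t) {ε : ℝ} (hε : 0 < ε) (hε1 : ε ≤ 1) (hεt : ε * t ≤ 1) :
    ∃ δ > 0, ∀ z ∈ unitDisk, dist z τ < δ → f z ≠ 0 →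
      ‖deriv (deriv (F t)) z -
          Complex.exp (-(β * t)) *
            (-(α * ∫ u in (0:ℝ)..t, Complex.exp (-(β * (u:ℂ)))))‖
        ≤ ε * (4 * ‖α‖ * Real.exp ((‖β‖+1)*t) ^ 2 * t ^ 2
            + Real.exp ((‖β‖+1)*t) ^ 2 * t) := by
  set B : ℝ := Real.exp ((‖β‖+1)*t) with hBdef
  set M : ℝ := ‖β‖ + 1 with hMdef
  have hM0 : 0 ≤ M := by positivity
  -- choose δM for the M-bound on deriv f
  obtain ⟨δM, hδM0, hδM⟩ := Metric.tendsto_nhdsWithin_nhds.1 hβ 1 one_pos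
  -- choose δε ≤ δM for ε-closeness of deriv f and deriv (deriv f)
  obtain ⟨δ1, hδ10, hδ1⟩ := Metric.tendsto_nhdsWithin_nhds.1 hβ ε hε
  obtain ⟨δ2, hδ20, hδ2⟩ := Metric.tendsto_nhdsWithin_nhds.1 hα ε hε
  set δε : ℝ := min (min δ1 δ2) δM with hδεdef
  have hδε0 : 0 < δε := lt_min (lt_min hδ10 hδ20) hδM0
  have hδεM : δε ≤ δM := min_le_right _ _
  -- the M-bound for f
  have hbound : ∀ w ∈ unitDisk, dist w τ < δε → ‖f w‖ ≤ M * dist w τ := by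
    intro w hw hwd
    refine f_linear_bound hf hnull hτ hδε0 ?_ w hw hwd
    intro u hu
    have := hδM hu.1 (lt_of_lt_of_le (Metric.mem_ball.1 hu.2) hδεM)
    have h2 : ‖deriv f u - β‖ < 1 := by rwa [dist_eq_norm] at this
    calc ‖deriv f u‖ = ‖(deriv f u - β) + β‖ := by ring_nf
      _ ≤ ‖deriv f u - β‖ + ‖β‖ := norm_add_le _ _
      _ ≤ M := by rw [hMdef]; linarith
  set δ : ℝ := δε / 2 * Real.exp (-(M * t)) with hδdef
  have hδ0 : 0 < δ := by positivity
  refine ⟨δ, hδ0, ?_⟩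
  intro z hz hzd hfz
  -- the flow stays close to τ
  have hstay := flow_stay hS hgen hδε0 hM0 ht.le hbound hz hzd
  have hstay' : ∀ s ∈ Set.Icc (0:ℝ) t, F s z ∈ unitDisk ∧ dist (F s z) τ < δε := by
    intro s hs
    refine ⟨hS.maps s hs.1 hz, ?_⟩
    have h1 := hstay s hs
    have h2 : Real.exp (M * s) ≤ Real.exp (M * t) :=
      Real.exp_le_exp.2 (mul_le_mul_of_nonneg_left hs.2 hM0)
    have h3 : dist z τ * Real.exp (M * s) ≤ dist z τ * Real.exp (M * t) :=
      mul_le_mul_of_nonneg_left h2 dist_nonneg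
    have h4 : dist z τ * Real.exp (M * t) < δε / 2 * Real.exp (-(M*t)) * Real.exp (M * t) :=
      mul_lt_mul_of_pos_right hzd (Real.exp_pos _)
    have h5 : δε / 2 * Real.exp (-(M*t)) * Real.exp (M * t) = δε / 2 := by
      rw [mul_assoc, ← Real.exp_add]; simp
    linarith
  have hzmem : z ∈ unitDisk ∩ Metric.ball τ δε := by
    refine ⟨hz, Metric.mem_ball.2 (lt_of_lt_of_le hzd ?_)⟩
    calc δε / 2 * Real.exp (-(M*t)) ≤ δε / 2 * 1 := by
          apply mul_le_mul_of_nonneg_left _ (by linarith)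
          exact Real.exp_le_one_iff.2 (by nlinarith)
      _ ≤ δε := by linarith
  -- ε-closeness of deriv f along the trajectory
  have hg_close : ∀ s ∈ Set.Icc (0:ℝ) t, ‖deriv f (F s z) - β‖ ≤ ε := by
    intro s hs
    have := hδ1 (hstay' s hs).1 (lt_of_lt_of_le (hstay' s hs).2
      (le_trans (min_le_left _ _) (min_le_left _ _)))
    rw [dist_eq_norm] at this
    exact this.le
  set g : ℝ → ℂ := fun u => deriv f (F u z) with hgdef
  set I : ℝ → ℂ := fun s => ∫ u in (0:ℝ)..s, g u with hIdef
  have hgc : ContinuousOn g (Set.Ici 0) := g_contOn hS hf hgen hz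
  have hIc : ContinuousOn I (Set.Icc 0 t) := I_contOn hS hf hgen ht.le hz
  -- I s is close to β * s
  have hI_close : ∀ s ∈ Set.Icc (0:ℝ) t, ‖I s - β * s‖ ≤ ε * t := by
    intro s hs
    have hint : IntervalIntegrable g MeasureTheory.volume 0 s := by
      apply ContinuousOn.intervalIntegrable
      apply hgc.mono
      rw [Set.uIcc_of_le hs.1]
      exact fun u hu => hu.1
    have hconst : IntervalIntegrable (fun _ : ℝ => β) MeasureTheory.volume 0 s :=
      intervalIntegrable_const
    have heq : I s - β * s = ∫ u in (0:ℝ)..s, (g u - β) := by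
      rw [intervalIntegral.integral_sub hint hconst, intervalIntegral.integral_const]
      simp [Complex.real_smul]
      ring
    rw [heq]
    have hb := intervalIntegral.norm_integral_le_of_norm_le_const
      (C := ε) (f := fun u => g u - β) (a := 0) (b := s) ?_
    · calc ‖∫ u in (0:ℝ)..s, (g u - β)‖ ≤ ε * |s - 0| := hb
        _ = ε * s := by rw [sub_zero, _root_.abs_of_nonneg hs.1]
        _ ≤ ε * t := mul_le_mul_of_nonneg_left hs.2 hε.le
    · intro u hu
      rw [Set.uIoc_of_le hs.1] at hu
      exact hg_close u ⟨hu.1.le, le_trans hu.2 hs.2⟩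
  -- bounds on exponentials
  have hnormI : ∀ s ∈ Set.Icc (0:ℝ) t, ‖I s‖ ≤ (‖β‖ + 1) * t := by
    intro s hs
    calc ‖I s‖ = ‖(I s - β * s) + β * s‖ := by ring_nf
      _ ≤ ‖I s - β * s‖ + ‖β * s‖ := norm_add_le _ _
      _ ≤ ε * t + ‖β‖ * s := by
          rw [norm_mul, Complex.norm_real, Real.norm_eq_abs, _root_.abs_of_nonneg hs.1]
          exact add_le_add (hI_close s hs) le_rfl
      _ ≤ (‖β‖ + 1) * t := by nlinarith [norm_nonneg β, hs.2, hs.1]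
  have hEbound : ∀ s ∈ Set.Icc (0:ℝ) t, ‖Complex.exp (-(I s))‖ ≤ B := by
    intro s hs
    rw [Complex.norm_exp]
    apply Real.exp_le_exp.2
    calc (-(I s)).re ≤ ‖(-(I s))‖ := Complex.re_le_norm _
      _ = ‖I s‖ := by rw [norm_neg]
      _ ≤ (‖β‖+1)*t := hnormI s hs
  have hE0bound : ∀ s ∈ Set.Icc (0:ℝ) t, ‖Complex.exp (-(β * s))‖ ≤ B := by
    intro s hs
    rw [Complex.norm_exp]
    apply Real.exp_le_exp.2
    calc (-(β * s)).re ≤ ‖(-(β * s))‖ := Complex.re_le_norm _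
      _ = ‖β‖ * s := by
          rw [norm_neg, norm_mul, Complex.norm_real, Real.norm_eq_abs, _root_.abs_of_nonneg hs.1]
      _ ≤ (‖β‖+1)*t := by nlinarith [norm_nonneg β, hs.2, hs.1]
  have hEdiff : ∀ s ∈ Set.Icc (0:ℝ) t, ‖Complex.exp (-(I s)) - Complex.exp (-(β * s))‖
      ≤ 2 * B * (ε * t) := by
    intro s hs
    have hsplit : Complex.exp (-(I s)) - Complex.exp (-(β * s))
        = Complex.exp (-(β * s)) * (Complex.exp (β * s - I s) - 1) := by
      rw [mul_sub, ← Complex.exp_add, mul_one]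
      ring_nf
    rw [hsplit, norm_mul]
    have h1 : ‖Complex.exp (β * s - I s) - 1‖ ≤ 2 * ‖β * s - I s‖ := by
      apply Complex.norm_exp_sub_one_le
      calc ‖β * s - I s‖ = ‖I s - β * s‖ := by
            exact norm_sub_rev _ _
        _ ≤ ε * t := hI_close s hs
        _ ≤ 1 := hεt
    have h2 : ‖β * s - I s‖ = ‖I s - β * s‖ := norm_sub_rev _ _
    calc ‖Complex.exp (-(β * s))‖ * ‖Complex.exp (β * s - I s) - 1‖
        ≤ B * (2 * ‖I s - β * s‖) := by
          apply mul_le_mul (hE0bound s hs) (h2 ▸ h1) (norm_nonneg _)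
          positivity
      _ ≤ B * (2 * (ε * t)) := by
          apply mul_le_mul_of_nonneg_left _ (by positivity)
          nlinarith [hI_close s hs]
      _ = 2 * B * (ε * t) := by ring
  -- J integrals
  set J : ℂ := ∫ u in (0:ℝ)..t, Complex.exp (-(I u)) with hJdef
  set J₀ : ℂ := ∫ u in (0:ℝ)..t, Complex.exp (-(β * (u:ℂ))) with hJ₀def
  have hJint : IntervalIntegrable (fun u : ℝ => Complex.exp (-(I u)))
      MeasureTheory.volume 0 t := by
    apply ContinuousOn.intervalIntegrable
    rw [Set.uIcc_of_le ht.le]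
    exact Complex.continuous_exp.comp_continuousOn hIc.neg
  have hJ₀int : IntervalIntegrable (fun u : ℝ => Complex.exp (-(β * (u:ℂ))))
      MeasureTheory.volume 0 t :=
    (Complex.continuous_exp.comp
      ((continuous_const.mul Complex.continuous_ofReal).neg)).intervalIntegrable 0 t
  have hJdiff : ‖J - J₀‖ ≤ 2 * B * (ε * t) * t := by
    have heq : J - J₀ = ∫ u in (0:ℝ)..t,
        (Complex.exp (-(I u)) - Complex.exp (-(β * (u:ℂ)))) := by
      rw [hJdef, hJ₀def, intervalIntegral.integral_sub hJint hJ₀int]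
    rw [heq]
    have := intervalIntegral.norm_integral_le_of_norm_le_const
      (C := 2 * B * (ε * t))
      (f := fun u : ℝ => Complex.exp (-(I u)) - Complex.exp (-(β * (u:ℂ))))
      (a := 0) (b := t) ?_
    · calc ‖_‖ ≤ 2 * B * (ε * t) * |t - 0| := this
        _ = 2 * B * (ε * t) * t := by rw [sub_zero, _root_.abs_of_nonneg ht.le]
    · intro u hu
      rw [Set.uIoc_of_le ht.le] at hu
      exact hEdiff u ⟨hu.1.le, hu.2⟩
  have hJb : ‖J‖ ≤ B * t := by
    have := intervalIntegral.norm_integral_le_of_norm_le_const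
      (C := B) (f := fun u : ℝ => Complex.exp (-(I u))) (a := 0) (b := t) ?_
    · calc ‖J‖ ≤ B * |t - 0| := this
        _ = B * t := by rw [sub_zero, _root_.abs_of_nonneg ht.le]
    · intro u hu
      rw [Set.uIoc_of_le ht.le] at hu
      exact hEbound u ⟨hu.1.le, hu.2⟩
  have hJ₀b : ‖J₀‖ ≤ B * t := by
    have := intervalIntegral.norm_integral_le_of_norm_le_const
      (C := B) (f := fun u : ℝ => Complex.exp (-(β * (u:ℂ)))) (a := 0) (b := t) ?_
    · calc ‖J₀‖ ≤ B * |t - 0| := this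
        _ = B * t := by rw [sub_zero, _root_.abs_of_nonneg ht.le]
    · intro u hu
      rw [Set.uIoc_of_le ht.le] at hu
      exact hE0bound u ⟨hu.1.le, hu.2⟩
  -- identities
  have htmem : t ∈ Set.Icc (0:ℝ) t := ⟨ht.le, le_rfl⟩
  have hexp_t : f (F t z) = f z * Complex.exp (-(I t)) :=
    exp_I_eq hS hf hgen ht.le hz t htmem
  have hdisp : F t z - z = -(f z) * J := displacement hS hf hgen ht.le hz
  have hkey : deriv (F t) z * f z = f (F t z) := deriv_flow_mul hS hf hgen ht.le hz
  have hF' : deriv (F t) z = Complex.exp (-(I t)) := by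
    apply mul_right_cancel₀ hfz
    rw [hkey, hexp_t]; ring
  have hsecond := second_deriv_identity hS hf hgen ht.le hz
  -- the segment estimate
  have hwmem : F t z ∈ unitDisk ∩ Metric.ball τ δε :=
    ⟨(hstay' t htmem).1, Metric.mem_ball.2 (hstay' t htmem).2⟩
  have hE₁ : ‖(deriv f (F t z) - deriv f z) - α * (F t z - z)‖ ≤ ε * ‖F t z - z‖ := by
    set D : Set ℂ := unitDisk ∩ Metric.ball τ δε with hDdef
    have hDconv : Convex ℝ D := convex_unitDisk.inter (convex_ball τ δε)
    have hder : ∀ ζ ∈ D, HasDerivWithinAt (fun ζ => deriv f ζ - α * ζ)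
        (deriv (deriv f) ζ - α) D ζ := by
      intro ζ hζ
      have h1 : HasDerivAt (deriv f) (deriv (deriv f) ζ) ζ :=
        (((hf.analyticOnNhd isOpen_unitDisk).deriv ζ hζ.1).differentiableAt).hasDerivAt
      have h2 : HasDerivAt (fun ζ : ℂ => α * ζ) α ζ := by
        simpa using (hasDerivAt_id ζ).const_mul α
      exact (h1.sub h2).hasDerivWithinAt
    have hb2 : ∀ ζ ∈ D, ‖deriv (deriv f) ζ - α‖ ≤ ε := by
      intro ζ hζ
      have := hδ2 hζ.1 (lt_of_lt_of_le (Metric.mem_ball.1 hζ.2)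
        (le_trans (min_le_left _ _) (min_le_right _ _)))
      rw [dist_eq_norm] at this
      exact this.le
    have := hDconv.norm_image_sub_le_of_norm_hasDerivWithin_le hder hb2 hzmem hwmem
    calc ‖(deriv f (F t z) - deriv f z) - α * (F t z - z)‖
        = ‖(deriv f (F t z) - α * (F t z)) - (deriv f z - α * z)‖ := by ring_nf
      _ ≤ ε * ‖F t z - z‖ := this
  -- the formula for the second derivative
  have hformula : deriv (deriv (F t)) z = Complex.exp (-(I t)) *
      (-(α * J) + ((deriv f (F t z) - deriv f z) - α * (F t z - z)) / f z) := by
    apply mul_right_cancel₀ hfz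
    rw [hsecond, hF']
    have hcancel : ((deriv f (F t z) - deriv f z) - α * (F t z - z)) / f z * f z
        = (deriv f (F t z) - deriv f z) - α * (F t z - z) := div_mul_cancel₀ _ hfz
    have hinv : f z * (f z)⁻¹ = 1 := mul_inv_cancel₀ hfz
    linear_combination Complex.exp (-(I t)) * hcancel
      + Complex.exp (-(I t)) * α * hdisp
      - 2 * Complex.exp (-(I t)) *
          (deriv f (F t z) - deriv f z - α * (F t z) + α * z) * hinv
  -- norm of the error term
  have hfznorm : 0 < ‖f z‖ := norm_pos_iff.2 hfz
  have h3 : ‖((deriv f (F t z) - deriv f z) - α * (F t z - z)) / f z‖ ≤ ε * (B * t) := by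
    rw [norm_div]
    have hwz : ‖F t z - z‖ = ‖f z‖ * ‖J‖ := by rw [hdisp, norm_mul, norm_neg]
    have h4 : ‖(deriv f (F t z) - deriv f z) - α * (F t z - z)‖ ≤ ε * (‖f z‖ * ‖J‖) :=
      hwz ▸ hE₁
    calc ‖(deriv f (F t z) - deriv f z) - α * (F t z - z)‖ / ‖f z‖
        ≤ (ε * (‖f z‖ * ‖J‖)) / ‖f z‖ := by
          apply div_le_div_of_nonneg_right h4 hfznorm.le
      _ = ε * ‖J‖ := by
          rw [eq_comm, eq_div_iff hfznorm.ne']; ring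
      _ ≤ ε * (B * t) := mul_le_mul_of_nonneg_left hJb hε.le
  -- final splitting
  have hsplit : deriv (deriv (F t)) z - Complex.exp (-(β * t)) * (-(α * J₀))
      = (Complex.exp (-(I t)) - Complex.exp (-(β * t))) * (-(α * J))
        + Complex.exp (-(β * t)) * (-(α * (J - J₀)))
        + Complex.exp (-(I t)) *
            (((deriv f (F t z) - deriv f z) - α * (F t z - z)) / f z) := by
    rw [hformula]; ring
  have hβt : Complex.exp (-(β * (t:ℂ))) = Complex.exp (-(β * t)) := rfl
  have hA1 : ‖(Complex.exp (-(I t)) - Complex.exp (-(β * t))) * (-(α * J))‖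
      ≤ 2 * B * (ε * t) * (‖α‖ * (B * t)) := by
    rw [norm_mul, norm_neg, norm_mul]
    apply mul_le_mul (hEdiff t htmem) (mul_le_mul_of_nonneg_left hJb (norm_nonneg α))
      (by positivity) (by positivity)
  have hA2 : ‖Complex.exp (-(β * t)) * (-(α * (J - J₀)))‖
      ≤ B * (‖α‖ * (2 * B * (ε * t) * t)) := by
    rw [norm_mul, norm_neg, norm_mul]
    apply mul_le_mul (hE0bound t htmem) (mul_le_mul_of_nonneg_left hJdiff (norm_nonneg α))
      (by positivity) (by positivity)
  have hA3 : ‖Complex.exp (-(I t)) *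
      (((deriv f (F t z) - deriv f z) - α * (F t z - z)) / f z)‖
      ≤ B * (ε * (B * t)) := by
    rw [norm_mul]
    apply mul_le_mul (hEbound t htmem) h3 (norm_nonneg _) (by positivity)
  calc ‖deriv (deriv (F t)) z - Complex.exp (-(β * t)) * (-(α * J₀))‖
      = ‖(Complex.exp (-(I t)) - Complex.exp (-(β * t))) * (-(α * J))
        + Complex.exp (-(β * t)) * (-(α * (J - J₀)))
        + Complex.exp (-(I t)) *
            (((deriv f (F t z) - deriv f z) - α * (F t z - z)) / f z)‖ := by rw [hsplit]
    _ ≤ _ := norm_add₃_le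
    _ ≤ 2 * B * (ε * t) * (‖α‖ * (B * t)) + B * (‖α‖ * (2 * B * (ε * t) * t))
        + B * (ε * (B * t)) := by
        exact add_le_add (add_le_add hA1 hA2) hA3
    _ = ε * (4 * ‖α‖ * B ^ 2 * t ^ 2 + B ^ 2 * t) := by ring

lemma target_eq {β α : ℂ} {t : ℝ} (ht : 0 ≤ t) :
    Complex.exp (-(β * t)) *
        (-(α * ∫ u in (0:ℝ)..t, Complex.exp (-(β * (u:ℂ))))) =
      (if β = 0 then -α * (t : ℂ)
        else α / β * Complex.exp (-β * t) * (Complex.exp (-β * t) - 1)) := by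
  by_cases hβ : β = 0
  · rw [if_pos hβ, hβ]
    simp [intervalIntegral.integral_const, Complex.real_smul]
  · rw [if_neg hβ]
    have h : (∫ u in (0:ℝ)..t, Complex.exp (-(β * (u:ℂ))))
        = (Complex.exp (-β * t) - Complex.exp (-β * ((0:ℝ):ℂ))) / (-β) := by
      rw [← integral_exp_mul_complex (by simpa using hβ : (-β) ≠ 0)]
      congr 1
      ext u
      ring_nf
    rw [h]
    have h2 : Complex.exp (-(β * t)) = Complex.exp (-β * t) := by ring_nf
    rw [h2]
    rw [Complex.ofReal_zero, mul_zero, Complex.exp_zero]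
    field_simp

lemma neBot_nhdsWithin_unitDisk (hτ : ‖τ‖ = 1) :
    (nhdsWithin τ unitDisk).NeBot := by
  rw [← mem_closure_iff_nhdsWithin_neBot]
  refine mem_closure_of_tendsto tendsto_radial ?_
  filter_upwards [eventually_radial_mem hτ one_pos] with r hr
  exact hr.1

lemma dd_zero_of_id {G : ℂ → ℂ} (hG : ∀ w ∈ unitDisk, G w = w) :
    ∀ z ∈ unitDisk, deriv (deriv G) z = 0 := by
  have h1 : ∀ w ∈ unitDisk, deriv G w = 1 := by
    intro w hw
    have heq : G =ᶠ[nhds w] id :=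
      eventually_of_mem (isOpen_unitDisk.mem_nhds hw) (fun x hx => hG x hx)
    rw [heq.deriv_eq, deriv_id]
  intro z hz
  have heq : deriv G =ᶠ[nhds z] (fun _ => (1:ℂ)) :=
    eventually_of_mem (isOpen_unitDisk.mem_nhds hz) (fun x hx => h1 x hx)
  rw [heq.deriv_eq, deriv_const]

lemma tendsto_dd_zero {F : ℝ → ℂ → ℂ} {t : ℝ} {τ : ℂ}
    (hG : ∀ w ∈ unitDisk, F t w = w) {L : ℂ} (hL : L = 0) :
    Tendsto (deriv (deriv (F t))) (nhdsWithin τ unitDisk) (nhds L) := by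
  rw [hL]
  apply tendsto_const_nhds.congr'
  filter_upwards [eventually_mem_nhdsWithin] with w hw
  exact (dd_zero_of_id hG w hw).symm


/-- Remark 3(ii): the unrestricted-limit version of Theorem 1(ii). -/
theorem second_unrestricted_derivative_of_semigroup
    (F : ℝ → ℂ → ℂ) (f : ℂ → ℂ)
    (hS : ContSemigroupOn F) (hf : DifferentiableOn ℂ f unitDisk)
    (hgen : Generates f F)
    (τ : ℂ) (hτ : ‖τ‖ = 1) (hnull : BoundaryNullPoint f τ)
    (hF : ∀ t : ℝ, 0 < t → ∃ L : ℂ, Tendsto (F t) (nhdsWithin τ unitDisk) (nhds L))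
    (β α : ℂ)
    (hβ : Tendsto (deriv f) (nhdsWithin τ unitDisk) (nhds β))
    (hα : Tendsto (deriv (deriv f)) (nhdsWithin τ unitDisk) (nhds α)) :
    ∀ t : ℝ, 0 ≤ t →
      Tendsto (deriv (deriv (F t))) (nhdsWithin τ unitDisk)
        (nhds (if β = 0 then -α * (t : ℂ)
          else α / β * Complex.exp (-β * t) * (Complex.exp (-β * t) - 1))) := by
  intro t ht
  haveI : (nhdsWithin τ unitDisk).NeBot := neBot_nhdsWithin_unitDisk hτ
  rcases eq_or_lt_of_le ht with rfl | htpos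
  · -- t = 0
    apply tendsto_dd_zero (fun w hw => (hgen w hw).1)
    by_cases hβ0 : β = 0
    · rw [if_pos hβ0]; push_cast; ring
    · rw [if_neg hβ0]; push_cast; simp
  by_cases hf0 : ∀ w ∈ unitDisk, f w = 0
  · -- f ≡ 0 on the disk: the semigroup is trivial
    have hid : ∀ w ∈ unitDisk, F t w = w := by
      intro w hw
      have hconst := constant_of_has_deriv_right_zero (a := 0) (b := t)
        ((flow_contOn hgen hw).mono Set.Icc_subset_Ici_self) (f := fun s => F s w) ?_
      · have h := hconst t ⟨ht, le_refl _⟩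
        rw [(hgen w hw).1] at h
        exact h
      · intro x hx
        have := (hgen w hw).2 x hx.1
        rw [hf0 _ (hS.maps x hx.1 hw), neg_zero] at this
        exact this.mono (Set.Ici_subset_Ici.2 hx.1)
    have hdf : ∀ w ∈ unitDisk, deriv f w = 0 := by
      intro w hw
      have heq : f =ᶠ[nhds w] (fun _ => (0:ℂ)) :=
        eventually_of_mem (isOpen_unitDisk.mem_nhds hw) (fun x hx => hf0 x hx)
      rw [heq.deriv_eq, deriv_const]
    have hddf : ∀ w ∈ unitDisk, deriv (deriv f) w = 0 := by
      intro w hw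
      have heq : deriv f =ᶠ[nhds w] (fun _ => (0:ℂ)) :=
        eventually_of_mem (isOpen_unitDisk.mem_nhds hw) (fun x hx => hdf x hx)
      rw [heq.deriv_eq, deriv_const]
    have hβ0 : β = 0 := by
      refine tendsto_nhds_unique hβ ?_
      apply tendsto_const_nhds.congr'
      filter_upwards [eventually_mem_nhdsWithin] with w hw
      exact (hdf w hw).symm
    have hα0 : α = 0 := by
      refine tendsto_nhds_unique hα ?_
      apply tendsto_const_nhds.congr'
      filter_upwards [eventually_mem_nhdsWithin] with w hw
      exact (hddf w hw).symm
    apply tendsto_dd_zero hid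
    rw [if_pos hβ0, hα0]; ring
  · -- main case
    rw [Metric.tendsto_nhdsWithin_nhds]
    intro ε' hε'
    set B : ℝ := Real.exp ((‖β‖+1)*t) with hBdef
    set C : ℝ := 4 * ‖α‖ * B ^ 2 * t ^ 2 + B ^ 2 * t with hCdef
    have hC0 : 0 ≤ C := by positivity
    set ε : ℝ := min (min 1 (1/t)) (ε'/(2*(C+1))) with hεdef
    have hε0 : 0 < ε := lt_min (lt_min one_pos (by positivity)) (by positivity)
    have hε1 : ε ≤ 1 := le_trans (min_le_left _ _) (min_le_left _ _)
    have hεt : ε * t ≤ 1 := by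
      have h1 : ε ≤ 1/t := le_trans (min_le_left _ _) (min_le_right _ _)
      calc ε * t ≤ (1/t) * t := mul_le_mul_of_nonneg_right h1 htpos.le
        _ = 1 := by field_simp
    have hεC : ε * C < ε' := by
      have h1 : ε ≤ ε'/(2*(C+1)) := min_le_right _ _
      have h2 : ε * C ≤ ε'/(2*(C+1)) * C := mul_le_mul_of_nonneg_right h1 hC0
      have h3 : ε'/(2*(C+1)) * C < ε' := by
        rw [div_mul_eq_mul_div, div_lt_iff₀ (by positivity)]
        nlinarith [mul_nonneg hε'.le hC0]
      exact lt_of_le_of_lt h2 h3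
    obtain ⟨δ, hδ0, hδ⟩ := main_estimate hS hf hgen hτ hnull hβ hα htpos hε0 hε1 hεt
    refine ⟨δ, hδ0, ?_⟩
    intro z hz hzd
    -- extend the estimate over possible zeros of f by continuity
    have hext : ∀ w ∈ unitDisk, dist w τ < δ →
        ‖deriv (deriv (F t)) w -
          Complex.exp (-(β * t)) *
            (-(α * ∫ u in (0:ℝ)..t, Complex.exp (-(β * (u:ℂ)))))‖ ≤ ε * C := by
      intro w hw hwd
      by_cases hfw : f w = 0
      · -- w is an isolated zero of f
        have hw_an : AnalyticAt ℂ f w := (hf.analyticOnNhd isOpen_unitDisk) w hw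
        rcases hw_an.eventually_eq_zero_or_eventually_ne_zero with hcase | hne
        · exfalso
          apply hf0
          intro x hx
          exact (hf.analyticOnNhd isOpen_unitDisk).eqOn_zero_of_preconnected_of_eventuallyEq_zero
            convex_unitDisk.isPreconnected hw hcase hx
        · have hcont : ContinuousAt (deriv (deriv (F t))) w :=
            ((((hS.holo t ht).analyticOnNhd isOpen_unitDisk).deriv.deriv) w hw).continuousAt
          have hlim : Tendsto (fun x => ‖deriv (deriv (F t)) x -
              Complex.exp (-(β * t)) *
                (-(α * ∫ u in (0:ℝ)..t, Complex.exp (-(β * (u:ℂ)))))‖)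
              (nhdsWithin w {w}ᶜ)
              (nhds ‖deriv (deriv (F t)) w -
                Complex.exp (-(β * t)) *
                  (-(α * ∫ u in (0:ℝ)..t, Complex.exp (-(β * (u:ℂ)))))‖) :=
            (((hcont.tendsto.mono_left nhdsWithin_le_nhds).sub tendsto_const_nhds).norm)
          refine le_of_tendsto hlim ?_
          have hUmem : ∀ᶠ x in nhdsWithin w {w}ᶜ, x ∈ unitDisk ∩ Metric.ball τ δ := by
            apply eventually_nhdsWithin_of_eventually_nhds
            apply eventually_of_mem
              ((isOpen_unitDisk.inter Metric.isOpen_ball).mem_nhds ⟨hw, Metric.mem_ball.2 hwd⟩)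
            exact fun x hx => hx
          filter_upwards [hne, hUmem] with x hxne hxU
          exact hδ x hxU.1 (Metric.mem_ball.1 hxU.2) hxne
      · exact hδ w hw hwd hfw
    have := hext z hz hzd
    rw [dist_eq_norm, ← target_eq (β := β) (α := α) ht]
    calc ‖deriv (deriv (F t)) z - _‖ ≤ ε * C := this
      _ < ε' := hεC
end
end

section
/- Let S₁ = {F_t}_{t≥0} and S₂ = {G_t}_{t≥0} be one-parameter continuous semigroups on Δ generated by holomorphic functions f and g respectively, and suppose F₁(G₁(z)) = G₁(F₁(z)) for all z ∈ Δ. Suppose f has an interior null point τ ∈ Δ (f(τ) = 0), and that there exist t₁ > 0 and t₂ > 0 such that F_{t₁} is not an automorphism of Δ and G_{t₂} is not an automorphism of Δ. Then the semigroups commute: F_t(G_s(z)) = G_s(F_t(z)) for all s, t ≥ 0 and z ∈ Δ. -/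
open Complex Filter Set

noncomputable section

open Metric Topology

local notation "𝔻" => Metric.ball (0:ℂ) 1

lemma unitDisk_eq : unitDisk = 𝔻 := by
  ext z
  simp [unitDisk, Complex.dist_eq]

/-- Factor out a zero at the origin. -/
lemma factor_zero (W : ℂ → ℂ) (hW : DifferentiableOn ℂ W 𝔻) (h0 : W 0 = 0) :
    ∃ R : ℂ → ℂ, DifferentiableOn ℂ R 𝔻 ∧ (∀ z : ℂ, W z = z * R z) ∧ R 0 = deriv W 0 := by
  set g : ℂ → ℂ := fun z => W z / z with hg
  have h0mem : (0:ℂ) ∈ 𝔻 := by simp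
  have hWat : HasDerivAt W (deriv W 0) 0 :=
    ((hW.differentiableAt (isOpen_ball.mem_nhds h0mem))).hasDerivAt
  have hslope : Tendsto g (𝓝[≠] (0:ℂ)) (𝓝 (deriv W 0)) := by
    have := hasDerivAt_iff_tendsto_slope.1 hWat
    refine this.congr' ?_
    filter_upwards [self_mem_nhdsWithin] with z hz
    simp [slope_def_field, g, h0]
  set R : ℂ → ℂ := Function.update g 0 (deriv W 0) with hR
  have hRo : ∀ z : ℂ, z ≠ 0 → R z = g z := fun z hz => Function.update_of_ne hz _ _
  have hgd : DifferentiableOn ℂ g (𝔻 \ {0}) := by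
    apply DifferentiableOn.div (hW.mono diff_subset) differentiableOn_id
    exact fun z hz => hz.2
  refine ⟨R, ?_, ?_, Function.update_self _ _ _⟩
  · intro z hz
    rcases eq_or_ne z 0 with rfl | hzne
    · -- differentiability at 0 via removable singularity
      have hb : ∀ᶠ w in 𝓝[≠] (0:ℂ), ‖g w‖ ≤ ‖deriv W 0‖ + 1 := by
        have := hslope.norm
        exact this.eventually_le_const (by linarith [norm_nonneg (deriv W 0)] : ‖deriv W 0‖ < ‖deriv W 0‖ + 1)
      have hb' := eventually_nhdsWithin_iff.1 hb
      obtain ⟨s, hs_cond, hs_open, hs_mem⟩ := _root_.eventually_nhds_iff.1 hb'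
      have hsD : s ∩ 𝔻 ∈ 𝓝 (0:ℂ) :=
        inter_mem (hs_open.mem_nhds hs_mem) (isOpen_ball.mem_nhds h0mem)
      have hdiff : DifferentiableOn ℂ g ((s ∩ 𝔻) \ {0}) :=
        hgd.mono (fun w hw => ⟨hw.1.2, hw.2⟩)
      have hbdd : BddAbove (norm ∘ g '' ((s ∩ 𝔻) \ {0})) := by
        refine ⟨‖deriv W 0‖ + 1, ?_⟩
        rintro x ⟨w, hw, rfl⟩
        exact hs_cond w hw.1.1 hw.2
      have := Complex.differentiableOn_update_limUnder_of_bddAbove hsD hdiff hbdd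
      have hlim : limUnder (𝓝[≠] (0:ℂ)) g = deriv W 0 := hslope.limUnder_eq
      rw [hlim] at this
      exact ((this 0 (mem_of_mem_nhds hsD)).differentiableAt hsD).differentiableWithinAt
    · have : DifferentiableAt ℂ g z := by
        have hopen : IsOpen (𝔻 \ {0}) := isOpen_ball.sdiff isClosed_singleton
        exact hgd.differentiableAt (hopen.mem_nhds ⟨hz, hzne⟩)
      refine (this.congr_of_eventuallyEq ?_).differentiableWithinAt
      filter_upwards [isOpen_ne.mem_nhds hzne] with w hw
      exact (hRo w hw)
  · intro z
    rcases eq_or_ne z 0 with rfl | hz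
    · simp [h0]
    · rw [hRo z hz]
      show W z = z * (W z / z)
      field_simp

lemma factor_norm_le (W R : ℂ → ℂ) (hR : DifferentiableOn ℂ R 𝔻)
    (hWR : ∀ z : ℂ, W z = z * R z) (hW1 : ∀ z ∈ 𝔻, ‖W z‖ ≤ 1) :
    ∀ z ∈ 𝔻, ‖R z‖ ≤ 1 := by
  intro z hz
  rw [mem_ball_zero_iff] at hz
  have key : ∀ r : ℝ, ‖z‖ < r → r < 1 → ‖R z‖ ≤ 1 / r := by
    intro r hzr hr1
    have hr0 : 0 < r := lt_of_le_of_lt (norm_nonneg z) hzr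
    have hsub : closedBall (0:ℂ) r ⊆ 𝔻 := closedBall_subset_ball hr1
    have hdc : DiffContOnCl ℂ R (ball (0:ℂ) r) := by
      refine ⟨hR.mono (ball_subset_ball hr1.le), ?_⟩
      rw [closure_ball (0:ℂ) hr0.ne']
      exact (hR.continuousOn).mono hsub
    have hfr : ∀ w ∈ frontier (ball (0:ℂ) r), ‖R w‖ ≤ 1 / r := by
      intro w hw
      rw [frontier_ball (0:ℂ) hr0.ne'] at hw
      have hwn : ‖w‖ = r := by simpa [Complex.dist_eq] using hw
      have hwD : w ∈ 𝔻 := by rw [mem_ball_zero_iff, hwn]; exact hr1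
      have h1 : ‖W w‖ = r * ‖R w‖ := by rw [hWR w, norm_mul, hwn]
      have h2 := hW1 w hwD
      rw [h1] at h2
      rw [le_div_iff₀ hr0]
      linarith
    have hzc : z ∈ closure (ball (0:ℂ) r) := by
      rw [closure_ball (0:ℂ) hr0.ne']
      exact mem_closedBall_zero_iff.2 hzr.le
    exact Complex.norm_le_of_forall_mem_frontier_norm_le isBounded_ball hdc hfr hzc
  -- let r → 1⁻
  have hev : ∀ᶠ r in 𝓝[<] (1:ℝ), ‖R z‖ ≤ 1 / r := by
    filter_upwards [Ioo_mem_nhdsLT hz] with r hr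
    exact key r hr.1 hr.2
  have hlim : Tendsto (fun r : ℝ => 1 / r) (𝓝[<] (1:ℝ)) (𝓝 1) := by
    have : Tendsto (fun r : ℝ => 1 / r) (𝓝 (1:ℝ)) (𝓝 (1/1)) :=
      (continuousAt_const.div continuousAt_id one_ne_zero)
    simpa using this.mono_left nhdsWithin_le_nhds
  exact ge_of_tendsto hlim hev

lemma const_of_norm_eq_one (R : ℂ → ℂ) (hR : DifferentiableOn ℂ R 𝔻)
    (hb : ∀ z ∈ 𝔻, ‖R z‖ ≤ 1) {z₀ : ℂ} (hz₀ : z₀ ∈ 𝔻)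
    (h1 : ‖R z₀‖ = 1) : ∀ z ∈ 𝔻, R z = R z₀ := by
  have hmax : IsMaxOn (norm ∘ R) 𝔻 z₀ := by
    intro w hw
    simp only [Function.comp]
    rw [h1] at *
    exact le_trans (hb w hw) (le_of_eq h1.symm)
  have := Complex.eqOn_of_isPreconnected_of_isMaxOn_norm
    (convex_ball (0:ℂ) 1).isPreconnected isOpen_ball hR hz₀ hmax
  exact fun z hz => this hz

lemma selfmap_factor (φ : ℂ → ℂ) (hd : DifferentiableOn ℂ φ 𝔻) (hm : MapsTo φ 𝔻 𝔻)
    (h0 : φ 0 = 0) :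
    ∃ u : ℂ → ℂ, DifferentiableOn ℂ u 𝔻 ∧ (∀ z : ℂ, φ z = z * u z) ∧ u 0 = deriv φ 0 ∧
      ∀ z ∈ 𝔻, ‖u z‖ ≤ 1 := by
  obtain ⟨u, hud, huf, hu0⟩ := factor_zero φ hd h0
  exact ⟨u, hud, huf, hu0,
    factor_norm_le φ u hud huf (fun z hz => (mem_ball_zero_iff.1 (hm hz)).le)⟩

lemma selfmap_deriv_norm_le (φ : ℂ → ℂ) (hd : DifferentiableOn ℂ φ 𝔻) (hm : MapsTo φ 𝔻 𝔻)
    (h0 : φ 0 = 0) : ‖deriv φ 0‖ ≤ 1 := by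
  obtain ⟨u, hud, huf, hu0, hub⟩ := selfmap_factor φ hd hm h0
  rw [← hu0]
  exact hub 0 (by simp)

lemma selfmap_rot (φ : ℂ → ℂ) (hd : DifferentiableOn ℂ φ 𝔻) (hm : MapsTo φ 𝔻 𝔻)
    (h0 : φ 0 = 0) (h1 : ‖deriv φ 0‖ = 1) :
    ∃ c : ℂ, ‖c‖ = 1 ∧ ∀ z ∈ 𝔻, φ z = c * z := by
  obtain ⟨u, hud, huf, hu0, hub⟩ := selfmap_factor φ hd hm h0
  have h0mem : (0:ℂ) ∈ 𝔻 := by simp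
  have hconst := const_of_norm_eq_one u hud hub h0mem (by rw [hu0]; exact h1)
  refine ⟨u 0, by rw [hu0]; exact h1, fun z hz => ?_⟩
  rw [huf z, hconst z hz, mul_comm]

lemma selfmap_fix' (φ : ℂ → ℂ) (hd : DifferentiableOn ℂ φ 𝔻) (hm : MapsTo φ 𝔻 𝔻)
    (h0 : φ 0 = 0) {w : ℂ} (hw : w ∈ 𝔻) (hfix : φ w = w) (hwne : w ≠ 0) :
    ∀ z ∈ 𝔻, φ z = z := by
  obtain ⟨u, hud, huf, hu0, hub⟩ := selfmap_factor φ hd hm h0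
  have huw : u w = 1 := by
    have := huf w
    rw [hfix] at this
    have : w * 1 = w * u w := by rw [mul_one]; exact this
    exact (mul_left_cancel₀ hwne this).symm
  have hconst := const_of_norm_eq_one u hud hub hw (by rw [huw]; simp)
  intro z hz
  rw [huf z, hconst z hz, huw, mul_one]

lemma selfmap_fix (φ : ℂ → ℂ) (hd : DifferentiableOn ℂ φ 𝔻) (hm : MapsTo φ 𝔻 𝔻)
    (h0 : φ 0 = 0) (h1 : ‖deriv φ 0‖ < 1) {w : ℂ} (hw : w ∈ 𝔻) (hfix : φ w = w) :
    w = 0 := by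
  by_contra hwne
  have hid := selfmap_fix' φ hd hm h0 hw hfix hwne
  have : deriv φ 0 = 1 := by
    have hev : φ =ᶠ[𝓝 (0:ℂ)] id := by
      filter_upwards [isOpen_ball.mem_nhds (by simp : (0:ℂ) ∈ 𝔻)] with z hz
      exact hid z hz
    rw [hev.deriv_eq, deriv_id]
  rw [this] at h1
  simp at h1

lemma selfmap_sq (φ : ℂ → ℂ) (hd : DifferentiableOn ℂ φ 𝔻) (hm : MapsTo φ 𝔻 𝔻)
    (h0 : φ 0 = 0) (h1 : deriv φ 0 = 0) : ∀ z ∈ 𝔻, ‖φ z‖ ≤ ‖z‖ ^ 2 := by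
  obtain ⟨u, hud, huf, hu0, hub⟩ := selfmap_factor φ hd hm h0
  obtain ⟨u₂, hu₂d, hu₂f, hu₂0⟩ := factor_zero u hud (by rw [hu0, h1])
  have hu₂b := factor_norm_le u u₂ hu₂d hu₂f hub
  intro z hz
  rw [huf z, hu₂f z, norm_mul, norm_mul]
  calc ‖z‖ * (‖z‖ * ‖u₂ z‖) ≤ ‖z‖ * (‖z‖ * 1) := by
        apply mul_le_mul_of_nonneg_left (mul_le_mul_of_nonneg_left (hu₂b z hz) (norm_nonneg z)) (norm_nonneg z)
    _ = ‖z‖ ^ 2 := by ring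

lemma koenigs (φ : ℂ → ℂ) (hd : DifferentiableOn ℂ φ 𝔻) (hm : MapsTo φ 𝔻 𝔻) (h0 : φ 0 = 0)
    (hlam0 : deriv φ 0 ≠ 0) (hlam1 : ‖deriv φ 0‖ < 1) :
    ∃ h : ℂ → ℂ, DifferentiableOn ℂ h 𝔻 ∧ h 0 = 0 ∧ deriv h 0 = 1 ∧
      (∀ z ∈ 𝔻, h (φ z) = deriv φ 0 * h z) ∧
      (∀ H : ℂ → ℂ, DifferentiableOn ℂ H 𝔻 → H 0 = 0 →
        (∀ z ∈ 𝔻, H (φ z) = deriv φ 0 * H z) →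
        ∀ z ∈ 𝔻, H z = deriv H 0 * h z) := by
  have h0mem : (0:ℂ) ∈ 𝔻 := by simp
  set lam : ℂ := deriv φ 0 with hlam
  have hlampos : (0:ℝ) < ‖lam‖ := norm_pos_iff.2 hlam0
  -- the Schwarz factor u
  obtain ⟨uu, hud, huf, hu0, hub⟩ :
      ∃ u : ℂ → ℂ, DifferentiableOn ℂ u 𝔻 ∧ (∀ z : ℂ, φ z = z * u z) ∧ u 0 = lam ∧
        ∀ z ∈ 𝔻, ‖u z‖ ≤ 1 := by
    obtain ⟨u, h1, h2, h3⟩ := factor_zero φ hd h0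
    exact ⟨u, h1, h2, h3,
      factor_norm_le φ u h1 h2 (fun z hz => (mem_ball_zero_iff.1 (hm hz)).le)⟩
  have hstrict : ∀ z ∈ 𝔻, ‖uu z‖ < 1 := by
    intro z hz
    rcases lt_or_eq_of_le (hub z hz) with h | h
    · exact h
    · exfalso
      have := const_of_norm_eq_one uu hud hub hz h
      have h00 := this 0 h0mem
      rw [hu0] at h00
      rw [← h00] at h
      exact absurd h (ne_of_lt hlam1)
  -- iterates
  have hiter_maps : ∀ n : ℕ, MapsTo (φ^[n]) 𝔻 𝔻 := fun n => hm.iterate n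
  have hiter_diff : ∀ n : ℕ, DifferentiableOn ℂ (φ^[n]) 𝔻 := by
    intro n
    induction n with
    | zero => simpa using differentiableOn_id
    | succ n ih =>
        rw [Function.iterate_succ']
        exact hd.comp ih (hiter_maps n)
  have hiter0 : ∀ n : ℕ, φ^[n] 0 = 0 := fun n => Function.iterate_fixed h0 n
  have hdiffat : ∀ n : ℕ, DifferentiableAt ℂ (φ^[n]) 0 :=
    fun n => (hiter_diff n).differentiableAt (isOpen_ball.mem_nhds h0mem)
  have hiter_deriv : ∀ n : ℕ, deriv (φ^[n]) 0 = lam ^ n := by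
    intro n
    induction n with
    | zero => simp
    | succ n ih =>
        rw [Function.iterate_succ']
        rw [deriv_comp 0 (by rw [hiter0 n] at *; exact hd.differentiableAt (isOpen_ball.mem_nhds h0mem)) (hdiffat n)]
        rw [hiter0 n, ih, ← hlam, pow_succ]
        ring
  -- packaged contraction estimates at radius r
  have hr_pack : ∀ r : ℝ, 0 < r → r < 1 → ∃ kk C K : ℝ, 0 ≤ kk ∧ kk < 1 ∧ 0 ≤ C ∧ 1 ≤ K ∧
      (∀ w ∈ closedBall (0:ℂ) r, ‖uu w - lam‖ ≤ C * ‖w‖) ∧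
      (∀ n : ℕ, ∀ z ∈ closedBall (0:ℂ) r, (φ^[n] z ∈ closedBall (0:ℂ) r) ∧
        ‖φ^[n] z‖ ≤ kk ^ n * ‖z‖ ∧ ‖φ^[n] z‖ ≤ K * ‖lam‖ ^ n * ‖z‖) := by
    intro r hr0 hr1
    have hsub : closedBall (0:ℂ) r ⊆ 𝔻 := closedBall_subset_ball hr1
    have hne : (closedBall (0:ℂ) r).Nonempty := ⟨0, by simp [hr0.le]⟩
    obtain ⟨w₀, hw₀mem, hw₀max⟩ := (isCompact_closedBall (0:ℂ) r).exists_isMaxOn hne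
      ((hud.continuousOn.mono hsub).norm)
    set kk : ℝ := ‖uu w₀‖ with hkkdef
    have hkk0 : 0 ≤ kk := norm_nonneg _
    have hkk1 : kk < 1 := hstrict w₀ (hsub hw₀mem)
    have hkkb : ∀ w ∈ closedBall (0:ℂ) r, ‖uu w‖ ≤ kk := fun w hw => hw₀max hw
    -- the C bound
    obtain ⟨vv, hvd, hvf, -⟩ := factor_zero (fun z => uu z - lam) (hud.sub_const lam)
      (by simp [hu0])
    obtain ⟨w₁, hw₁mem, hw₁max⟩ := (isCompact_closedBall (0:ℂ) r).exists_isMaxOn hne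
      ((hvd.continuousOn.mono hsub).norm)
    set C : ℝ := ‖vv w₁‖ with hCdef
    have hC0 : 0 ≤ C := norm_nonneg _
    have hCb : ∀ w ∈ closedBall (0:ℂ) r, ‖uu w - lam‖ ≤ C * ‖w‖ := by
      intro w hw
      have := hvf w
      rw [this, norm_mul, mul_comm]
      exact mul_le_mul_of_nonneg_right (hw₁max hw) (norm_nonneg w)
    set a : ℝ := C * r / ‖lam‖ with hadef
    have ha0 : 0 ≤ a := div_nonneg (mul_nonneg hC0 hr0.le) (norm_nonneg _)
    set K : ℝ := Real.exp (a / (1 - kk)) with hKdef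
    have hK1 : 1 ≤ K := Real.one_le_exp (div_nonneg ha0 (by linarith))
    -- partial products
    set P : ℕ → ℝ := fun n => ∏ j ∈ Finset.range n, (1 + a * kk ^ j) with hPdef
    have hP0 : ∀ n, 1 ≤ P n := by
      intro n
      show (1:ℝ) ≤ ∏ j ∈ Finset.range n, (1 + a * kk ^ j)
      have h := Finset.prod_le_prod (s := Finset.range n) (f := fun _ => (1:ℝ))
        (g := fun j => 1 + a * kk ^ j) (fun j _ => zero_le_one)
        (fun j _ => by show (1:ℝ) ≤ 1 + a * kk ^ j; nlinarith [pow_nonneg hkk0 j])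
      simpa using h
    have hPK : ∀ n, P n ≤ K := by
      intro n
      have h1 : P n ≤ ∏ j ∈ Finset.range n, Real.exp (a * kk ^ j) := by
        apply Finset.prod_le_prod
        · intro j _; nlinarith [pow_nonneg hkk0 j]
        · intro j _
          have := Real.add_one_le_exp (a * kk ^ j)
          linarith
      rw [← Real.exp_sum] at h1
      refine h1.trans (Real.exp_le_exp.2 ?_)
      rw [← Finset.mul_sum]
      have hgeom : ∑ j ∈ Finset.range n, kk ^ j ≤ 1 / (1 - kk) := by
        have heq : (kk ^ n - 1)/(kk - 1) = (1 - kk ^ n)/(1 - kk) := by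
          rw [div_eq_div_iff (by linarith) (by linarith)]
          ring
        rw [geom_sum_eq (by linarith : kk ≠ 1), heq,
          div_le_div_iff₀ (by linarith) (by linarith)]
        nlinarith [pow_nonneg hkk0 n]
      calc a * ∑ j ∈ Finset.range n, kk ^ j ≤ a * (1 / (1 - kk)) :=
            mul_le_mul_of_nonneg_left hgeom ha0
        _ = a / (1 - kk) := by ring
    -- main induction
    have main : ∀ n : ℕ, ∀ z ∈ closedBall (0:ℂ) r, (φ^[n] z ∈ closedBall (0:ℂ) r) ∧
        ‖φ^[n] z‖ ≤ kk ^ n * ‖z‖ ∧ ‖φ^[n] z‖ ≤ ‖lam‖ ^ n * ‖z‖ * P n := by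
      intro n
      induction n with
      | zero => intro z hz; simpa [hPdef] using hz
      | succ n ih =>
          intro z hz
          obtain ⟨hwmem, hwk, hwp⟩ := ih z hz
          set w : ℂ := φ^[n] z with hwdef
          have hznorm : ‖z‖ ≤ r := mem_closedBall_zero_iff.1 hz
          have hiter : φ^[n+1] z = φ w := Function.iterate_succ_apply' φ n z
          have hnorm : ‖φ w‖ = ‖w‖ * ‖uu w‖ := by rw [huf w, norm_mul]
          have hkkn : (0:ℝ) ≤ kk ^ n := pow_nonneg hkk0 n
      -- (i) and (ii)
          have h2 : ‖φ w‖ ≤ kk ^ (n+1) * ‖z‖ := by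
            rw [hnorm, pow_succ]
            calc ‖w‖ * ‖uu w‖ ≤ (kk ^ n * ‖z‖) * kk :=
                  mul_le_mul hwk (hkkb w hwmem) (norm_nonneg _) (by positivity)
              _ = kk ^ n * kk * ‖z‖ := by ring
          have h1 : φ w ∈ closedBall (0:ℂ) r := by
            rw [mem_closedBall_zero_iff]
            calc ‖φ w‖ ≤ kk ^ (n+1) * ‖z‖ := h2
              _ ≤ 1 * r := by
                  apply mul_le_mul (pow_le_one₀ hkk0 hkk1.le) hznorm (norm_nonneg _) zero_le_one
              _ = r := one_mul r
          -- (iii)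
          have h3 : ‖φ w‖ ≤ ‖lam‖ ^ (n+1) * ‖z‖ * P (n+1) := by
            have hu_est : ‖uu w‖ ≤ ‖lam‖ * (1 + a * kk ^ n) := by
              have e1 : ‖uu w‖ ≤ ‖lam‖ + C * ‖w‖ := by
                calc ‖uu w‖ = ‖lam + (uu w - lam)‖ := by ring_nf
                  _ ≤ ‖lam‖ + ‖uu w - lam‖ := norm_add_le _ _
                  _ ≤ ‖lam‖ + C * ‖w‖ := by linarith [hCb w hwmem]
              have e2 : C * ‖w‖ ≤ C * (kk ^ n * r) := by
                apply mul_le_mul_of_nonneg_left _ hC0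
                calc ‖w‖ ≤ kk ^ n * ‖z‖ := hwk
                  _ ≤ kk ^ n * r := mul_le_mul_of_nonneg_left hznorm hkkn
              have e3 : ‖lam‖ * a = C * r := by
                rw [hadef, mul_comm, div_mul_cancel₀ _ (ne_of_gt hlampos)]
              have e4 : ‖lam‖ * (1 + a * kk ^ n) = ‖lam‖ + ‖lam‖ * a * kk ^ n := by ring
              rw [e4, e3]
              nlinarith
            rw [hnorm]
            have hP1 : P (n+1) = P n * (1 + a * kk ^ n) := Finset.prod_range_succ _ _
            calc ‖w‖ * ‖uu w‖ ≤ (‖lam‖ ^ n * ‖z‖ * P n) * (‖lam‖ * (1 + a * kk ^ n)) := by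
                  apply mul_le_mul hwp hu_est (norm_nonneg _)
                  positivity
              _ = ‖lam‖ ^ (n+1) * ‖z‖ * P (n+1) := by rw [hP1, pow_succ]; ring
          rw [hiter]
          exact ⟨h1, h2, h3⟩

    refine ⟨kk, C, K, hkk0, hkk1, hC0, hK1, hCb, fun n z hz => ?_⟩
    obtain ⟨m1, m2, m3⟩ := main n z hz
    refine ⟨m1, m2, m3.trans ?_⟩
    calc ‖lam‖ ^ n * ‖z‖ * P n ≤ ‖lam‖ ^ n * ‖z‖ * K := by
          apply mul_le_mul_of_nonneg_left (hPK n) (by positivity)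
      _ = K * ‖lam‖ ^ n * ‖z‖ := by ring
  -- the approximating sequence
  set hn : ℕ → ℂ → ℂ := fun n z => φ^[n] z / lam ^ n with hhn
  have hdiff_id : ∀ (n : ℕ) (z : ℂ), hn (n+1) z - hn n z
      = (φ^[n] z * (uu (φ^[n] z) - lam)) / lam ^ (n+1) := by
    intro n z
    have hit : φ^[n+1] z = φ^[n] z * uu (φ^[n] z) := by
      rw [Function.iterate_succ_apply' φ n z, huf]
    show φ^[n+1] z / lam ^ (n+1) - φ^[n] z / lam ^ n = _
    rw [hit, pow_succ]
    have h1 : lam ^ n ≠ 0 := pow_ne_zero n hlam0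
    field_simp
  set hlim : ℂ → ℂ := fun z => z + ∑' n : ℕ, (hn (n+1) z - hn n z) with hhlim
  have huc : ∀ r : ℝ, 0 < r → r < 1 →
      TendstoUniformlyOn hn hlim atTop (closedBall (0:ℂ) r) := by
    intro r hr0 hr1
    obtain ⟨kk, C, K, hkk0, hkk1, hC0, hK1, hCb, hpack⟩ := hr_pack r hr0 hr1
    set A : ℝ := K * C * r ^ 2 / ‖lam‖ with hA
    have hbound : ∀ (n : ℕ) (z : ℂ), z ∈ closedBall (0:ℂ) r →
        ‖hn (n+1) z - hn n z‖ ≤ A * kk ^ n := by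
      intro n z hz
      obtain ⟨hmem, hk, hKb⟩ := hpack n z hz
      have hzr : ‖z‖ ≤ r := mem_closedBall_zero_iff.1 hz
      have hwK : ‖φ^[n] z‖ ≤ K * ‖lam‖ ^ n * r := by
        refine hKb.trans ?_
        have hKn : (0:ℝ) ≤ K * ‖lam‖ ^ n :=
          mul_nonneg (by linarith) (pow_nonneg (norm_nonneg _) n)
        exact mul_le_mul_of_nonneg_left hzr hKn
      have hkkn : (0:ℝ) ≤ kk ^ n := pow_nonneg hkk0 n
      have huw : ‖uu (φ^[n] z) - lam‖ ≤ C * kk ^ n * r := by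
        refine (hCb _ hmem).trans ?_
        calc C * ‖φ^[n] z‖ ≤ C * (kk ^ n * ‖z‖) := mul_le_mul_of_nonneg_left hk hC0
          _ ≤ C * (kk ^ n * r) :=
              mul_le_mul_of_nonneg_left (mul_le_mul_of_nonneg_left hzr hkkn) hC0
          _ = C * kk ^ n * r := by ring
      rw [hdiff_id n z, norm_div, norm_mul, norm_pow]
      have step : ‖φ^[n] z‖ * ‖uu (φ^[n] z) - lam‖ / ‖lam‖ ^ (n+1)
          ≤ (K * ‖lam‖ ^ n * r) * (C * kk ^ n * r) / ‖lam‖ ^ (n+1) := by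
        gcongr
        all_goals first | exact hwK | exact huw | exact norm_nonneg _ | positivity
      refine step.trans (le_of_eq ?_)
      have hLne : (‖lam‖:ℝ) ≠ 0 := ne_of_gt hlampos
      rw [div_eq_iff (pow_ne_zero (n+1) hLne), hA, div_mul_eq_mul_div,
        div_mul_eq_mul_div, eq_div_iff hLne, pow_succ]
      ring
    have hsummable : Summable (fun n : ℕ => A * kk ^ n) :=
      (summable_geometric_of_lt_one hkk0 hkk1).mul_left A
    have hM := tendstoUniformlyOn_tsum_nat hsummable hbound
    -- identify partial sums with hn N - hn 0
    have htel : ∀ (N : ℕ) (z : ℂ), ∑ n ∈ Finset.range N, (hn (n+1) z - hn n z)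
        = hn N z - z := by
      intro N z
      rw [Finset.sum_range_sub (fun n => hn n z)]
      congr 1
      show φ^[0] z / lam ^ 0 = z
      simp
    have hid : TendstoUniformlyOn (fun (_ : ℕ) (z : ℂ) => z) (fun z => z) atTop
        (closedBall (0:ℂ) r) := by
      rw [tendstoUniformlyOn_iff]
      intro ε hε
      filter_upwards [] with N z _
      simpa using hε
    have hM2 := hM.add hid
    refine (hM2.congr ?_).congr_right ?_
    · filter_upwards [] with N z hz
      simp only [Pi.add_apply]
      rw [htel N z]
      ring
    · intro z hz
      simp only [Pi.add_apply, hhlim]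
      ring
  -- locally uniform convergence on the disk
  have htlu : TendstoLocallyUniformlyOn hn hlim atTop 𝔻 := by
    rw [tendstoLocallyUniformlyOn_iff_forall_isCompact isOpen_ball]
    intro Kc hKc hKcomp
    rcases Kc.eq_empty_or_nonempty with rfl | hKne
    · rw [tendstoUniformlyOn_iff]
      intro ε hε
      filter_upwards [] with N z hz
      exact absurd hz (notMem_empty z)
    · obtain ⟨w, hwK, hwmax⟩ := hKcomp.exists_isMaxOn hKne continuous_norm.continuousOn
      have hw1 : ‖w‖ < 1 := mem_ball_zero_iff.1 (hKc hwK)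
      set r : ℝ := (‖w‖ + 1)/2 with hr
      have hr0 : 0 < r := by positivity
      have hr1 : r < 1 := by rw [hr]; linarith
      refine (huc r hr0 hr1).mono ?_
      intro z hz
      rw [mem_closedBall_zero_iff]
      calc ‖z‖ ≤ ‖w‖ := hwmax hz
        _ ≤ r := by rw [hr]; linarith
  have hdiffn : ∀ᶠ (n : ℕ) in atTop, DifferentiableOn ℂ (hn n) 𝔻 :=
    Filter.Eventually.of_forall (fun n => (hiter_diff n).div_const _)
  have hlim_diff : DifferentiableOn ℂ hlim 𝔻 := htlu.differentiableOn hdiffn isOpen_ball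
  have hlim0 : hlim 0 = 0 := by
    have h1 : Tendsto (fun n => hn n 0) atTop (𝓝 (hlim 0)) := htlu.tendsto_at h0mem
    have h2 : (fun n => hn n 0) = fun _ => (0:ℂ) := by
      funext n
      show φ^[n] 0 / lam ^ n = 0
      rw [hiter0]
      simp
    rw [h2] at h1
    exact (tendsto_nhds_unique h1 tendsto_const_nhds)
  have hlim_deriv : deriv hlim 0 = 1 := by
    have hder := htlu.deriv hdiffn isOpen_ball
    have h1 : Tendsto (fun n => deriv (hn n) 0) atTop (𝓝 (deriv hlim 0)) :=
      hder.tendsto_at h0mem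
    have h2 : (fun n => deriv (hn n) 0) = fun _ => (1:ℂ) := by
      funext n
      show deriv (fun z => φ^[n] z / lam ^ n) 0 = 1
      rw [deriv_div_const, hiter_deriv n, div_self (pow_ne_zero n hlam0)]
    rw [h2] at h1
    exact tendsto_nhds_unique h1 tendsto_const_nhds
  have heig : ∀ z ∈ 𝔻, hlim (φ z) = lam * hlim z := by
    intro z hz
    have h1 : Tendsto (fun n => hn n (φ z)) atTop (𝓝 (hlim (φ z))) := htlu.tendsto_at (hm hz)
    have h2 : ∀ n : ℕ, hn n (φ z) = lam * hn (n+1) z := by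
      intro n
      show φ^[n] (φ z) / lam ^ n = lam * (φ^[n+1] z / lam ^ (n+1))
      rw [← Function.iterate_succ_apply φ n z, pow_succ]
      have h3 : lam ^ n ≠ 0 := pow_ne_zero n hlam0
      field_simp
    have h3 : Tendsto (fun n => hn (n+1) z) atTop (𝓝 (hlim z)) :=
      (htlu.tendsto_at hz).comp (Filter.tendsto_add_atTop_nat 1)
    have h4 : Tendsto (fun n => lam * hn (n+1) z) atTop (𝓝 (lam * hlim z)) := h3.const_mul lam
    exact tendsto_nhds_unique (Tendsto.congr h2 h1) h4
  refine ⟨hlim, hlim_diff, hlim0, hlim_deriv, heig, ?_⟩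
  -- uniqueness of eigenfunctions
  intro H Hd H0 Heig
  set c : ℂ := deriv H 0 with hc
  set W : ℂ → ℂ := fun z => H z - c * hlim z with hWdef
  have hWd : DifferentiableOn ℂ W 𝔻 := Hd.sub (hlim_diff.const_mul c)
  have hW0 : W 0 = 0 := by
    show H 0 - c * hlim 0 = 0
    rw [H0, hlim0]
    ring
  have hWderiv : deriv W 0 = 0 := by
    have d1 : DifferentiableAt ℂ H 0 := Hd.differentiableAt (isOpen_ball.mem_nhds h0mem)
    have d2 : DifferentiableAt ℂ hlim 0 := hlim_diff.differentiableAt (isOpen_ball.mem_nhds h0mem)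
    show deriv (fun z => H z - c * hlim z) 0 = 0
    rw [deriv_fun_sub d1 (d2.const_mul c), deriv_const_mul c d2, hlim_deriv]
    simp [hc]
  have hWeig : ∀ z ∈ 𝔻, W (φ z) = lam * W z := by
    intro z hz
    show H (φ z) - c * hlim (φ z) = lam * (H z - c * hlim z)
    rw [Heig z hz, heig z hz]
    ring
  have hWiter : ∀ (n : ℕ), ∀ z ∈ 𝔻, W (φ^[n] z) = lam ^ n * W z := by
    intro n
    induction n with
    | zero => intro z hz; simp
    | succ n ih =>
        intro z hz
        rw [Function.iterate_succ_apply' φ n z, hWeig _ (hiter_maps n hz), ih z hz, pow_succ]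
        ring
  obtain ⟨R1, hR1d, hR1f, hR10⟩ := factor_zero W hWd hW0
  obtain ⟨R2, hR2d, hR2f, -⟩ := factor_zero R1 hR1d (by rw [hR10, hWderiv])
  obtain ⟨kk, C, K, hkk0, hkk1, hC0, hK1, hCb, hpack⟩ :=
    hr_pack (1/2) (by norm_num) (by norm_num)
  have hsub : closedBall (0:ℂ) (1/2) ⊆ 𝔻 := closedBall_subset_ball (by norm_num)
  have hne : (closedBall (0:ℂ) (1/2)).Nonempty := ⟨0, by norm_num⟩
  obtain ⟨w₂, hw₂mem, hw₂max⟩ := (isCompact_closedBall (0:ℂ) (1/2)).exists_isMaxOn hne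
    ((hR2d.continuousOn.mono hsub).norm)
  set M : ℝ := ‖R2 w₂‖ with hMdef
  have hM0 : 0 ≤ M := norm_nonneg _
  have hWz : ∀ z ∈ closedBall (0:ℂ) (1/2), W z = 0 := by
    intro z hz
    have hzD : z ∈ 𝔻 := hsub hz
    have key : ∀ n : ℕ, ‖W z‖ ≤ (K^2 * M) * ‖lam‖ ^ n := by
      intro n
      obtain ⟨hmem, hk, hKb⟩ := hpack n z hz
      have e0 : W (φ^[n] z) = lam ^ n * W z := hWiter n z hzD
      have e1 : ‖W (φ^[n] z)‖ = ‖lam‖ ^ n * ‖W z‖ := by rw [e0, norm_mul, norm_pow]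
      have e2 : ‖W (φ^[n] z)‖ ≤ ‖φ^[n] z‖ ^ 2 * M := by
        rw [hR1f _, hR2f _, norm_mul, norm_mul]
        calc ‖φ^[n] z‖ * (‖φ^[n] z‖ * ‖R2 (φ^[n] z)‖)
            ≤ ‖φ^[n] z‖ * (‖φ^[n] z‖ * M) := by
              have := hw₂max hmem
              gcongr
              exact this
          _ = ‖φ^[n] z‖ ^ 2 * M := by ring
      have e3 : ‖φ^[n] z‖ ^ 2 ≤ (K * ‖lam‖ ^ n) ^ 2 := by
        have e3' : ‖φ^[n] z‖ ≤ K * ‖lam‖ ^ n := by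
          refine hKb.trans ?_
          have hz1 : ‖z‖ ≤ 1 := le_trans (mem_closedBall_zero_iff.1 hz) (by norm_num)
          nlinarith [mul_nonneg (mul_nonneg (by linarith : (0:ℝ) ≤ K)
            (pow_nonneg (norm_nonneg lam) n)) (by linarith : (0:ℝ) ≤ 1 - ‖z‖)]
        exact pow_le_pow_left₀ (norm_nonneg _) e3' 2
      have e4 : ‖W z‖ * ‖lam‖ ^ n ≤ ((K^2 * M) * ‖lam‖ ^ n) * ‖lam‖ ^ n := by
        have := e2.trans (mul_le_mul_of_nonneg_right e3 hM0)
        rw [e1] at this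
        calc ‖W z‖ * ‖lam‖ ^ n = ‖lam‖ ^ n * ‖W z‖ := by ring
          _ ≤ (K * ‖lam‖ ^ n) ^ 2 * M := this
          _ = ((K^2 * M) * ‖lam‖ ^ n) * ‖lam‖ ^ n := by ring
      exact le_of_mul_le_mul_right e4 (pow_pos hlampos n)
    have hlimg : Tendsto (fun n : ℕ => (K^2 * M) * ‖lam‖ ^ n) atTop (𝓝 0) := by
      have := tendsto_pow_atTop_nhds_zero_of_lt_one (norm_nonneg lam) hlam1
      simpa using this.const_mul (K^2 * M)
    have hle : ‖W z‖ ≤ 0 := ge_of_tendsto hlimg (Filter.Eventually.of_forall key)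
    exact norm_le_zero_iff.1 hle
  have hWana : AnalyticOnNhd ℂ W 𝔻 := hWd.analyticOnNhd isOpen_ball
  have hzero : EqOn W (fun _ => (0:ℂ)) 𝔻 := by
    apply hWana.eqOn_of_preconnected_of_eventuallyEq analyticOnNhd_const
      (convex_ball (0:ℂ) 1).isPreconnected h0mem
    filter_upwards [ball_mem_nhds (0:ℂ) (by norm_num : (0:ℝ) < 1/2)] with z hz
    exact hWz z (ball_subset_closedBall hz)
  intro z hz
  have := hzero hz
  simp only [hWdef] at this
  have : H z - c * hlim z = 0 := this
  linear_combination this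

lemma mobius_denom_ne (τ z : ℂ) (hτ : ‖τ‖ < 1) (hz : ‖z‖ < 1) :
    (1 : ℂ) - (starRingEnd ℂ) τ * z ≠ 0 := by
  intro h
  have h1 : (starRingEnd ℂ) τ * z = 1 := by linear_combination -h
  have h2 : ‖(starRingEnd ℂ) τ * z‖ < 1 := by
    rw [norm_mul, RCLike.norm_conj]
    nlinarith [norm_nonneg τ, norm_nonneg z]
  rw [h1] at h2
  simp at h2

lemma mobius_key (τ z : ℂ) :
    Complex.normSq (1 - (starRingEnd ℂ) τ * z) - Complex.normSq (τ - z)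
      = (1 - Complex.normSq τ) * (1 - Complex.normSq z) := by
  have key : ((Complex.normSq (1 - (starRingEnd ℂ) τ * z) - Complex.normSq (τ - z) : ℝ) : ℂ)
      = (((1 - Complex.normSq τ) * (1 - Complex.normSq z) : ℝ) : ℂ) := by
    push_cast
    simp only [← Complex.mul_conj]
    simp only [map_sub, map_mul, map_one, Complex.conj_conj]
    ring
  exact_mod_cast key

lemma mobius_maps (τ z : ℂ) (hτ : ‖τ‖ < 1) (hz : ‖z‖ < 1) : ‖mobius τ z‖ < 1 := by
  have hd := mobius_denom_ne τ z hτ hz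
  rw [mobius, norm_div, div_lt_one (norm_pos_iff.2 hd)]
  have hkey := mobius_key τ z
  have h1 : Complex.normSq τ < 1 := by rw [Complex.normSq_eq_norm_sq]; nlinarith [norm_nonneg τ]
  have h2 : Complex.normSq z < 1 := by rw [Complex.normSq_eq_norm_sq]; nlinarith [norm_nonneg z]
  have h3 : Complex.normSq (τ - z) < Complex.normSq (1 - (starRingEnd ℂ) τ * z) := by nlinarith
  rw [Complex.normSq_eq_norm_sq, Complex.normSq_eq_norm_sq] at h3
  exact lt_of_pow_lt_pow_left₀ 2 (norm_nonneg _) h3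

lemma mobius_invol (τ z : ℂ) (hτ : ‖τ‖ < 1) (hz : ‖z‖ < 1) :
    mobius τ (mobius τ z) = z := by
  have hd := mobius_denom_ne τ z hτ hz
  have h2 : (1:ℂ) - (starRingEnd ℂ) τ * τ ≠ 0 := by
    intro h
    have h1 : (starRingEnd ℂ) τ * τ = 1 := by linear_combination -h
    have h3 : ‖(starRingEnd ℂ) τ * τ‖ < 1 := by
      rw [norm_mul, RCLike.norm_conj]
      nlinarith [norm_nonneg τ]
    rw [h1] at h3
    simp at h3
  have h2' : (1:ℂ) - τ * (starRingEnd ℂ) τ ≠ 0 := by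
    rw [mul_comm] at h2
    exact h2
  unfold mobius
  have e1 : τ - (τ - z) / (1 - (starRingEnd ℂ) τ * z)
      = z * (1 - (starRingEnd ℂ) τ * τ) / (1 - (starRingEnd ℂ) τ * z) := by
    rw [eq_div_iff hd, sub_mul, div_mul_cancel₀ _ hd]; ring
  have e2 : 1 - (starRingEnd ℂ) τ * ((τ - z) / (1 - (starRingEnd ℂ) τ * z))
      = (1 - (starRingEnd ℂ) τ * τ) / (1 - (starRingEnd ℂ) τ * z) := by
    rw [eq_div_iff hd, sub_mul, mul_div_assoc', div_mul_cancel₀ _ hd]; ring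
  rw [e1, e2, div_div_eq_mul_div, div_mul_cancel₀ _ hd, mul_div_assoc, div_self h2, mul_one]

lemma mobius_self (τ : ℂ) : mobius τ τ = 0 := by simp [mobius]

lemma mobius_zero (τ : ℂ) : mobius τ 0 = τ := by simp [mobius]

lemma mobius_diff (τ : ℂ) (hτ : ‖τ‖ < 1) : DifferentiableOn ℂ (mobius τ) 𝔻 := by
  apply DifferentiableOn.div
  · exact (differentiableOn_const τ).sub differentiableOn_id
  · exact (differentiableOn_const 1).sub ((differentiableOn_const _).mul differentiableOn_id)
  · intro z hz
    exact mobius_denom_ne τ z hτ (mem_ball_zero_iff.1 hz)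

lemma local_inj (h : ℂ → ℂ) (hd : DifferentiableOn ℂ h 𝔻) (hder : deriv h 0 = 1) :
    ∃ δ : ℝ, 0 < δ ∧ δ < 1 ∧
      ∀ x ∈ ball (0:ℂ) δ, ∀ y ∈ ball (0:ℂ) δ, h x = h y → x = y := by
  have hana : AnalyticAt ℂ h 0 := hd.analyticAt (isOpen_ball.mem_nhds (by simp))
  obtain ⟨p, hp⟩ := hana
  have hp1 : (p 1 fun _ => (1:ℂ)) = 1 := by rw [← hp.deriv, hder]
  have hs : HasStrictDerivAt h 1 0 := hp1 ▸ hp.hasStrictDerivAt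
  have hlo := hs.isLittleO.def (by norm_num : (0:ℝ) < 1/2)
  rw [Metric.eventually_nhds_iff] at hlo
  obtain ⟨ε, hε0, hε⟩ := hlo
  refine ⟨min (ε/2) (1/2), by positivity, by
      calc min (ε/2) (1/2) ≤ 1/2 := min_le_right _ _
        _ < 1 := by norm_num, ?_⟩
  intro x hx y hy hxy
  have hx' : ‖x‖ < ε/2 := lt_of_lt_of_le (mem_ball_zero_iff.1 hx) (min_le_left _ _)
  have hy' : ‖y‖ < ε/2 := lt_of_lt_of_le (mem_ball_zero_iff.1 hy) (min_le_left _ _)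
  have hdist : dist ((x, y) : ℂ × ℂ) ((0:ℂ), (0:ℂ)) < ε := by
    rw [Prod.dist_eq]
    simp only [Complex.dist_eq, sub_zero]
    apply max_lt <;> [skip; skip] <;>
      · linarith
  have := hε hdist
  simp only [ContinuousLinearMap.smulRight_apply, ContinuousLinearMap.one_apply,
    ContinuousLinearMap.toSpanSingleton_apply,
    smul_eq_mul, mul_one, hxy] at this
  -- this : ‖h y - h y - (x - y)‖ ≤ 1/2 * ‖x - y‖  (roughly)
  have hxyn : ‖x - y‖ ≤ 1/2 * ‖x - y‖ := by
    calc ‖x - y‖ = ‖h y - h y - (x - y)‖ := by rw [sub_self, zero_sub, norm_neg]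
      _ ≤ 1/2 * ‖x - y‖ := this
  have h0 : ‖x - y‖ ≤ 0 := by linarith
  exact sub_eq_zero.1 (norm_le_zero_iff.1 h0)

lemma flow_fixes (F : ℝ → ℂ → ℂ) (f : ℂ → ℂ) (τ : ℂ)
    (hf : DifferentiableOn ℂ f 𝔻) (hτ : τ ∈ 𝔻) (hτf : f τ = 0)
    (hF0 : F 0 τ = τ)
    (hF' : ∀ t : ℝ, 0 ≤ t →
      HasDerivWithinAt (fun s : ℝ => F s τ) (-(f (F t τ))) (Set.Ici 0) t) :
    ∀ t : ℝ, 0 ≤ t → F t τ = τ := by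
  set u : ℝ → ℂ := fun t => F t τ with hu
  have hcont : ContinuousOn u (Ici 0) := fun t ht => (hF' t ht).continuousWithinAt
  -- local Lipschitz bound for f near τ
  have hana : AnalyticAt ℂ f τ := hf.analyticAt (isOpen_ball.mem_nhds hτ)
  obtain ⟨Kl, s, hs, hlip⟩ := hana.contDiffAt.exists_lipschitzOnWith
  obtain ⟨ρ, hρ0, hρsub⟩ := (Metric.nhds_basis_closedBall.mem_iff).1 hs
  have hτs : τ ∈ closedBall τ ρ := mem_closedBall_self hρ0.le
  -- local propagation step
  have hstep : ∀ T : ℝ, 0 ≤ T → u T = τ →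
      ∃ ε : ℝ, 0 < ε ∧ ∀ t ∈ Icc T (T + ε), u t = τ := by
    intro T hT huT
    have hc : ContinuousWithinAt u (Ici 0) T := hcont T hT
    rw [Metric.continuousWithinAt_iff] at hc
    obtain ⟨δ, hδ0, hδ⟩ := hc ρ hρ0
    refine ⟨δ/2, by positivity, ?_⟩
    have hmem : ∀ t ∈ Icc T (T + δ/2), u t ∈ closedBall τ ρ := by
      intro t ht
      have h1 : t ∈ Ici (0:ℝ) := le_trans hT ht.1
      have h2 : dist t T < δ := by
        rw [Real.dist_eq, abs_lt]
        constructor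
        · linarith [ht.1]
        · linarith [ht.2]
      have h3 := hδ h1 h2
      rw [huT] at h3
      exact mem_closedBall.2 h3.le
    have hg := norm_le_gronwallBound_of_norm_deriv_right_le
      (f := fun t => u t - τ) (f' := fun t => -(f (u t))) (δ := 0) (K := Kl) (ε := 0)
      (a := T) (b := T + δ/2)
      (by
        apply ContinuousOn.sub _ continuousOn_const
        exact hcont.mono (fun t ht => le_trans hT ht.1))
      (by
        intro x hx
        have hx0 : (0:ℝ) ≤ x := le_trans hT hx.1
        exact ((hF' x hx0).mono (fun t ht => le_trans hx0 ht)).sub_const τ)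
      (by show ‖u T - τ‖ ≤ 0; rw [huT]; simp)
      (by
        intro x hx
        have hxmem : u x ∈ closedBall τ ρ := hmem x ⟨hx.1, hx.2.le⟩
        have hld := hlip.dist_le_mul (u x) (hρsub hxmem) τ (hρsub hτs)
        rw [norm_neg]
        calc ‖f (u x)‖ = dist (f (u x)) (f τ) := by rw [hτf, dist_eq_norm, sub_zero]
          _ ≤ Kl * dist (u x) τ := hld
          _ = Kl * ‖u x - τ‖ + 0 := by rw [dist_eq_norm]; ring)
    intro t ht
    have := hg t ht
    rw [gronwallBound_ε0, zero_mul] at this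
    have h4 : u t - τ = 0 := norm_le_zero_iff.1 this
    linear_combination h4
  -- global argument
  intro T₀ hT₀
  set A : Set ℝ := {T | T ∈ Icc 0 T₀ ∧ ∀ t ∈ Icc 0 T, u t = τ} with hA
  have h0A : (0:ℝ) ∈ A := by
    refine ⟨⟨le_refl 0, hT₀⟩, fun t ht => ?_⟩
    have : t = 0 := le_antisymm ht.2 ht.1
    rw [this]
    exact hF0
  have hbdd : BddAbove A := ⟨T₀, fun T hT => hT.1.2⟩
  set Ts : ℝ := sSup A with hTs
  have hTs0 : 0 ≤ Ts := le_csSup hbdd h0A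
  have hTsT₀ : Ts ≤ T₀ := csSup_le ⟨0, h0A⟩ (fun T hT => hT.1.2)
  have hless : ∀ t : ℝ, 0 ≤ t → t < Ts → u t = τ := by
    intro t ht0 htT
    obtain ⟨T, hTA, htT'⟩ := exists_lt_of_lt_csSup ⟨0, h0A⟩ htT
    exact hTA.2 t ⟨ht0, htT'.le⟩
  have huTs : u Ts = τ := by
    rcases eq_or_lt_of_le hTs0 with heq | hpos
    · rw [← heq]
      exact hF0
    · have hclos : Ts ∈ closure (Ico 0 Ts) := by
        rw [closure_Ico (ne_of_lt hpos)]
        exact ⟨hTs0, le_refl _⟩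
      have hNB : (𝓝[Ico 0 Ts] Ts).NeBot := mem_closure_iff_nhdsWithin_neBot.1 hclos
      have htends : Tendsto u (𝓝[Ico 0 Ts] Ts) (𝓝 (u Ts)) :=
        (hcont Ts hTs0).mono_left (nhdsWithin_mono _ (fun t ht => ht.1))
      have hconst : Tendsto u (𝓝[Ico 0 Ts] Ts) (𝓝 τ) := by
        apply Tendsto.congr' _ tendsto_const_nhds
        filter_upwards [self_mem_nhdsWithin] with t ht
        exact (hless t ht.1 ht.2).symm
      exact tendsto_nhds_unique htends hconst
  have hTsA : Ts ∈ A := by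
    refine ⟨⟨hTs0, hTsT₀⟩, fun t ht => ?_⟩
    rcases lt_or_eq_of_le ht.2 with h | h
    · exact hless t ht.1 h
    · rw [h]
      exact huTs
  rcases eq_or_lt_of_le hTsT₀ with heq | hlt
  · have := hTsA.2 T₀ ⟨hT₀, le_of_eq heq.symm⟩
    exact this
  · exfalso
    obtain ⟨ε, hε0, hεfix⟩ := hstep Ts hTs0 huTs
    set T' : ℝ := min (Ts + ε) T₀ with hT'
    have hT'A : T' ∈ A := by
      refine ⟨⟨le_trans hTs0 (le_min (by linarith) hlt.le), min_le_right _ _⟩, ?_⟩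
      intro t ht
      rcases le_or_gt t Ts with h | h
      · exact hTsA.2 t ⟨ht.1, h⟩
      · apply hεfix t
        constructor
        · exact h.le
        · exact le_trans ht.2 (le_trans (min_le_left _ _) (le_refl _))
    have : T' ≤ Ts := le_csSup hbdd hT'A
    have hT'gt : Ts < T' := lt_min (by linarith) hlt
    linarith

/-- Theorem 2(i) (dilation case): if the generator of `S₁` has an interior null point and
neither semigroup consists of automorphisms, then commutativity of `F₁` and `G₁` implies
that the semigroups commute. -/
theorem commuting_semigroups_dilation_case
    (F G : ℝ → ℂ → ℂ) (f g : ℂ → ℂ)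
    (hSF : ContSemigroupOn F) (hSG : ContSemigroupOn G)
    (hf : DifferentiableOn ℂ f unitDisk) (hg : DifferentiableOn ℂ g unitDisk)
    (hgenF : Generates f F) (hgenG : Generates g G)
    (hcomm : ∀ z ∈ unitDisk, F 1 (G 1 z) = G 1 (F 1 z))
    (τ : ℂ) (hτ : τ ∈ unitDisk) (hτf : f τ = 0)
    (t₁ : ℝ) (ht₁ : 0 < t₁) (hFaut : ¬ IsDiskAutomorphism (F t₁))
    (t₂ : ℝ) (ht₂ : 0 < t₂) (hGaut : ¬ IsDiskAutomorphism (G t₂)) :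
    ∀ s : ℝ, 0 ≤ s → ∀ t : ℝ, 0 ≤ t → ∀ z ∈ unitDisk,
      F t (G s z) = G s (F t z) := by
  obtain ⟨hFholo, hFmaps, hFcomp, hFcont⟩ := hSF
  obtain ⟨hGholo, hGmaps, hGcomp, hGcont⟩ := hSG
  rw [unitDisk_eq] at hFholo hFmaps hFcomp hFcont hGholo hGmaps hGcomp hGcont hcomm hτ hf hg
  rw [Generates, unitDisk_eq] at hgenF hgenG
  rw [unitDisk_eq]
  have h0D : (0:ℂ) ∈ 𝔻 := by simp
  set m : ℂ → ℂ := mobius τ with hmdef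
  have hτn : ‖τ‖ < 1 := mem_ball_zero_iff.1 hτ
  have hmm : ∀ z ∈ 𝔻, m (m z) = z := fun z hz =>
    mobius_invol τ z hτn (mem_ball_zero_iff.1 hz)
  have hmmaps : MapsTo m 𝔻 𝔻 := fun z hz =>
    mem_ball_zero_iff.2 (mobius_maps τ z hτn (mem_ball_zero_iff.1 hz))
  have hmdiff : DifferentiableOn ℂ m 𝔻 := mobius_diff τ hτn
  set Ff : ℝ → ℂ → ℂ := fun t z => m (F t (m z)) with hFfdef
  set Gg : ℝ → ℂ → ℂ := fun t z => m (G t (m z)) with hGgdef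
  -- basic facts for the conjugated semigroups
  have hFfmaps : ∀ t : ℝ, 0 ≤ t → MapsTo (Ff t) 𝔻 𝔻 :=
    fun t ht z hz => hmmaps (hFmaps t ht (hmmaps hz))
  have hGgmaps : ∀ t : ℝ, 0 ≤ t → MapsTo (Gg t) 𝔻 𝔻 :=
    fun t ht z hz => hmmaps (hGmaps t ht (hmmaps hz))
  have hFfdiff : ∀ t : ℝ, 0 ≤ t → DifferentiableOn ℂ (Ff t) 𝔻 := by
    intro t ht
    exact hmdiff.comp ((hFholo t ht).comp hmdiff hmmaps)
      (fun z hz => hFmaps t ht (hmmaps hz))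
  have hGgdiff : ∀ t : ℝ, 0 ≤ t → DifferentiableOn ℂ (Gg t) 𝔻 := by
    intro t ht
    exact hmdiff.comp ((hGholo t ht).comp hmdiff hmmaps)
      (fun z hz => hGmaps t ht (hmmaps hz))
  have hFfsemi : ∀ s : ℝ, 0 ≤ s → ∀ t : ℝ, 0 ≤ t → ∀ z ∈ 𝔻,
      Ff (t + s) z = Ff t (Ff s z) := by
    intro s hs t ht z hz
    show m (F (t + s) (m z)) = m (F t (m (m (F s (m z)))))
    rw [hmm _ (hFmaps s hs (hmmaps hz)), hFcomp s hs t ht (m z) (hmmaps hz)]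
  have hGgsemi : ∀ s : ℝ, 0 ≤ s → ∀ t : ℝ, 0 ≤ t → ∀ z ∈ 𝔻,
      Gg (t + s) z = Gg t (Gg s z) := by
    intro s hs t ht z hz
    show m (G (t + s) (m z)) = m (G t (m (m (G s (m z)))))
    rw [hmm _ (hGmaps s hs (hmmaps hz)), hGcomp s hs t ht (m z) (hmmaps hz)]
  have hFfcont : ∀ z ∈ 𝔻, Tendsto (fun t : ℝ => Ff t z) (𝓝[>] 0) (𝓝 z) := by
    intro z hz
    have h1 := hFcont (m z) (hmmaps hz)
    have h2 : ContinuousAt m (m z) :=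
      (hmdiff.differentiableAt (isOpen_ball.mem_nhds (hmmaps hz))).continuousAt
    have h3 := h2.tendsto.comp h1
    rw [hmm z hz] at h3
    exact h3
  have hGgcont : ∀ z ∈ 𝔻, Tendsto (fun t : ℝ => Gg t z) (𝓝[>] 0) (𝓝 z) := by
    intro z hz
    have h1 := hGcont (m z) (hmmaps hz)
    have h2 : ContinuousAt m (m z) :=
      (hmdiff.differentiableAt (isOpen_ball.mem_nhds (hmmaps hz))).continuousAt
    have h3 := h2.tendsto.comp h1
    rw [hmm z hz] at h3
    exact h3
  have hFfid0 : ∀ z ∈ 𝔻, Ff 0 z = z := by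
    intro z hz
    show m (F 0 (m z)) = z
    rw [(hgenF (m z) (hmmaps hz)).1, hmm z hz]
  have hGgid0 : ∀ z ∈ 𝔻, Gg 0 z = z := by
    intro z hz
    show m (G 0 (m z)) = z
    rw [(hgenG (m z) (hmmaps hz)).1, hmm z hz]
  -- F fixes τ, hence Ff fixes 0
  have hFτ : ∀ t : ℝ, 0 ≤ t → F t τ = τ := by
    apply flow_fixes F f τ hf hτ hτf (hgenF τ hτ).1
    intro t ht
    exact (hgenF τ hτ).2 t ht
  have hFf0 : ∀ t : ℝ, 0 ≤ t → Ff t 0 = 0 := by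
    intro t ht
    show m (F t (m 0)) = 0
    rw [hmdef, mobius_zero, hFτ t ht, mobius_self]
  -- derivative cocycles
  set bF : ℝ → ℂ := fun t => deriv (Ff t) 0 with hbFdef
  set bG : ℝ → ℂ := fun t => deriv (Gg t) 0 with hbGdef
  have hFfat : ∀ t : ℝ, 0 ≤ t → DifferentiableAt ℂ (Ff t) 0 :=
    fun t ht => (hFfdiff t ht).differentiableAt (isOpen_ball.mem_nhds h0D)
  have hbF0 : bF 0 = 1 := by
    have hev : Ff 0 =ᶠ[𝓝 (0:ℂ)] id := by
      filter_upwards [isOpen_ball.mem_nhds h0D] with w hw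
      exact hFfid0 w hw
    show deriv (Ff 0) 0 = 1
    rw [hev.deriv_eq, deriv_id]
  have hbFmul : ∀ t : ℝ, 0 ≤ t → ∀ s : ℝ, 0 ≤ s → bF (t + s) = bF t * bF s := by
    intro t ht s hs
    have hev : Ff (t + s) =ᶠ[𝓝 (0:ℂ)] (Ff t ∘ Ff s) := by
      filter_upwards [isOpen_ball.mem_nhds h0D] with w hw
      exact hFfsemi s hs t ht w hw
    have hat : DifferentiableAt ℂ (Ff t) (Ff s 0) := by
      rw [hFf0 s hs]
      exact hFfat t ht
    show deriv (Ff (t + s)) 0 = deriv (Ff t) 0 * deriv (Ff s) 0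
    rw [hev.deriv_eq, deriv_comp 0 hat (hFfat s hs), hFf0 s hs]
  have hbFle : ∀ t : ℝ, 0 ≤ t → ‖bF t‖ ≤ 1 :=
    fun t ht => selfmap_deriv_norm_le (Ff t) (hFfdiff t ht) (hFfmaps t ht) (hFf0 t ht)
  have hbFne : ∀ t : ℝ, 0 ≤ t → bF t ≠ 0 := by
    intro t ht
    rcases eq_or_lt_of_le ht with rfl | htpos
    · rw [hbF0]; exact one_ne_zero
    · intro hzero
      have hdy : ∀ n : ℕ, bF (t / 2 ^ n) = 0 := by
        intro n
        induction n with
        | zero => simpa using hzero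
        | succ n ih =>
            have harg : t / 2 ^ n = t / 2 ^ (n+1) + t / 2 ^ (n+1) := by
              rw [pow_succ]
              field_simp
              ring
            have hpos : (0:ℝ) ≤ t / 2 ^ (n+1) := by positivity
            rw [harg, hbFmul _ hpos _ hpos] at ih
            exact mul_self_eq_zero.1 ih
      set z₀ : ℂ := (1/2 : ℂ) with hz₀def
      have hz₀D : z₀ ∈ 𝔻 := by
        rw [mem_ball_zero_iff, hz₀def]
        rw [norm_div]
        simp
        norm_num
      have hz₀n : ‖z₀‖ = 1/2 := by
        rw [hz₀def, norm_div]
        simp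
      have hsq : ∀ n : ℕ, ‖Ff (t / 2 ^ n) z₀‖ ≤ 1/4 := by
        intro n
        have hpos : (0:ℝ) ≤ t / 2 ^ n := by positivity
        have := selfmap_sq (Ff (t / 2 ^ n)) (hFfdiff _ hpos) (hFfmaps _ hpos)
          (hFf0 _ hpos) (hdy n) z₀ hz₀D
        rw [hz₀n] at this
        linarith [this]
      have htt : Tendsto (fun n : ℕ => t / 2 ^ n) atTop (𝓝[>] (0:ℝ)) := by
        have h1 : Tendsto (fun n : ℕ => t / 2 ^ n) atTop (𝓝 0) := by
          have h2 := (tendsto_pow_atTop_nhds_zero_of_lt_one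
            (by norm_num : (0:ℝ) ≤ 1/2) (by norm_num : (1:ℝ)/2 < 1)).const_mul t
          simp only [mul_zero] at h2
          refine h2.congr (fun n => ?_)
          rw [one_div, inv_pow, ← div_eq_mul_inv]
        refine tendsto_nhdsWithin_of_tendsto_nhds_of_eventually_within _ h1 ?_
        exact Filter.Eventually.of_forall (fun n => mem_Ioi.2 (by positivity))
      have hcomp := (hFfcont z₀ hz₀D).comp htt
      have hnorm := hcomp.norm
      have hle : ‖z₀‖ ≤ 1/4 :=
        le_of_tendsto hnorm (Filter.Eventually.of_forall (fun n => hsq n))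
      rw [hz₀n] at hle
      linarith
  -- powers
  have hbFpow : ∀ n : ℕ, bF (n : ℝ) = bF 1 ^ n := by
    intro n
    induction n with
    | zero => simpa using hbF0
    | succ n ih =>
        have : ((n:ℝ) + 1) = (1:ℝ) + (n:ℝ) := by ring
        push_cast
        rw [this, hbFmul 1 zero_le_one (n:ℝ) (Nat.cast_nonneg n), ih, pow_succ]
        ring
  have hbFrot : ‖bF 1‖ = 1 → ∀ t : ℝ, 0 ≤ t → ‖bF t‖ = 1 := by
    intro h1 t ht
    set n : ℕ := ⌈t⌉₊ with hn
    have htn : t ≤ (n : ℝ) := Nat.le_ceil t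
    have hmul := hbFmul t ht ((n:ℝ) - t) (by linarith)
    have harg : t + ((n:ℝ) - t) = (n:ℝ) := by ring
    rw [harg, hbFpow n] at hmul
    have hnorm : ‖bF t‖ * ‖bF ((n:ℝ) - t)‖ = 1 := by
      rw [← norm_mul, ← hmul, norm_pow, h1, one_pow]
    have hle1 := hbFle t ht
    have hle2 := hbFle ((n:ℝ) - t) (by linarith)
    nlinarith [norm_nonneg (bF t), norm_nonneg (bF ((n:ℝ) - t))]
  -- transfer of rotations to automorphisms
  have hmBij : BijOn m 𝔻 𝔻 :=
    InvOn.bijOn ⟨fun z hz => hmm z hz, fun z hz => hmm z hz⟩ hmmaps hmmaps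
  have hrot_aut : ∀ (c : ℂ), ‖c‖ = 1 → BijOn (fun z : ℂ => m (c * m z)) 𝔻 𝔻 := by
    intro c hc
    have hcne : c ≠ 0 := by
      intro h
      rw [h] at hc
      simp at hc
    have hcmaps : MapsTo (fun z : ℂ => c * z) 𝔻 𝔻 := by
      intro z hz
      rw [mem_ball_zero_iff, norm_mul, hc, one_mul]
      exact mem_ball_zero_iff.1 hz
    have hcimaps : MapsTo (fun z : ℂ => c⁻¹ * z) 𝔻 𝔻 := by
      intro z hz
      rw [mem_ball_zero_iff, norm_mul, norm_inv, hc, inv_one, one_mul]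
      exact mem_ball_zero_iff.1 hz
    have hcBij : BijOn (fun z : ℂ => c * z) 𝔻 𝔻 := by
      have hinv : InvOn (fun z : ℂ => c⁻¹ * z) (fun z : ℂ => c * z) 𝔻 𝔻 := by
        constructor
        · intro z hz
          show c⁻¹ * (c * z) = z
          field_simp
        · intro z hz
          show c * (c⁻¹ * z) = z
          field_simp
      exact hinv.bijOn hcmaps hcimaps
    have := (hmBij.comp hcBij).comp hmBij
    exact this.congr (fun z hz => rfl)
  have hbF1lt : ‖bF 1‖ < 1 := by
    rcases lt_or_eq_of_le (hbFle 1 zero_le_one) with h | h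
    · exact h
    · exfalso
      obtain ⟨c, hc1, hcrot⟩ := selfmap_rot (Ff t₁) (hFfdiff t₁ ht₁.le) (hFfmaps t₁ ht₁.le)
        (hFf0 t₁ ht₁.le) (hbFrot h t₁ ht₁.le)
      apply hFaut
      constructor
      · rw [unitDisk_eq]; exact hFholo t₁ ht₁.le
      · rw [unitDisk_eq]
        have hagree : EqOn (fun z : ℂ => m (c * m z)) (F t₁) 𝔻 := by
          intro w hw
          have h1 : Ff t₁ (m w) = c * m w := hcrot (m w) (hmmaps hw)
          have h2 : Ff t₁ (m w) = m (F t₁ w) := by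
            show m (F t₁ (m (m w))) = m (F t₁ w)
            rw [hmm w hw]
          have h3 : m (c * m w) = m (m (F t₁ w)) := by rw [← h1, h2]
          rw [hmm _ (hFmaps t₁ ht₁.le hw)] at h3
          exact h3
        exact (hrot_aut c hc1).congr hagree
  -- the conjugated commutation hypothesis
  have hcommC : ∀ z ∈ 𝔻, Ff 1 (Gg 1 z) = Gg 1 (Ff 1 z) := by
    intro z hz
    show m (F 1 (m (m (G 1 (m z))))) = m (G 1 (m (m (F 1 (m z)))))
    rw [hmm _ (hGmaps 1 zero_le_one (hmmaps hz)), hmm _ (hFmaps 1 zero_le_one (hmmaps hz)),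
      hcomm (m z) (hmmaps hz)]
  -- ψ := Gg 1 fixes 0
  have hψ0 : Gg 1 0 = 0 := by
    have hw : Gg 1 0 ∈ 𝔻 := hGgmaps 1 zero_le_one h0D
    have hfix : Ff 1 (Gg 1 0) = Gg 1 0 := by
      have := hcommC 0 h0D
      rwa [hFf0 1 zero_le_one] at this
    exact selfmap_fix (Ff 1) (hFfdiff 1 zero_le_one) (hFfmaps 1 zero_le_one)
      (hFf0 1 zero_le_one) hbF1lt hw hfix
  -- case: Gg 1 is the identity (then G t₂ is an automorphism, contradiction)
  by_cases hψid : ∀ z ∈ 𝔻, Gg 1 z = z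
  · exfalso
    have hGn : ∀ n : ℕ, ∀ z ∈ 𝔻, Gg (n : ℝ) z = z := by
      intro n
      induction n with
      | zero => intro z hz; simpa using hGgid0 z hz
      | succ n ih =>
          intro z hz
          have hcast : ((n+1 : ℕ) : ℝ) = (n:ℝ) + 1 := by push_cast; ring
          rw [hcast, hGgsemi 1 zero_le_one (n:ℝ) (Nat.cast_nonneg n) z hz, hψid z hz, ih z hz]
    set n : ℕ := ⌈t₂⌉₊ with hn
    have htn : t₂ ≤ (n : ℝ) := Nat.le_ceil t₂
    have hinv : InvOn (Gg ((n:ℝ) - t₂)) (Gg t₂) 𝔻 𝔻 := by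
      constructor
      · intro z hz
        show Gg ((n:ℝ) - t₂) (Gg t₂ z) = z
        rw [← hGgsemi t₂ ht₂.le ((n:ℝ) - t₂) (by linarith) z hz]
        have : ((n:ℝ) - t₂) + t₂ = (n:ℝ) := by ring
        rw [this]
        exact hGn n z hz
      · intro z hz
        show Gg t₂ (Gg ((n:ℝ) - t₂) z) = z
        rw [← hGgsemi ((n:ℝ) - t₂) (by linarith) t₂ ht₂.le z hz]
        have : t₂ + ((n:ℝ) - t₂) = (n:ℝ) := by ring
        rw [this]
        exact hGn n z hz
    have hGgBij : BijOn (Gg t₂) 𝔻 𝔻 :=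
      InvOn.bijOn ⟨hinv.1, hinv.2⟩ (hGgmaps t₂ ht₂.le) (hGgmaps _ (by linarith))
    apply hGaut
    constructor
    · rw [unitDisk_eq]; exact hGholo t₂ ht₂.le
    · rw [unitDisk_eq]
      have hagree : EqOn (m ∘ Gg t₂ ∘ m) (G t₂) 𝔻 := by
        intro w hw
        show m (m (G t₂ (m (m w)))) = G t₂ w
        rw [hmm w hw, hmm _ (hGmaps t₂ ht₂.le hw)]
      exact (((hmBij.comp hGgBij).comp hmBij).congr hagree)
  · -- main case : Gg 1 ≠ id
    push_neg at hψid
    obtain ⟨zs, hzsD, hzsne⟩ := hψid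
    -- Gg s fixes 0 for all s
    have hGg0 : ∀ s : ℝ, 0 ≤ s → Gg s 0 = 0 := by
      intro s hs
      have hw : Gg s 0 ∈ 𝔻 := hGgmaps s hs h0D
      have hfix : Gg 1 (Gg s 0) = Gg s 0 := by
        have e1 : Gg 1 (Gg s 0) = Gg (1 + s) 0 := (hGgsemi s hs 1 zero_le_one 0 h0D).symm
        have e2 : Gg (s + 1) 0 = Gg s (Gg 1 0) := hGgsemi 1 zero_le_one s hs 0 h0D
        rw [hψ0] at e2
        rw [e1, add_comm, e2]
      by_contra hne
      exact hzsne (selfmap_fix' (Gg 1) (hGgdiff 1 zero_le_one) (hGgmaps 1 zero_le_one)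
        hψ0 hw hfix hne zs hzsD)
    -- bG facts (mirrors bF)
    have hGgat : ∀ t : ℝ, 0 ≤ t → DifferentiableAt ℂ (Gg t) 0 :=
      fun t ht => (hGgdiff t ht).differentiableAt (isOpen_ball.mem_nhds h0D)
    have hbG0 : bG 0 = 1 := by
      have hev : Gg 0 =ᶠ[𝓝 (0:ℂ)] id := by
        filter_upwards [isOpen_ball.mem_nhds h0D] with w hw
        exact hGgid0 w hw
      show deriv (Gg 0) 0 = 1
      rw [hev.deriv_eq, deriv_id]
    have hbGmul : ∀ t : ℝ, 0 ≤ t → ∀ s : ℝ, 0 ≤ s → bG (t + s) = bG t * bG s := by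
      intro t ht s hs
      have hev : Gg (t + s) =ᶠ[𝓝 (0:ℂ)] (Gg t ∘ Gg s) := by
        filter_upwards [isOpen_ball.mem_nhds h0D] with w hw
        exact hGgsemi s hs t ht w hw
      have hat : DifferentiableAt ℂ (Gg t) (Gg s 0) := by
        rw [hGg0 s hs]
        exact hGgat t ht
      show deriv (Gg (t + s)) 0 = deriv (Gg t) 0 * deriv (Gg s) 0
      rw [hev.deriv_eq, deriv_comp 0 hat (hGgat s hs), hGg0 s hs]
    have hbGle : ∀ t : ℝ, 0 ≤ t → ‖bG t‖ ≤ 1 :=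
      fun t ht => selfmap_deriv_norm_le (Gg t) (hGgdiff t ht) (hGgmaps t ht) (hGg0 t ht)
    have hbGne : ∀ t : ℝ, 0 ≤ t → bG t ≠ 0 := by
      intro t ht
      rcases eq_or_lt_of_le ht with rfl | htpos
      · rw [hbG0]; exact one_ne_zero
      · intro hzero
        have hdy : ∀ n : ℕ, bG (t / 2 ^ n) = 0 := by
          intro n
          induction n with
          | zero => simpa using hzero
          | succ n ih =>
              have harg : t / 2 ^ n = t / 2 ^ (n+1) + t / 2 ^ (n+1) := by
                rw [pow_succ]
                field_simp
                ring
              have hpos : (0:ℝ) ≤ t / 2 ^ (n+1) := by positivity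
              rw [harg, hbGmul _ hpos _ hpos] at ih
              exact mul_self_eq_zero.1 ih
        set z₀ : ℂ := (1/2 : ℂ) with hz₀def
        have hz₀D : z₀ ∈ 𝔻 := by
          rw [mem_ball_zero_iff, hz₀def, norm_div]
          simp
          norm_num
        have hz₀n : ‖z₀‖ = 1/2 := by
          rw [hz₀def, norm_div]
          simp
        have hsq : ∀ n : ℕ, ‖Gg (t / 2 ^ n) z₀‖ ≤ 1/4 := by
          intro n
          have hpos : (0:ℝ) ≤ t / 2 ^ n := by positivity
          have := selfmap_sq (Gg (t / 2 ^ n)) (hGgdiff _ hpos) (hGgmaps _ hpos)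
            (hGg0 _ hpos) (hdy n) z₀ hz₀D
          rw [hz₀n] at this
          linarith [this]
        have htt : Tendsto (fun n : ℕ => t / 2 ^ n) atTop (𝓝[>] (0:ℝ)) := by
          have h1 : Tendsto (fun n : ℕ => t / 2 ^ n) atTop (𝓝 0) := by
            have h2 := (tendsto_pow_atTop_nhds_zero_of_lt_one
              (by norm_num : (0:ℝ) ≤ 1/2) (by norm_num : (1:ℝ)/2 < 1)).const_mul t
            simp only [mul_zero] at h2
            refine h2.congr (fun n => ?_)
            rw [one_div, inv_pow, ← div_eq_mul_inv]
          refine tendsto_nhdsWithin_of_tendsto_nhds_of_eventually_within _ h1 ?_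
          exact Filter.Eventually.of_forall (fun n => mem_Ioi.2 (by positivity))
        have hcomp := (hGgcont z₀ hz₀D).comp htt
        have hle : ‖z₀‖ ≤ 1/4 :=
          le_of_tendsto hcomp.norm (Filter.Eventually.of_forall (fun n => hsq n))
        rw [hz₀n] at hle
        linarith
    have hbGpow : ∀ n : ℕ, bG (n : ℝ) = bG 1 ^ n := by
      intro n
      induction n with
      | zero => simpa using hbG0
      | succ n ih =>
          have : ((n:ℝ) + 1) = (1:ℝ) + (n:ℝ) := by ring
          push_cast
          rw [this, hbGmul 1 zero_le_one (n:ℝ) (Nat.cast_nonneg n), ih, pow_succ]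
          ring
    have hbGrot : ‖bG 1‖ = 1 → ∀ t : ℝ, 0 ≤ t → ‖bG t‖ = 1 := by
      intro h1 t ht
      set n : ℕ := ⌈t⌉₊ with hn
      have htn : t ≤ (n : ℝ) := Nat.le_ceil t
      have hmul := hbGmul t ht ((n:ℝ) - t) (by linarith)
      have harg : t + ((n:ℝ) - t) = (n:ℝ) := by ring
      rw [harg, hbGpow n] at hmul
      have hnorm : ‖bG t‖ * ‖bG ((n:ℝ) - t)‖ = 1 := by
        rw [← norm_mul, ← hmul, norm_pow, h1, one_pow]
      have hle1 := hbGle t ht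
      have hle2 := hbGle ((n:ℝ) - t) (by linarith)
      nlinarith [norm_nonneg (bG t), norm_nonneg (bG ((n:ℝ) - t))]
    have hbG1lt : ‖bG 1‖ < 1 := by
      rcases lt_or_eq_of_le (hbGle 1 zero_le_one) with h | h
      · exact h
      · exfalso
        obtain ⟨c, hc1, hcrot⟩ := selfmap_rot (Gg t₂) (hGgdiff t₂ ht₂.le) (hGgmaps t₂ ht₂.le)
          (hGg0 t₂ ht₂.le) (hbGrot h t₂ ht₂.le)
        apply hGaut
        constructor
        · rw [unitDisk_eq]; exact hGholo t₂ ht₂.le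
        · rw [unitDisk_eq]
          have hagree : EqOn (fun z : ℂ => m (c * m z)) (G t₂) 𝔻 := by
            intro w hw
            have h1 : Gg t₂ (m w) = c * m w := hcrot (m w) (hmmaps hw)
            have h2 : Gg t₂ (m w) = m (G t₂ w) := by
              show m (G t₂ (m (m w))) = m (G t₂ w)
              rw [hmm w hw]
            have h3 : m (c * m w) = m (m (G t₂ w)) := by rw [← h1, h2]
            rw [hmm _ (hGmaps t₂ ht₂.le hw)] at h3
            exact h3
          exact (hrot_aut c hc1).congr hagree
    -- Koenigs functions
    obtain ⟨h, hhd, hh0, hhderiv, hheig, huniqφ⟩ := koenigs (Ff 1) (hFfdiff 1 zero_le_one)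
      (hFfmaps 1 zero_le_one) (hFf0 1 zero_le_one) (hbFne 1 zero_le_one) hbF1lt
    obtain ⟨k, hkd, hk0, hkderiv, hkeig, huniqψ⟩ := koenigs (Gg 1) (hGgdiff 1 zero_le_one)
      (hGgmaps 1 zero_le_one) hψ0 (hbGne 1 zero_le_one) hbG1lt
    have hhat : DifferentiableAt ℂ h 0 := hhd.differentiableAt (isOpen_ball.mem_nhds h0D)
    -- h is an eigenfunction of Gg 1 with eigenvalue bG 1
    have hhψ : ∀ z ∈ 𝔻, h (Gg 1 z) = bG 1 * h z := by
      have hH : ∀ z ∈ 𝔻, (h ∘ Gg 1) z = deriv (h ∘ Gg 1) 0 * h z := by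
        apply huniqφ (h ∘ Gg 1) (hhd.comp (hGgdiff 1 zero_le_one) (hGgmaps 1 zero_le_one))
          (by show h (Gg 1 0) = 0; rw [hψ0, hh0])
        intro z hz
        show h (Gg 1 (Ff 1 z)) = deriv (Ff 1) 0 * h (Gg 1 z)
        rw [← hcommC z hz]
        exact hheig (Gg 1 z) (hGgmaps 1 zero_le_one hz)
      have hder : deriv (h ∘ Gg 1) 0 = bG 1 := by
        have hd1 : DifferentiableAt ℂ h (Gg 1 0) := by rw [hψ0]; exact hhat
        rw [deriv_comp 0 hd1 (hGgat 1 zero_le_one), hψ0, hhderiv, one_mul]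
      intro z hz
      have := hH z hz
      rwa [hder] at this
    -- h = k
    have hhk : ∀ z ∈ 𝔻, h z = k z := by
      intro z hz
      have := huniqψ h hhd hh0 (fun z hz => hhψ z hz) z hz
      rwa [hhderiv, one_mul] at this
    -- eigenfunction property for all times
    have hFt_eig : ∀ t : ℝ, 0 ≤ t → ∀ z ∈ 𝔻, h (Ff t z) = bF t * h z := by
      intro t ht
      have hH := huniqφ (h ∘ Ff t) (hhd.comp (hFfdiff t ht) (hFfmaps t ht))
        (by show h (Ff t 0) = 0; rw [hFf0 t ht, hh0])
        (by
          intro z hz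
          show h (Ff t (Ff 1 z)) = deriv (Ff 1) 0 * h (Ff t z)
          have e1 : Ff t (Ff 1 z) = Ff (t + 1) z := (hFfsemi 1 zero_le_one t ht z hz).symm
          have e2 : Ff (1 + t) z = Ff 1 (Ff t z) := hFfsemi t ht 1 zero_le_one z hz
          rw [e1, add_comm, e2]
          exact hheig (Ff t z) (hFfmaps t ht hz))
      have hder : deriv (h ∘ Ff t) 0 = bF t := by
        have hd1 : DifferentiableAt ℂ h (Ff t 0) := by rw [hFf0 t ht]; exact hhat
        rw [deriv_comp 0 hd1 (hFfat t ht), hFf0 t ht, hhderiv, one_mul]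
      intro z hz
      have := hH z hz
      rwa [hder] at this
    have hGs_eig : ∀ s : ℝ, 0 ≤ s → ∀ z ∈ 𝔻, h (Gg s z) = bG s * h z := by
      intro s hs
      have hH := huniqψ (h ∘ Gg s) (hhd.comp (hGgdiff s hs) (hGgmaps s hs))
        (by show h (Gg s 0) = 0; rw [hGg0 s hs, hh0])
        (by
          intro z hz
          show h (Gg s (Gg 1 z)) = deriv (Gg 1) 0 * h (Gg s z)
          have e1 : Gg s (Gg 1 z) = Gg (s + 1) z := (hGgsemi 1 zero_le_one s hs z hz).symm
          have e2 : Gg (1 + s) z = Gg 1 (Gg s z) := hGgsemi s hs 1 zero_le_one z hz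
          rw [e1, add_comm, e2]
          exact hhψ (Gg s z) (hGgmaps s hs hz))
      have hder : deriv (h ∘ Gg s) 0 = bG s := by
        have hd1 : DifferentiableAt ℂ h (Gg s 0) := by rw [hGg0 s hs]; exact hhat
        rw [deriv_comp 0 hd1 (hGgat s hs), hGg0 s hs, hhderiv, one_mul]
      intro z hz
      have h1 := hH z hz
      rw [hder] at h1
      show (h ∘ Gg s) z = bG s * h z
      rw [h1, ← hhk z hz]
    -- local injectivity and identity theorem
    obtain ⟨δ, hδ0, hδ1, hinj⟩ := local_inj h hhd hhderiv
    intro s hs t ht z hz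
    set A : ℂ → ℂ := fun w => Ff t (Gg s w) with hA
    set B : ℂ → ℂ := fun w => Gg s (Ff t w) with hB
    have hAdiff : DifferentiableOn ℂ A 𝔻 := (hFfdiff t ht).comp (hGgdiff s hs) (hGgmaps s hs)
    have hBdiff : DifferentiableOn ℂ B 𝔻 := (hGgdiff s hs).comp (hFfdiff t ht) (hFfmaps t ht)
    have hAB : ∀ w ∈ 𝔻, h (A w) = h (B w) := by
      intro w hw
      show h (Ff t (Gg s w)) = h (Gg s (Ff t w))
      rw [hFt_eig t ht _ (hGgmaps s hs hw), hGs_eig s hs w hw,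
        hGs_eig s hs _ (hFfmaps t ht hw), hFt_eig t ht w hw]
      ring
    have hA0 : A 0 = 0 := by show Ff t (Gg s 0) = 0; rw [hGg0 s hs, hFf0 t ht]
    have hB0 : B 0 = 0 := by show Gg s (Ff t 0) = 0; rw [hFf0 t ht, hGg0 s hs]
    have hAt : Tendsto A (𝓝 0) (𝓝 (0:ℂ)) := by
      have := (hAdiff.differentiableAt (isOpen_ball.mem_nhds h0D)).continuousAt.tendsto
      rwa [hA0] at this
    have hBt : Tendsto B (𝓝 0) (𝓝 (0:ℂ)) := by
      have := (hBdiff.differentiableAt (isOpen_ball.mem_nhds h0D)).continuousAt.tendsto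
      rwa [hB0] at this
    have hev : A =ᶠ[𝓝 (0:ℂ)] B := by
      filter_upwards [hAt (ball_mem_nhds (0:ℂ) hδ0), hBt (ball_mem_nhds (0:ℂ) hδ0),
        isOpen_ball.mem_nhds h0D] with w hwA hwB hwD
      exact hinj _ hwA _ hwB (hAB w hwD)
    have hABeq : EqOn A B 𝔻 :=
      (hAdiff.analyticOnNhd isOpen_ball).eqOn_of_preconnected_of_eventuallyEq
        (hBdiff.analyticOnNhd isOpen_ball) (convex_ball (0:ℂ) 1).isPreconnected h0D hev
    -- unconjugate
    have hGz : G s z ∈ 𝔻 := hGmaps s hs hz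
    have hFz : F t z ∈ 𝔻 := hFmaps t ht hz
    have hmz : m z ∈ 𝔻 := hmmaps hz
    have e1 : A (m z) = m (F t (G s z)) := by
      show m (F t (m (m (G s (m (m z)))))) = m (F t (G s z))
      rw [hmm z hz, hmm _ hGz]
    have e2 : B (m z) = m (G s (F t z)) := by
      show m (G s (m (m (F t (m (m z)))))) = m (G s (F t z))
      rw [hmm z hz, hmm _ hFz]
    have e3 : m (F t (G s z)) = m (G s (F t z)) := by
      rw [← e1, ← e2]
      exact hABeq hmz
    have e4 : m (m (F t (G s z))) = m (m (G s (F t z))) := by rw [e3]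
    rwa [hmm _ (hFmaps t ht hGz), hmm _ (hGmaps s hs hFz)] at e4
end
end
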